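/- arXiv:2101.07428 — 6 statements merged into one kernel-verified Lean document; each statement's English description precedes it below -/
import Mathlib

section
/- There is a universal constant c > 0 such that every finite metric space with doubling dimension d ≥ 1 admits, for every ε ∈ (0,1/6), an (ε^{−c·d}, ε)-LSO. -/
open scoped BigOperators

/-- `X` has doubling dimension at most `d`: every ball of radius `2r` can be
covered by at most `2^d` balls of radius `r`. -/
def DoublingDimLE (X : Type*) [MetricSpace X] (d : ℝ) : Prop :=
  ∀ (x : X) (r : ℝ), 0 < r → ∃ S : Finset X, (S.card : ℝ) ≤ (2 : ℝ) ^ d ∧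
    ∀ y : X, dist x y ≤ 2 * r → ∃ z ∈ S, dist y z ≤ r

/-- The ordering `σ` serves the pair `(x,y)` with stretch `ρ` (w.r.t. the
distance function `d`): `x ≺_σ y` and the points strictly between `x` and `y`
in `σ` split (at threshold `t`) into a prefix interval contained in
`B(x, ρ·d(x,y))` and a suffix interval contained in `B(y, ρ·d(x,y))`. -/
def LSOPair {X : Type*} (d : X → X → ℝ) (σ : X → ℝ) (ρ : ℝ) (x y : X) : Prop :=
  σ x < σ y ∧ ∃ t : ℝ, ∀ z : X, σ x < σ z → σ z < σ y →
    (σ z < t → d x z ≤ ρ * d x y) ∧ (t ≤ σ z → d y z ≤ ρ * d x y)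

/-- `(τ,ρ)`-LSO for `X` with distance function `d`: at most `τ` linear
orderings of `X` (each given by an injective real-valued function), such that
every pair is served by some ordering, possibly after swapping roles. -/
def IsLSO {X : Type*} (d : X → X → ℝ) (τ ρ : ℝ) : Prop :=
  ∃ s : ℕ, (s : ℝ) ≤ τ ∧ ∃ σ : Fin s → X → ℝ,
    (∀ i, Function.Injective (σ i)) ∧
    ∀ x y : X, x ≠ y → ∃ i, LSOPair d (σ i) ρ x y ∨ LSOPair d (σ i) ρ y x

open scoped Classical
open Finset

section AuxLSO


/-- digits bounded by C sum to less than C^m -/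
lemma sum_digits_lt (C : ℕ) (hC : 1 ≤ C) (f : ℕ → ℕ) (hf : ∀ i, f i < C) (m : ℕ) :
    ∑ i ∈ range m, f i * C ^ i < C ^ m := by
  induction m with
  | zero => simp
  | succ m ih =>
    rw [Finset.sum_range_succ, pow_succ]
    have h1 : f m ≤ C - 1 := by have := hf m; omega
    have h2 : f m * C ^ m ≤ (C - 1) * C ^ m := Nat.mul_le_mul_right _ h1
    have h3 : C ^ m + (C - 1) * C ^ m = C ^ m * C := by
      have : 1 + (C - 1) = C := by omega
      calc C ^ m + (C - 1) * C ^ m = (1 + (C - 1)) * C ^ m := by ring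
        _ = C ^ m * C := by rw [this]; ring
    omega

/-- lexicographic comparison of digit expansions (most significant digit = highest index) -/
lemma lex_sum_lt (C n i₀ : ℕ) (f g : ℕ → ℕ) (hfC : ∀ i, f i < C)
    (hi₀ : i₀ < n) (hhigh : ∀ i, i₀ < i → i < n → f i = g i) (hlt : f i₀ < g i₀) :
    ∑ i ∈ range n, f i * C ^ i < ∑ i ∈ range n, g i * C ^ i := by
  have hC : 1 ≤ C := by have := hfC 0; omega
  have hsplit : ∀ h : ℕ → ℕ, ∑ i ∈ range n, h i * C ^ i
      = (∑ i ∈ range (i₀+1), h i * C ^ i) + ∑ i ∈ Ico (i₀+1) n, h i * C ^ i := by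
    intro h
    rw [Finset.range_eq_Ico, Finset.range_eq_Ico]
    exact (Finset.sum_Ico_consecutive (fun i => h i * C ^ i) (by omega : 0 ≤ i₀+1) (by omega : i₀+1 ≤ n)).symm
  rw [hsplit f, hsplit g]
  have htail : ∑ i ∈ Ico (i₀+1) n, f i * C ^ i = ∑ i ∈ Ico (i₀+1) n, g i * C ^ i := by
    apply Finset.sum_congr rfl
    intro i hi
    rw [Finset.mem_Ico] at hi
    rw [hhigh i (by omega) hi.2]
  rw [htail]
  apply Nat.add_lt_add_right
  rw [Finset.sum_range_succ, Finset.sum_range_succ]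
  have hhead : ∑ i ∈ range i₀, f i * C ^ i < C ^ i₀ := sum_digits_lt C hC f hfC i₀
  have : (f i₀ + 1) * C ^ i₀ ≤ g i₀ * C ^ i₀ := Nat.mul_le_mul_right _ (by omega)
  have h0 : 0 ≤ ∑ i ∈ range i₀, g i * C ^ i := Nat.zero_le _
  nlinarith [hhead, this, h0]

/-- greedy coloring of a bounded-degree graph on a finite vertex set -/
lemma greedy_coloring {α : Type*} [DecidableEq α] (K : ℕ) (hK : 0 < K)
    (E : α → α → Prop) (hsym : ∀ u v, E u v → E v u) :
    ∀ V : Finset α, (∀ v ∈ V, ((V.erase v).filter (fun u => E v u)).card < K) →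
    ∃ χ : α → Fin K, ∀ u ∈ V, ∀ v ∈ V, u ≠ v → E u v → χ u ≠ χ v := by
  intro V
  induction V using Finset.strongInduction with
  | _ V ih =>
    rcases V.eq_empty_or_nonempty with rfl | ⟨v₀, hv₀⟩
    · exact fun _ => ⟨fun _ => ⟨0, hK⟩, by simp⟩
    intro hdeg
    have hdeg' : ∀ v ∈ V.erase v₀, (((V.erase v₀).erase v).filter (fun u => E v u)).card < K := by
      intro v hv
      refine lt_of_le_of_lt (Finset.card_le_card ?_) (hdeg v (Finset.mem_of_mem_erase hv))
      intro u hu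
      simp only [Finset.mem_filter, Finset.mem_erase] at hu ⊢
      exact ⟨⟨hu.1.1, hu.1.2.2⟩, hu.2⟩
    obtain ⟨χ', hχ'⟩ := ih (V.erase v₀) (Finset.erase_ssubset hv₀) hdeg'
    set Nb := (V.erase v₀).filter (fun u => E v₀ u) with hNb
    have hcard : (Nb.image χ').card < K := lt_of_le_of_lt Finset.card_image_le (hdeg v₀ hv₀)
    have hne : ((Nb.image χ')ᶜ : Finset (Fin K)).Nonempty := by
      rw [← Finset.card_pos, Finset.card_compl]
      simp only [Fintype.card_fin]
      omega
    obtain ⟨c₀, hc₀⟩ := hne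
    rw [Finset.mem_compl] at hc₀
    refine ⟨Function.update χ' v₀ c₀, ?_⟩
    intro u hu v hv huv hE
    rcases eq_or_ne u v₀ with hu0 | hu0
    · subst hu0
      have hvne : v ≠ u := fun h => huv h.symm
      have hv' : v ∈ V.erase u := Finset.mem_erase.2 ⟨hvne, hv⟩
      have hvNb : v ∈ Nb := Finset.mem_filter.2 ⟨hv', hE⟩
      rw [Function.update_self, Function.update_of_ne hvne]
      intro h
      exact hc₀ (Finset.mem_image.2 ⟨v, hvNb, h.symm⟩)
    · rcases eq_or_ne v v₀ with hv0 | hv0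
      · subst hv0
        have hu' : u ∈ V.erase v := Finset.mem_erase.2 ⟨hu0, hu⟩
        have huNb : u ∈ Nb := Finset.mem_filter.2 ⟨hu', hsym _ _ hE⟩
        rw [Function.update_of_ne hu0, Function.update_self]
        intro h
        exact hc₀ (Finset.mem_image.2 ⟨u, huNb, h⟩)
      · rw [Function.update_of_ne hu0, Function.update_of_ne hv0]
        exact hχ' u (Finset.mem_erase.2 ⟨hu0, hu⟩) v (Finset.mem_erase.2 ⟨hv0, hv⟩) huv hE

variable {X : Type} [MetricSpace X] [Fintype X]

lemma exists_net (T : Finset X) (r : ℝ) (hr : 0 ≤ r) :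
    ∃ M : Finset X, M ⊆ T ∧ (∀ u ∈ M, ∀ v ∈ M, u ≠ v → r < dist u v) ∧
      ∀ t ∈ T, ∃ m ∈ M, dist t m ≤ r := by
  classical
  obtain ⟨M, hM, hmax⟩ := Finset.exists_max_image
    ((T.powerset).filter (fun S => ∀ u ∈ S, ∀ v ∈ S, u ≠ v → r < dist u v))
    Finset.card ⟨∅, by simp⟩
  rw [Finset.mem_filter, Finset.mem_powerset] at hM
  refine ⟨M, hM.1, hM.2, ?_⟩
  intro t ht
  by_contra hcon
  push_neg at hcon
  have htM : t ∉ M := by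
    intro h
    have := hcon t h
    rw [dist_self] at this
    linarith
  have hins : insert t M ∈ (T.powerset).filter
      (fun S => ∀ u ∈ S, ∀ v ∈ S, u ≠ v → r < dist u v) := by
    rw [Finset.mem_filter, Finset.mem_powerset]
    constructor
    · exact Finset.insert_subset ht hM.1
    · intro u hu v hv huv
      rcases Finset.mem_insert.1 hu with rfl | hu'
      · rcases Finset.mem_insert.1 hv with rfl | hv'
        · exact absurd rfl huv
        · exact hcon v hv'
      · rcases Finset.mem_insert.1 hv with rfl | hv'
        · rw [dist_comm]; exact hcon u hu'
        · exact hM.2 u hu' v hv' huv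
  have := hmax _ hins
  rw [Finset.card_insert_of_notMem htM] at this
  omega

/-- scale of level j -/
noncomputable def sc (δ : ℝ) (j : ℕ) : ℝ := δ * 8^j

lemma sc_pos {δ : ℝ} (hδ : 0 < δ) (j : ℕ) : 0 < sc δ j := by
  have : (0:ℝ) < 8^j := by positivity
  unfold sc; positivity

lemma sc_succ (δ : ℝ) (j : ℕ) : sc δ (j+1) = 8 * sc δ j := by
  unfold sc; rw [pow_succ]; ring

lemma sc_mono {δ : ℝ} (hδ : 0 < δ) {j j' : ℕ} (hj : j ≤ j') : sc δ j ≤ sc δ j' := by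
  unfold sc
  have : (8:ℝ)^j ≤ 8^j' := pow_le_pow_right₀ (by norm_num) hj
  nlinarith

lemma sc_le {δ : ℝ} (hδ : 0 < δ) {j j' : ℕ} (hj : j ≤ j') : sc δ j' ≤ 8^(j'-j) * sc δ j := by
  unfold sc
  have : (8:ℝ)^(j'-j) * 8^j = 8^j' := by
    rw [← pow_add]; congr 1; omega
  nlinarith [this]

/-- hierarchy of nets -/
noncomputable def net (δ : ℝ) (hδ : 0 < δ) : ℕ → Finset X
  | 0 => Finset.univ
  | (j+1) => (exists_net (net δ hδ j) (sc δ (j+1) / 2) (le_of_lt (by have := sc_pos hδ (j+1); positivity))).choose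

lemma net_spec (δ : ℝ) (hδ : 0 < δ) (j : ℕ) :
    net (X:=X) δ hδ (j+1) ⊆ net δ hδ j ∧
    (∀ u ∈ net (X:=X) δ hδ (j+1), ∀ v ∈ net δ hδ (j+1), u ≠ v → sc δ (j+1) / 2 < dist u v) ∧
    ∀ t ∈ net (X:=X) δ hδ j, ∃ m ∈ net δ hδ (j+1), dist t m ≤ sc δ (j+1) / 2 :=
  (exists_net (net δ hδ j) (sc δ (j+1) / 2)
    (le_of_lt (by have := sc_pos hδ (j+1); positivity))).choose_spec

lemma net_sep {δ : ℝ} (hδ : 0 < δ) (hsep : ∀ x y : X, x ≠ y → δ ≤ dist x y) (j : ℕ) :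
    ∀ u ∈ net (X:=X) δ hδ j, ∀ v ∈ net δ hδ j, u ≠ v → sc δ j / 2 < dist u v := by
  cases j with
  | zero =>
    intro u _ v _ huv
    have h1 : δ ≤ dist u v := hsep u v huv
    have h2 : sc δ 0 = δ := by unfold sc; simp
    rw [h2]
    linarith
  | succ j => exact (net_spec δ hδ j).2.1

lemma net_subset_le {δ : ℝ} (hδ : 0 < δ) {j j' : ℕ} (hj : j ≤ j') :
    net (X:=X) δ hδ j' ⊆ net δ hδ j := by
  induction j' with
  | zero => have h : j = 0 := by omega
            subst h; exact Finset.Subset.refl _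
  | succ j' ih =>
    rcases Nat.lt_or_ge j (j'+1) with h | h
    · exact Finset.Subset.trans (net_spec δ hδ j').1 (ih (by omega))
    · have h2 : j = j'+1 := by omega
      subst h2; exact Finset.Subset.refl _

lemma point_cover {δ : ℝ} (hδ : 0 < δ) (x : X) :
    ∀ j : ℕ, ∃ u ∈ net (X:=X) δ hδ j, dist x u ≤ sc δ j := by
  intro j
  induction j with
  | zero => refine ⟨x, Finset.mem_univ x, ?_⟩
            rw [dist_self]
            exact le_of_lt (sc_pos hδ 0)
  | succ j ih =>
    obtain ⟨u, hu, hxu⟩ := ih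
    obtain ⟨w, hw, huw⟩ := (net_spec δ hδ j).2.2 u hu
    refine ⟨w, hw, ?_⟩
    have h8 : sc δ (j+1) = 8 * sc δ j := sc_succ δ j
    calc dist x w ≤ dist x u + dist u w := dist_triangle _ _ _
      _ ≤ sc δ j + sc δ (j+1)/2 := add_le_add hxu huw
      _ ≤ sc δ (j+1) := by rw [h8]; have := sc_pos hδ j; linarith

/-- capture map to level j -/
noncomputable def cap (δ : ℝ) (hδ : 0 < δ) {K : ℕ} (χ : ℕ → X → Fin K) (c : Fin K)
    (j : ℕ) (v : X) : X :=
  if h : (((net δ hδ j).filter (fun u => χ j u = c ∧ dist v u ≤ 3 * sc δ j)) : Finset X).Nonempty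
  then h.choose
  else if h2 : (((net δ hδ j).filter (fun u => dist v u ≤ sc δ j / 2)) : Finset X).Nonempty
  then h2.choose else v

lemma cap_mem_dist {δ : ℝ} (hδ : 0 < δ) {K : ℕ} (χ : ℕ → X → Fin K) (c : Fin K)
    (j : ℕ) (v : X) (hv : v ∈ net δ hδ j) :
    cap δ hδ χ c (j+1) v ∈ net δ hδ (j+1) ∧ dist v (cap δ hδ χ c (j+1) v) ≤ 3 * sc δ (j+1) := by
  unfold cap
  split_ifs with h h2
  · have := h.choose_spec
    rw [Finset.mem_filter] at this
    exact ⟨this.1, this.2.2⟩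
  · have := h2.choose_spec
    rw [Finset.mem_filter] at this
    refine ⟨this.1, le_trans this.2 ?_⟩
    have := sc_pos hδ (j+1)
    linarith
  · exfalso
    obtain ⟨m, hm, hdm⟩ := (net_spec δ hδ j).2.2 v hv
    exact h2 ⟨m, Finset.mem_filter.2 ⟨hm, hdm⟩⟩

lemma cap_eq_of {δ : ℝ} (hδ : 0 < δ) {K : ℕ} {χ : ℕ → X → Fin K} {sN : ℕ}
    (hχ : ∀ j, ∀ u ∈ net (X:=X) δ hδ j, ∀ v ∈ net δ hδ j, u ≠ v →
      dist u v ≤ 8^(sN+1) * sc δ j → χ j u ≠ χ j v)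
    {c : Fin K} {j : ℕ} {u v : X} (hu : u ∈ net δ hδ j) (hcu : χ j u = c)
    (hvu : dist v u ≤ 3 * sc δ j) :
    cap δ hδ χ c j v = u := by
  have hne : (((net δ hδ j).filter (fun w => χ j w = c ∧ dist v w ≤ 3 * sc δ j)) : Finset X).Nonempty :=
    ⟨u, Finset.mem_filter.2 ⟨hu, hcu, hvu⟩⟩
  unfold cap
  rw [dif_pos hne]
  have hspec := hne.choose_spec
  rw [Finset.mem_filter] at hspec
  obtain ⟨hw1, hw2, hw3⟩ := hspec
  by_contra hne'
  have hG : (6:ℝ) * sc δ j ≤ 8^(sN+1) * sc δ j := by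
    have h8 : (6:ℝ) ≤ 8^(sN+1) := by
      calc (6:ℝ) ≤ 8 := by norm_num
        _ ≤ 8^(sN+1) := le_self_pow₀ (by norm_num) (by omega)
    nlinarith [sc_pos hδ j]
  have hdist : dist hne.choose u ≤ 8^(sN+1) * sc δ j := by
    refine le_trans ?_ hG
    calc dist hne.choose u ≤ dist hne.choose v + dist v u := dist_triangle _ _ _
      _ ≤ 3 * sc δ j + 3 * sc δ j := add_le_add (by rwa [dist_comm]) hvu
      _ = 6 * sc δ j := by ring
  exact hχ j hne.choose hw1 u hu hne' hdist (by rw [hw2, hcu])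

/-- ancestor map -/
noncomputable def anc (δ : ℝ) (hδ : 0 < δ) {K : ℕ} (χ : ℕ → X → Fin K) (c : Fin K) :
    ℕ → X → X
  | 0 => fun x => x
  | (j+1) => fun x => cap δ hδ χ c (j+1) (anc δ hδ χ c j x)

lemma anc_mem {δ : ℝ} (hδ : 0 < δ) {K : ℕ} (χ : ℕ → X → Fin K) (c : Fin K) (j : ℕ) (x : X) :
    anc δ hδ χ c j x ∈ net δ hδ j := by
  induction j with
  | zero => exact Finset.mem_univ x
  | succ j ih => exact (cap_mem_dist hδ χ c j _ ih).1

lemma anc_dist {δ : ℝ} (hδ : 0 < δ) {K : ℕ} (χ : ℕ → X → Fin K) (c : Fin K) (j : ℕ) (x : X) :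
    dist x (anc δ hδ χ c j x) ≤ 4 * sc δ j := by
  induction j with
  | zero =>
    show dist x x ≤ 4 * sc δ 0
    rw [dist_self]
    have := sc_pos hδ 0; linarith
  | succ j ih =>
    have hstep := (cap_mem_dist hδ χ c j _ (anc_mem hδ χ c j x)).2
    have h8 : sc δ (j+1) = 8 * sc δ j := sc_succ δ j
    have hpos := sc_pos hδ j
    calc dist x (anc δ hδ χ c (j+1) x)
        ≤ dist x (anc δ hδ χ c j x) + dist (anc δ hδ χ c j x) (anc δ hδ χ c (j+1) x) :=
          dist_triangle _ _ _
      _ ≤ 4 * sc δ j + 3 * sc δ (j+1) := add_le_add ih hstep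
      _ ≤ 4 * sc δ (j+1) := by rw [h8]; linarith

lemma anc_chain {δ : ℝ} (hδ : 0 < δ) {K : ℕ} (χ : ℕ → X → Fin K) (c : Fin K)
    {j j' : ℕ} (hj : j ≤ j') (x : X) :
    dist (anc δ hδ χ c j x) (anc δ hδ χ c j' x) ≤ 4 * sc δ j' := by
  induction j' , hj using Nat.le_induction with
  | base =>
    rw [dist_self]
    have := sc_pos hδ j; linarith
  | succ j' hj ih =>
    have hstep := (cap_mem_dist hδ χ c j' _ (anc_mem hδ χ c j' x)).2
    have h8 : sc δ (j'+1) = 8 * sc δ j' := sc_succ δ j'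
    have hpos := sc_pos hδ j'
    calc dist (anc δ hδ χ c j x) (anc δ hδ χ c (j'+1) x)
        ≤ dist (anc δ hδ χ c j x) (anc δ hδ χ c j' x) +
            dist (anc δ hδ χ c j' x) (anc δ hδ χ c (j'+1) x) := dist_triangle _ _ _
      _ ≤ 4 * sc δ j' + 3 * sc δ (j'+1) := add_le_add ih hstep
      _ ≤ 4 * sc δ (j'+1) := by rw [h8]; linarith

lemma anc_congr {δ : ℝ} (hδ : 0 < δ) {K : ℕ} (χ : ℕ → X → Fin K) (c : Fin K)
    {j j' : ℕ} (hj : j ≤ j') {x y : X} (h : anc δ hδ χ c j x = anc δ hδ χ c j y) :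
    anc δ hδ χ c j' x = anc δ hδ χ c j' y := by
  induction j' , hj using Nat.le_induction with
  | base => exact h
  | succ j' hj ih => show cap _ _ _ _ _ _ = cap _ _ _ _ _ _; rw [ih]

lemma sibling_color {δ : ℝ} (hδ : 0 < δ) {K : ℕ} {χ : ℕ → X → Fin K} {sN : ℕ}
    (hχ : ∀ j, ∀ u ∈ net (X:=X) δ hδ j, ∀ v ∈ net δ hδ j, u ≠ v →
      dist u v ≤ 8^(sN+1) * sc δ j → χ j u ≠ χ j v)
    {c : Fin K} {j j' : ℕ} (hjj : j ≤ j') (hgap : j' ≤ j + sN) {z w : X}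
    (hpar : anc δ hδ χ c j' z = anc δ hδ χ c j' w)
    (hne : anc δ hδ χ c j z ≠ anc δ hδ χ c j w) :
    χ j (anc δ hδ χ c j z) ≠ χ j (anc δ hδ χ c j w) := by
  apply hχ j _ (anc_mem hδ χ c j z) _ (anc_mem hδ χ c j w) hne
  have h1 : dist (anc δ hδ χ c j z) (anc δ hδ χ c j' z) ≤ 4 * sc δ j' := anc_chain hδ χ c hjj z
  have h2 : dist (anc δ hδ χ c j w) (anc δ hδ χ c j' w) ≤ 4 * sc δ j' := anc_chain hδ χ c hjj w
  have h3 : sc δ j' ≤ 8^(j'-j) * sc δ j := sc_le hδ hjj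
  have h4 : (8:ℝ)^(j'-j) ≤ 8^sN := pow_le_pow_right₀ (by norm_num) (by omega)
  have h5 : (8:ℝ)^(sN+1) = 8 * 8^sN := by rw [pow_succ]; ring
  have hpos := sc_pos hδ j
  have hpos' := sc_pos hδ j'
  have h6 : (0:ℝ) < 8^sN := by positivity
  calc dist (anc δ hδ χ c j z) (anc δ hδ χ c j w)
      ≤ dist (anc δ hδ χ c j z) (anc δ hδ χ c j' z) +
          dist (anc δ hδ χ c j' w) (anc δ hδ χ c j w) := by
        rw [hpar]; exact dist_triangle _ _ _
    _ ≤ 4 * sc δ j' + 4 * sc δ j' := add_le_add h1 (by rwa [dist_comm])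
    _ = 8 * sc δ j' := by ring
    _ ≤ 8^(sN+1) * sc δ j := by rw [h5]; nlinarith

lemma merge_lemma {δ : ℝ} (hδ : 0 < δ) (hsep : ∀ x y : X, x ≠ y → δ ≤ dist x y)
    {K : ℕ} {χ : ℕ → X → Fin K} {sN : ℕ}
    (hχ : ∀ j, ∀ u ∈ net (X:=X) δ hδ j, ∀ v ∈ net δ hδ j, u ≠ v →
      dist u v ≤ 8^(sN+1) * sc δ j → χ j u ≠ χ j v)
    (x y : X) (hxy : x ≠ y) :
    ∃ (c : Fin K) (k : ℕ), 1 ≤ k ∧ anc δ hδ χ c k x = anc δ hδ χ c k y ∧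
      (∀ j < k, anc δ hδ χ c j x ≠ anc δ hδ χ c j y) ∧ sc δ k ≤ 8 * dist x y := by
  -- find the first scale dominating dist x y
  have hd : 0 < dist x y := dist_pos.2 hxy
  have hex : ∃ j : ℕ, 1 ≤ j ∧ dist x y ≤ sc δ j := by
    obtain ⟨n, hn⟩ := pow_unbounded_of_one_lt (dist x y / δ) (by norm_num : (1:ℝ) < 8)
    refine ⟨n+1, by omega, ?_⟩
    unfold sc
    have h8 : (8:ℝ)^n ≤ 8^(n+1) := pow_le_pow_right₀ (by norm_num) (by omega)
    have : dist x y / δ < 8^(n+1) := lt_of_lt_of_le hn h8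
    calc dist x y = (dist x y / δ) * δ := by field_simp
      _ ≤ 8^(n+1) * δ := by nlinarith
      _ = δ * 8^(n+1) := by ring
  set j₀ := Nat.find hex with hj₀
  obtain ⟨hj₀1, hj₀2⟩ := Nat.find_spec hex
  have hj₀min : sc δ j₀ ≤ 8 * dist x y := by
    rcases Nat.eq_or_lt_of_le hj₀1 with h1 | h1
    · have : sc δ j₀ = δ * 8 := by
        have hj1 : j₀ = 1 := by omega
        rw [hj1]; unfold sc; norm_num
      rw [this]
      have := hsep x y hxy
      linarith
    · have hmin := Nat.find_min hex (m := j₀ - 1) (by omega)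
      push_neg at hmin
      have h2 : dist x y > sc δ (j₀ - 1) := by
        rcases lt_or_ge (sc δ (j₀-1)) (dist x y) with h | h
        · exact h
        · exact absurd h (by intro hcon; exact (hmin (by omega)).not_ge hcon)
      have h3 : sc δ j₀ = 8 * sc δ (j₀ - 1) := by
        have heq : j₀ - 1 + 1 = j₀ := by omega
        conv_lhs => rw [← heq]
        rw [sc_succ]
      rw [h3]; linarith
  -- the landmark point
  obtain ⟨u, hu, hxu⟩ := point_cover hδ x j₀
  set c := χ j₀ u with hc
  refine ⟨c, ?_⟩
  -- both ancestors at level j₀ get captured by u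
  have hj₀pos : 1 ≤ j₀ := hj₀1
  have hkey : ∀ w : X, dist x w ≤ dist x y → anc δ hδ χ c j₀ w = u := by
    intro w hw
    have hstep : j₀ = (j₀ - 1) + 1 := by omega
    have hvdist : dist w (anc δ hδ χ c (j₀-1) w) ≤ 4 * sc δ (j₀-1) := anc_dist hδ χ c _ w
    have h48 : 8 * sc δ (j₀ - 1) = sc δ j₀ := by
      have heq : j₀ - 1 + 1 = j₀ := by omega
      conv_rhs => rw [← heq]
      rw [sc_succ]
    have hvu : dist (anc δ hδ χ c (j₀-1) w) u ≤ 3 * sc δ j₀ := by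
      have hpos := sc_pos hδ (j₀ - 1)
      calc dist (anc δ hδ χ c (j₀-1) w) u
          ≤ dist (anc δ hδ χ c (j₀-1) w) w + dist w x + dist x u := dist_triangle4 _ _ _ _
        _ ≤ 4 * sc δ (j₀-1) + dist x y + sc δ j₀ := by
            refine add_le_add (add_le_add (by rwa [dist_comm]) (by rwa [dist_comm])) hxu
        _ ≤ 4 * sc δ (j₀-1) + sc δ j₀ + sc δ j₀ := by linarith [hj₀2]
        _ ≤ 3 * sc δ j₀ := by linarith [h48, sc_pos hδ (j₀-1)]
    have := cap_eq_of hδ (sN := sN) hχ hu hc.symm hvu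
    rw [hstep]
    show cap δ hδ χ c ((j₀-1)+1) (anc δ hδ χ c (j₀-1) w) = u
    rw [← hstep]
    exact this
  have hmerge : anc δ hδ χ c j₀ x = anc δ hδ χ c j₀ y := by
    rw [hkey x (by rw [dist_self]; positivity), hkey y (le_refl _)]
  have hexk : ∃ k : ℕ, anc δ hδ χ c k x = anc δ hδ χ c k y := ⟨j₀, hmerge⟩
  set k := Nat.find hexk with hk
  have hkspec := Nat.find_spec hexk
  have hk1 : 1 ≤ k := by
    by_contra h
    have h0 : Nat.find hexk = 0 := by omega
    rw [h0] at hkspec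
    exact hxy hkspec
  have hkle : k ≤ j₀ := Nat.find_le hmerge
  refine ⟨k, hk1, hkspec, ?_, ?_⟩
  · intro j hj
    exact Nat.find_min hexk hj
  · exact le_trans (sc_mono hδ hkle) hj₀min

lemma exists_top {δ : ℝ} (hδ : 0 < δ) (hsep : ∀ x y : X, x ≠ y → δ ≤ dist x y) (x₀ : X) :
    ∃ J : ℕ, ∀ u ∈ net (X:=X) δ hδ J, ∀ v ∈ net δ hδ J, u = v := by
  obtain ⟨B, hB⟩ : ∃ B : ℝ, ∀ u v : X, dist u v ≤ B := by
    set S : Finset ℝ := ((Finset.univ : Finset (X × X)).image (fun p : X × X => dist p.1 p.2)) with hS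
    have hne : S.Nonempty :=
      ⟨dist x₀ x₀, Finset.mem_image.2 ⟨(x₀, x₀), Finset.mem_univ _, rfl⟩⟩
    refine ⟨S.max' hne, ?_⟩
    intro u v
    exact Finset.le_max' S _ (Finset.mem_image.2 ⟨(u, v), Finset.mem_univ _, rfl⟩)
  obtain ⟨J, hJ⟩ := pow_unbounded_of_one_lt (2 * B / δ) (by norm_num : (1:ℝ) < 8)
  refine ⟨J, ?_⟩
  intro u hu v hv
  by_contra hne
  have h1 : sc δ J / 2 < dist u v := net_sep hδ hsep J u hu v hv hne
  have h2 : dist u v ≤ B := hB u v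
  have h3 : 2 * B / δ < 8^J := hJ
  have h4 : sc δ J = δ * 8^J := rfl
  have h5 : 2 * B < δ * 8^J := by
    have := mul_lt_mul_of_pos_left h3 hδ
    calc 2 * B = δ * (2 * B / δ) := by field_simp
      _ < δ * 8^J := this
  rw [h4] at h1
  linarith

/-- level of digit i in phase φ -/
def lev (φ sN i : ℕ) : ℕ := if i = 0 then 0 else φ + (i-1)*sN

lemma lev_zero (φ sN : ℕ) : lev φ sN 0 = 0 := rfl

lemma lev_mono (φ sN : ℕ) {i i' : ℕ} (h : i ≤ i') : lev φ sN i ≤ lev φ sN i' := by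
  unfold lev
  split_ifs with h1 h2
  · omega
  · omega
  · omega
  · have : (i-1)*sN ≤ (i'-1)*sN := Nat.mul_le_mul_right _ (by omega)
    omega

lemma lev_le_succ (φ sN i : ℕ) : lev φ sN i ≤ lev φ sN (i+1) := lev_mono φ sN (by omega)

lemma lev_gap (φ sN : ℕ) (hφ : φ ≤ sN) (i : ℕ) : lev φ sN (i+1) ≤ lev φ sN i + sN := by
  cases i with
  | zero => show (if (1:ℕ) = 0 then 0 else φ + (1-1)*sN) ≤ (if (0:ℕ) = 0 then 0 else φ + (0-1)*sN) + sN
            simp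
            omega
  | succ i =>
    have e1 : lev φ sN (i+2) = φ + (i+1)*sN := by
      unfold lev; rw [if_neg (by omega : ¬(i+2 = 0))]; norm_num
    have e2 : lev φ sN (i+1) = φ + i*sN := by
      unfold lev; rw [if_neg (by omega : ¬(i+1 = 0))]; norm_num
    rw [e1, e2]
    have h : (i+1)*sN = i*sN + sN := by ring
    omega

/-- rank of a cluster representative -/
noncomputable def rk {K : ℕ} (χ : ℕ → X → Fin K) (aC bC : Fin K) (j : ℕ) (u : X) : ℕ :=
  if χ j u = aC then 0 else if χ j u = bC then 1 else 2 + (Fintype.equivFin X u : ℕ)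

lemma rk_lt {K : ℕ} (χ : ℕ → X → Fin K) (aC bC : Fin K) (j : ℕ) (u : X) :
    rk χ aC bC j u < Fintype.card X + 2 := by
  unfold rk
  split_ifs
  · omega
  · omega
  · have := (Fintype.equivFin X u).2
    omega

/-- digit i of point z -/
noncomputable def dgt (δ : ℝ) (hδ : 0 < δ) {K : ℕ} (χ : ℕ → X → Fin K) (c : Fin K)
    (sN φ : ℕ) (aC bC : Fin K) (i : ℕ) (z : X) : ℕ :=
  rk χ aC bC (lev φ sN i) (anc δ hδ χ c (lev φ sN i) z)

/-- the ordering function -/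
noncomputable def sig (δ : ℝ) (hδ : 0 < δ) {K : ℕ} (χ : ℕ → X → Fin K) (c : Fin K)
    (sN φ : ℕ) (aC bC : Fin K) (J : ℕ) (z : X) : ℝ :=
  ((∑ i ∈ Finset.range (J+2), dgt δ hδ χ c sN φ aC bC i z * (Fintype.card X + 2)^i : ℕ) : ℝ)

lemma sig_lt_of_dgt {δ : ℝ} (hδ : 0 < δ) {K : ℕ} (χ : ℕ → X → Fin K) (c : Fin K)
    (sN φ : ℕ) (aC bC : Fin K) (J : ℕ) (z w : X) (i₀ : ℕ) (hi₀ : i₀ ≤ J+1)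
    (hhigh : ∀ i, i₀ < i → i ≤ J+1 → dgt δ hδ χ c sN φ aC bC i z = dgt δ hδ χ c sN φ aC bC i w)
    (hlt : dgt δ hδ χ c sN φ aC bC i₀ z < dgt δ hδ χ c sN φ aC bC i₀ w) :
    sig δ hδ χ c sN φ aC bC J z < sig δ hδ χ c sN φ aC bC J w := by
  unfold sig
  rw [Nat.cast_lt]
  refine lex_sum_lt (Fintype.card X + 2) (J+2) i₀ _ _ (fun i => rk_lt χ aC bC _ _) (by omega)
    (fun i h1 h2 => hhigh i h1 (by omega)) hlt

/-- the digit determines the cluster, given the parent cluster -/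
lemma rk_inj {δ : ℝ} (hδ : 0 < δ) {K : ℕ} {χ : ℕ → X → Fin K} {sN : ℕ}
    (hχ : ∀ j, ∀ u ∈ net (X:=X) δ hδ j, ∀ v ∈ net δ hδ j, u ≠ v →
      dist u v ≤ 8^(sN+1) * sc δ j → χ j u ≠ χ j v)
    {c : Fin K} {j j' : ℕ} (hjj : j ≤ j') (hgap : j' ≤ j + sN) {aC bC : Fin K} {z w : X}
    (hpar : anc δ hδ χ c j' z = anc δ hδ χ c j' w)
    (hrk : rk χ aC bC j (anc δ hδ χ c j z) = rk χ aC bC j (anc δ hδ χ c j w)) :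
    anc δ hδ χ c j z = anc δ hδ χ c j w := by
  by_contra hne
  have hcol := sibling_color hδ hχ hjj hgap hpar hne
  unfold rk at hrk
  by_cases h1 : χ j (anc δ hδ χ c j z) = aC <;> by_cases h2 : χ j (anc δ hδ χ c j w) = aC
  · exact hcol (h1.trans h2.symm)
  · rw [if_pos h1, if_neg h2] at hrk
    by_cases h3 : χ j (anc δ hδ χ c j w) = bC
    · rw [if_pos h3] at hrk; omega
    · rw [if_neg h3] at hrk; omega
  · rw [if_neg h1, if_pos h2] at hrk
    by_cases h3 : χ j (anc δ hδ χ c j z) = bC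
    · rw [if_pos h3] at hrk; omega
    · rw [if_neg h3] at hrk; omega
  · rw [if_neg h1, if_neg h2] at hrk
    by_cases h3 : χ j (anc δ hδ χ c j z) = bC <;> by_cases h4 : χ j (anc δ hδ χ c j w) = bC
    · exact hcol (h3.trans h4.symm)
    · rw [if_pos h3, if_neg h4] at hrk; omega
    · rw [if_neg h3, if_pos h4] at hrk; omega
    · rw [if_neg h3, if_neg h4] at hrk
      have heq : (Fintype.equivFin X (anc δ hδ χ c j z)) = (Fintype.equivFin X (anc δ hδ χ c j w)) := by
        apply Fin.val_injective
        omega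
      exact hne ((Fintype.equivFin X).injective heq)

/-- equal digits from index i₁ up determine equal cluster paths from i₁ up -/
lemma path_eq {δ : ℝ} (hδ : 0 < δ) {K : ℕ} {χ : ℕ → X → Fin K} {sN : ℕ} (hsN : 1 ≤ sN)
    (hχ : ∀ j, ∀ u ∈ net (X:=X) δ hδ j, ∀ v ∈ net δ hδ j, u ≠ v →
      dist u v ≤ 8^(sN+1) * sc δ j → χ j u ≠ χ j v)
    {c : Fin K} {φ : ℕ} (hφ : φ ≤ sN) {aC bC : Fin K} {J : ℕ}
    (htop : ∀ u ∈ net (X:=X) δ hδ J, ∀ v ∈ net δ hδ J, u = v)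
    {z w : X} {i₁ : ℕ}
    (hdg : ∀ i, i₁ ≤ i → i ≤ J+1 → dgt δ hδ χ c sN φ aC bC i z = dgt δ hδ χ c sN φ aC bC i w) :
    ∀ i, i₁ ≤ i → i ≤ J+1 → anc δ hδ χ c (lev φ sN i) z = anc δ hδ χ c (lev φ sN i) w := by
  have main : ∀ m : ℕ, ∀ i : ℕ, i₁ ≤ i → i ≤ J+1 → J+1 - i ≤ m →
      anc δ hδ χ c (lev φ sN i) z = anc δ hδ χ c (lev φ sN i) w := by
    intro m
    induction m with
    | zero =>
      intro i hi1 hi2 hi3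
      have hieq : i = J+1 := by omega
      subst hieq
      have hlev : J ≤ lev φ sN (J+1) := by
        unfold lev
        rw [if_neg (by omega : ¬(J+1 = 0))]
        have : J * 1 ≤ J * sN := Nat.mul_le_mul_left _ hsN
        norm_num
        omega
      have hz := net_subset_le hδ hlev (anc_mem hδ χ c (lev φ sN (J+1)) z)
      have hw := net_subset_le hδ hlev (anc_mem hδ χ c (lev φ sN (J+1)) w)
      exact htop _ hz _ hw
    | succ m ih =>
      intro i hi1 hi2 hi3
      rcases Nat.lt_or_ge m (J+1-i) with hcase | hcase
      · -- J+1-i = m+1, so i+1 ≤ J+1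
        have hi4 : i + 1 ≤ J + 1 := by omega
        have hpar := ih (i+1) (by omega) hi4 (by omega)
        exact rk_inj hδ hχ (lev_le_succ φ sN i) (lev_gap φ sN hφ i) hpar (hdg i hi1 hi2)
      · exact ih i hi1 hi2 hcase
  intro i hi1 hi2
  exact main (J+1) i hi1 hi2 (by omega)

lemma sig_inj {δ : ℝ} (hδ : 0 < δ) {K : ℕ} {χ : ℕ → X → Fin K} {sN : ℕ} (hsN : 1 ≤ sN)
    (hχ : ∀ j, ∀ u ∈ net (X:=X) δ hδ j, ∀ v ∈ net δ hδ j, u ≠ v →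
      dist u v ≤ 8^(sN+1) * sc δ j → χ j u ≠ χ j v)
    (c : Fin K) {φ : ℕ} (hφ : φ ≤ sN) (aC bC : Fin K) {J : ℕ}
    (htop : ∀ u ∈ net (X:=X) δ hδ J, ∀ v ∈ net δ hδ J, u = v) :
    Function.Injective (sig δ hδ χ c sN φ aC bC J) := by
  intro z w h
  -- all digits are equal
  have hdg : ∀ i, i ≤ J+1 → dgt δ hδ χ c sN φ aC bC i z = dgt δ hδ χ c sN φ aC bC i w := by
    by_contra hcon
    push_neg at hcon
    set T := (Finset.range (J+2)).filter
      (fun i => dgt δ hδ χ c sN φ aC bC i z ≠ dgt δ hδ χ c sN φ aC bC i w) with hT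
    have hTne : T.Nonempty := by
      obtain ⟨i, hi1, hi2⟩ := hcon
      exact ⟨i, Finset.mem_filter.2 ⟨Finset.mem_range.2 (by omega), hi2⟩⟩
    set i₁ := T.max' hTne with hi₁
    have hi₁mem := T.max'_mem hTne
    rw [Finset.mem_filter, Finset.mem_range] at hi₁mem
    have hhigh : ∀ i, i₁ < i → i ≤ J+1 →
        dgt δ hδ χ c sN φ aC bC i z = dgt δ hδ χ c sN φ aC bC i w := by
      intro i h1 h2
      by_contra h3
      have : i ∈ T := Finset.mem_filter.2 ⟨Finset.mem_range.2 (by omega), h3⟩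
      exact absurd (Finset.le_max' T i this) (by omega)
    rcases lt_trichotomy (dgt δ hδ χ c sN φ aC bC i₁ z) (dgt δ hδ χ c sN φ aC bC i₁ w) with hl | he | hg
    · exact absurd h (ne_of_lt (sig_lt_of_dgt hδ χ c sN φ aC bC J z w i₁ (by omega) hhigh hl))
    · exact hi₁mem.2 he
    · exact absurd h (ne_of_gt (sig_lt_of_dgt hδ χ c sN φ aC bC J w z i₁ (by omega)
        (fun i a b => (hhigh i a b).symm) hg))
  have := path_eq hδ hsN hχ hφ htop (i₁ := 0) (fun i _ hi2 => hdg i hi2) 0 (le_refl 0) (by omega)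
  rw [lev_zero] at this
  exact this

/-- the main serving lemma -/
lemma serve_pair {δ : ℝ} (hδ : 0 < δ) {K : ℕ} {χ : ℕ → X → Fin K} {sN : ℕ} (hsN : 1 ≤ sN)
    (hχ : ∀ j, ∀ u ∈ net (X:=X) δ hδ j, ∀ v ∈ net δ hδ j, u ≠ v →
      dist u v ≤ 8^(sN+1) * sc δ j → χ j u ≠ χ j v)
    {c : Fin K} {J : ℕ}
    (htop : ∀ u ∈ net (X:=X) δ hδ J, ∀ v ∈ net δ hδ J, u = v)
    {ε : ℝ} (hε : 0 < ε) (hεsN : (64:ℝ) ≤ ε * 8^sN)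
    (x y : X) (k : ℕ) (hk1 : 1 ≤ k) (hkJ : k ≤ J)
    (hkm : anc δ hδ χ c k x = anc δ hδ χ c k y)
    (hkm' : ∀ j < k, anc δ hδ χ c j x ≠ anc δ hδ χ c j y)
    (hsck : sc δ k ≤ 8 * dist x y) :
    LSOPair (fun a b : X => dist a b)
      (sig δ hδ χ c sN (k % sN) (χ (k-sN) (anc δ hδ χ c (k-sN) x)) (χ (k-sN) (anc δ hδ χ c (k-sN) y)) J)
      ε x y := by
  have hanc0 : ∀ v : X, anc δ hδ χ c 0 v = v := fun v => rfl
  have hxy : x ≠ y := by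
    intro h
    exact hkm' 0 (by omega) (by rw [h])
  have hd : 0 < dist x y := dist_pos.2 hxy
  set φ := k % sN with hφdef
  set istar := k / sN with histardef
  set jc := k - sN with hjcdef
  set aC := χ jc (anc δ hδ χ c jc x) with haCdef
  set bC := χ jc (anc δ hδ χ c jc y) with hbCdef
  set σf := sig δ hδ χ c sN φ aC bC J with hσfdef
  have hsN0 : 0 < sN := by omega
  have hφlt : φ < sN := Nat.mod_lt _ hsN0
  have hφ : φ ≤ sN := le_of_lt hφlt
  have hmd : φ + istar * sN = k := Nat.mod_add_div' k sN
  have hlev1 : lev φ sN (istar+1) = k := by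
    unfold lev
    rw [if_neg (Nat.succ_ne_zero istar)]
    simp only [Nat.add_sub_cancel]
    exact hmd
  have hlev0 : lev φ sN istar = jc := by
    rcases Nat.eq_zero_or_pos istar with h0 | hpos
    · rw [h0, lev_zero]
      have hklt : k < sN := by
        have := hmd
        rw [h0] at this
        simp at this
        omega
      omega
    · unfold lev
      rw [if_neg (by omega : ¬(istar = 0))]
      have h2 : (istar - 1) * sN + sN = istar * sN := by
        have : istar - 1 + 1 = istar := by omega
        calc (istar - 1) * sN + sN = (istar - 1 + 1) * sN := by ring
          _ = istar * sN := by rw [this]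
      have h3 : sN ≤ istar * sN := by
        calc sN = 1 * sN := by ring
          _ ≤ istar * sN := Nat.mul_le_mul_right _ hpos
      omega
  have hjck : jc < k := by omega
  have hgap : k ≤ jc + sN := by omega
  have hjle : jc ≤ k := by omega
  have hDne : anc δ hδ χ c jc x ≠ anc δ hδ χ c jc y := hkm' jc hjck
  have hab : aC ≠ bC := sibling_color hδ hχ hjle hgap hkm hDne
  have hdgx : dgt δ hδ χ c sN φ aC bC istar x = 0 := by
    unfold dgt
    rw [hlev0]
    unfold rk
    rw [if_pos rfl]
  have hdgy : dgt δ hδ χ c sN φ aC bC istar y = 1 := by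
    unfold dgt
    rw [hlev0]
    unfold rk
    rw [if_neg (Ne.symm hab), if_pos rfl]
  have histarle : istar ≤ J := le_trans (Nat.div_le_self k sN) hkJ
  have hdg_hi : ∀ i, istar < i → i ≤ J+1 →
      dgt δ hδ χ c sN φ aC bC i x = dgt δ hδ χ c sN φ aC bC i y := by
    intro i h1 h2
    have hlevge : k ≤ lev φ sN i := by
      rw [← hlev1]
      exact lev_mono φ sN (by omega)
    unfold dgt
    rw [anc_congr hδ χ c hlevge hkm]
  have hsxy : σf x < σf y :=
    sig_lt_of_dgt hδ χ c sN φ aC bC J x y istar (by omega) hdg_hi (by rw [hdgx, hdgy]; omega)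
  -- between-point digit structure
  have hbetween : ∀ z : X, σf x < σf z → σf z < σf y →
      (∀ i, istar < i → i ≤ J+1 → dgt δ hδ χ c sN φ aC bC i z = dgt δ hδ χ c sN φ aC bC i x) ∧
      (dgt δ hδ χ c sN φ aC bC istar z = 0 ∨ dgt δ hδ χ c sN φ aC bC istar z = 1) := by
    intro z hz1 hz2
    have hstep1 : ∀ i, istar < i → i ≤ J+1 →
        dgt δ hδ χ c sN φ aC bC i z = dgt δ hδ χ c sN φ aC bC i x := by
      by_contra hcon
      push_neg at hcon
      set T := (Finset.range (J+2)).filter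
        (fun i => istar < i ∧ dgt δ hδ χ c sN φ aC bC i z ≠ dgt δ hδ χ c sN φ aC bC i x) with hT
      have hTne : T.Nonempty := by
        obtain ⟨i, h1, h2, h3⟩ := hcon
        exact ⟨i, Finset.mem_filter.2 ⟨Finset.mem_range.2 (by omega), h1, h3⟩⟩
      set i₁ := T.max' hTne with hi₁def
      have hi₁mem := T.max'_mem hTne
      rw [Finset.mem_filter, Finset.mem_range] at hi₁mem
      obtain ⟨hi₁r, hi₁gt, hi₁ne⟩ := hi₁mem
      have hhigh : ∀ i, i₁ < i → i ≤ J+1 →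
          dgt δ hδ χ c sN φ aC bC i z = dgt δ hδ χ c sN φ aC bC i x := by
        intro i h1 h2
        by_contra h3
        have hiT : i ∈ T := Finset.mem_filter.2 ⟨Finset.mem_range.2 (by omega), by omega, h3⟩
        exact absurd (Finset.le_max' T i hiT) (by omega)
      rcases lt_trichotomy (dgt δ hδ χ c sN φ aC bC i₁ z) (dgt δ hδ χ c sN φ aC bC i₁ x)
        with hl | he | hg
      · have : σf z < σf x :=
          sig_lt_of_dgt hδ χ c sN φ aC bC J z x i₁ (by omega) hhigh hl
        linarith
      · exact hi₁ne he
      · have hhigh' : ∀ i, i₁ < i → i ≤ J+1 →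
            dgt δ hδ χ c sN φ aC bC i y = dgt δ hδ χ c sN φ aC bC i z := by
          intro i h1 h2
          rw [← hdg_hi i (by omega) h2, hhigh i h1 h2]
        have hlt' : dgt δ hδ χ c sN φ aC bC i₁ y < dgt δ hδ χ c sN φ aC bC i₁ z := by
          rw [hdg_hi i₁ (by omega) (by omega)] at hg
          exact hg
        have : σf y < σf z :=
          sig_lt_of_dgt hδ χ c sN φ aC bC J y z i₁ (by omega) hhigh' hlt'
        linarith
    refine ⟨hstep1, ?_⟩
    by_contra hcon2
    push_neg at hcon2
    have h2 : 1 < dgt δ hδ χ c sN φ aC bC istar z := by omega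
    have hhigh' : ∀ i, istar < i → i ≤ J+1 →
        dgt δ hδ χ c sN φ aC bC i y = dgt δ hδ χ c sN φ aC bC i z := by
      intro i ha hb
      rw [← hdg_hi i ha hb, hstep1 i ha hb]
    have : σf y < σf z :=
      sig_lt_of_dgt hδ χ c sN φ aC bC J y z istar (by omega) hhigh' (by rw [hdgy]; omega)
    linarith
  -- between points lie in the same level-k cluster
  have hpathz : ∀ z : X, σf x < σf z → σf z < σf y →
      anc δ hδ χ c k z = anc δ hδ χ c k x := by
    intro z hz1 hz2
    have := path_eq hδ hsN hχ hφ htop (i₁ := istar+1)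
      (fun i hi1 hi2 => (hbetween z hz1 hz2).1 i (by omega) hi2) (istar+1) (le_refl _) (by omega)
    rw [hlev1] at this
    exact this
  -- digit at istar determines proximity
  have hnear : ∀ z : X, σf x < σf z → σf z < σf y →
      (dgt δ hδ χ c sN φ aC bC istar z = 0 → dist x z ≤ ε * dist x y) ∧
      (dgt δ hδ χ c sN φ aC bC istar z = 1 → dist y z ≤ ε * dist x y) := by
    intro z hz1 hz2
    have hpz := hpathz z hz1 hz2
    have hzx : dgt δ hδ χ c sN φ aC bC istar z = 0 →
        anc δ hδ χ c jc z = anc δ hδ χ c jc x := by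
      intro h0
      apply rk_inj hδ hχ hjle hgap hpz
      unfold dgt at h0
      rw [hlev0] at h0
      rw [h0]
      unfold rk
      rw [if_pos rfl]
    have hzy : dgt δ hδ χ c sN φ aC bC istar z = 1 →
        anc δ hδ χ c jc z = anc δ hδ χ c jc y := by
      intro h1
      apply rk_inj hδ hχ hjle hgap (hpz.trans hkm)
      unfold dgt at h1
      rw [hlev0] at h1
      rw [h1]
      unfold rk
      rw [if_neg (Ne.symm hab), if_pos rfl]
    rcases Nat.lt_or_ge k sN with hks | hks
    · -- tiny case : level-0 clusters are singletons
      have hjc0 : jc = 0 := by omega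
      constructor
      · intro h0
        have hz := hzx h0
        rw [hjc0, hanc0 z, hanc0 x] at hz
        rw [hz, dist_self]
        positivity
      · intro h1
        have hz := hzy h1
        rw [hjc0, hanc0 z, hanc0 y] at hz
        rw [hz, dist_self]
        positivity
    · -- main case
      have hksub : jc + sN = k := by omega
      have hscjc : (8:ℝ)^sN * sc δ jc = sc δ k := by
        unfold sc
        rw [← hksub, pow_add]
        ring
      have hp8 : (0:ℝ) < 8^sN := by positivity
      have hbound : 8 * sc δ jc ≤ ε * dist x y := by
        nlinarith [sc_pos hδ jc]
      constructor
      · intro h0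
        have hz := hzx h0
        calc dist x z ≤ dist x (anc δ hδ χ c jc x) + dist (anc δ hδ χ c jc x) z := dist_triangle _ _ _
          _ ≤ 4 * sc δ jc + 4 * sc δ jc := by
              refine add_le_add (anc_dist hδ χ c jc x) ?_
              rw [← hz, dist_comm]
              exact anc_dist hδ χ c jc z
          _ = 8 * sc δ jc := by ring
          _ ≤ ε * dist x y := hbound
      · intro h1
        have hz := hzy h1
        calc dist y z ≤ dist y (anc δ hδ χ c jc y) + dist (anc δ hδ χ c jc y) z := dist_triangle _ _ _
          _ ≤ 4 * sc δ jc + 4 * sc δ jc := by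
              refine add_le_add (anc_dist hδ χ c jc y) ?_
              rw [← hz, dist_comm]
              exact anc_dist hδ χ c jc z
          _ = 8 * sc δ jc := by ring
          _ ≤ ε * dist x y := hbound
  -- assemble the LSO pair
  refine ⟨hsxy, ?_⟩
  set S1 := Finset.univ.filter
    (fun w => σf x < σf w ∧ σf w < σf y ∧ dgt δ hδ χ c sN φ aC bC istar w = 1) with hS1def
  by_cases hS1ne : S1.Nonempty
  · refine ⟨(S1.image σf).min' (hS1ne.image σf), ?_⟩
    intro z hz1 hz2
    obtain ⟨hhiz, hd01⟩ := hbetween z hz1 hz2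
    obtain ⟨hnx, hny⟩ := hnear z hz1 hz2
    constructor
    · intro hzt
      rcases hd01 with h0 | h1
      · exact hnx h0
      · exfalso
        have hzS1 : z ∈ S1 := Finset.mem_filter.2 ⟨Finset.mem_univ z, hz1, hz2, h1⟩
        have : (S1.image σf).min' (hS1ne.image σf) ≤ σf z :=
          Finset.min'_le _ _ (Finset.mem_image.2 ⟨z, hzS1, rfl⟩)
        linarith
    · intro htz
      rcases hd01 with h0 | h1
      · exfalso
        have hall : σf z < (S1.image σf).min' (hS1ne.image σf) := by
          rw [Finset.lt_min'_iff]
          intro b hb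
          obtain ⟨w, hwS1, rfl⟩ := Finset.mem_image.1 hb
          rw [Finset.mem_filter] at hwS1
          obtain ⟨_, hw1, hw2, hw3⟩ := hwS1
          have hhiw := (hbetween w hw1 hw2).1
          refine sig_lt_of_dgt hδ χ c sN φ aC bC J z w istar (by omega) ?_ (by rw [h0, hw3]; omega)
          intro i ha hb'
          rw [hhiz i ha hb', hhiw i ha hb']
        linarith
      · exact hny h1
  · refine ⟨σf y, ?_⟩
    intro z hz1 hz2
    obtain ⟨hhiz, hd01⟩ := hbetween z hz1 hz2
    obtain ⟨hnx, hny⟩ := hnear z hz1 hz2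
    constructor
    · intro hzt
      rcases hd01 with h0 | h1
      · exact hnx h0
      · exfalso
        exact hS1ne ⟨z, Finset.mem_filter.2 ⟨Finset.mem_univ z, hz1, hz2, h1⟩⟩
    · intro htz
      exfalso
      linarith

/-- iterated doubling: a ball of radius 2^m * r is covered by (2^DD)^m balls of radius r -/
lemma cover_iter {d : ℝ} (hdb : DoublingDimLE X d) (DD : ℕ) (hDD : d ≤ DD) :
    ∀ (m : ℕ) (x : X) (r : ℝ), 0 < r → ∃ S : Finset X, S.card ≤ (2^DD)^m ∧
      ∀ y : X, dist x y ≤ 2^m * r → ∃ z ∈ S, dist y z ≤ r := by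
  intro m
  induction m with
  | zero =>
    intro x r hr
    exact ⟨{x}, by simp, fun y hy => ⟨x, by simp, by rw [dist_comm]; simpa using hy⟩⟩
  | succ m ih =>
    intro x r hr
    have hr' : (0:ℝ) < 2^m * r := by positivity
    obtain ⟨S₁, hS₁card, hS₁⟩ := hdb x (2^m * r) hr'
    have hS₁card' : S₁.card ≤ 2^DD := by
      have h1 : ((S₁.card : ℝ)) ≤ (2:ℝ) ^ (DD:ℝ) := by
        refine le_trans hS₁card ?_
        exact Real.rpow_le_rpow_of_exponent_le one_le_two hDD
      have h2 : (2:ℝ) ^ (DD:ℝ) = ((2^DD : ℕ) : ℝ) := by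
        rw [Real.rpow_natCast]; push_cast; ring
      rw [h2] at h1
      exact_mod_cast h1
    choose F hF1 hF2 using fun z => ih z r hr
    refine ⟨S₁.biUnion F, ?_, ?_⟩
    · calc (S₁.biUnion F).card ≤ ∑ z ∈ S₁, (F z).card := Finset.card_biUnion_le
        _ ≤ ∑ _z ∈ S₁, (2^DD)^m := Finset.sum_le_sum (fun z _ => hF1 z)
        _ = S₁.card * (2^DD)^m := by rw [Finset.sum_const, smul_eq_mul]
        _ ≤ 2^DD * (2^DD)^m := Nat.mul_le_mul_right _ hS₁card'
        _ = (2^DD)^(m+1) := by ring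
    · intro y hy
      have : dist x y ≤ 2 * (2^m * r) := by
        rw [pow_succ] at hy; nlinarith
      obtain ⟨z, hz, hyz⟩ := hS₁ y this
      obtain ⟨w, hw, hzw⟩ := hF2 z y (by rwa [dist_comm] at hyz)
      exact ⟨w, Finset.mem_biUnion.2 ⟨z, hz, hw⟩, hzw⟩

/-- packing: a (2r)-separated set has few points in a ball of radius 2^m * r -/
lemma packing_lemma {d : ℝ} (hdb : DoublingDimLE X d) (DD : ℕ) (hDD : d ≤ DD)
    (m : ℕ) (T : Finset X) (r : ℝ) (hr : 0 < r)
    (hsep : ∀ u ∈ T, ∀ v ∈ T, u ≠ v → 2*r < dist u v) (x : X) :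
    (T.filter (fun u => dist x u ≤ 2^m * r)).card ≤ (2^DD)^m := by
  classical
  obtain ⟨S, hScard, hS⟩ := cover_iter hdb DD hDD m x r hr
  by_contra hcon
  push_neg at hcon
  have hmap : ∀ u ∈ T.filter (fun u => dist x u ≤ 2^m * r),
      (if h : ∃ z ∈ S, dist u z ≤ r then h.choose else x) ∈ S := by
    intro u hu
    rw [Finset.mem_filter] at hu
    have h : ∃ z ∈ S, dist u z ≤ r := hS u hu.2
    rw [dif_pos h]
    exact h.choose_spec.1
  obtain ⟨u, hu, v, hv, huv, heq⟩ :=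
    Finset.exists_ne_map_eq_of_card_lt_of_maps_to (lt_of_le_of_lt hScard hcon) hmap
  rw [Finset.mem_filter] at hu hv
  have hu' : ∃ z ∈ S, dist u z ≤ r := hS u hu.2
  have hv' : ∃ z ∈ S, dist v z ≤ r := hS v hv.2
  rw [dif_pos hu', dif_pos hv'] at heq
  have h1 : dist u hu'.choose ≤ r := hu'.choose_spec.2
  have h2 : dist v hv'.choose ≤ r := hv'.choose_spec.2
  have : dist u v ≤ 2 * r := by
    calc dist u v ≤ dist u hu'.choose + dist hv'.choose v := by
          rw [heq]; exact dist_triangle _ _ _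
      _ ≤ r + r := add_le_add h1 (by rwa [dist_comm])
      _ = 2 * r := by ring
  exact absurd this (not_le.2 (hsep u hu.1 v hv.1 huv))

lemma exists_coloring {d : ℝ} (hdb : DoublingDimLE X d) (DD : ℕ) (hDD : d ≤ DD)
    {δ : ℝ} (hδ : 0 < δ) (hsep : ∀ x y : X, x ≠ y → δ ≤ dist x y) (sN : ℕ) (j : ℕ) :
    ∃ χj : X → Fin (2^(DD*(3*sN+5))),
      ∀ u ∈ net (X:=X) δ hδ j, ∀ v ∈ net δ hδ j, u ≠ v →
        dist u v ≤ 8^(sN+1) * sc δ j → χj u ≠ χj v := by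
  have hscpos := sc_pos hδ j
  have hradius : (2:ℝ)^(3*sN+5) * (sc δ j / 4) = 8^(sN+1) * sc δ j := by
    have h8 : (8:ℝ)^(sN+1) = 2^(3*(sN+1)) := by
      rw [show (8:ℝ) = 2^3 by norm_num, ← pow_mul]
    rw [h8]
    have he : 3*(sN+1)+2 = 3*sN+5 := by omega
    have h2 : (2:ℝ)^(3*sN+5) = 2^(3*(sN+1)) * 2^2 := by
      rw [← pow_add, he]
    rw [h2]
    ring
  apply greedy_coloring (2^(DD*(3*sN+5))) (by positivity)
    (fun u v => dist u v ≤ 8^(sN+1) * sc δ j)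
    (fun u v h => by rwa [dist_comm])
  intro v hv
  have hpack := packing_lemma hdb DD hDD (3*sN+5) (net δ hδ j) (sc δ j / 4) (by positivity)
    (by
      intro u hu w hw huw
      have := net_sep hδ hsep j u hu w hw huw
      linarith) v
  have hsub : ((net δ hδ j).erase v).filter (fun u => dist v u ≤ 8^(sN+1) * sc δ j) ⊆
      ((net δ hδ j).filter (fun u => dist v u ≤ 2^(3*sN+5) * (sc δ j / 4))).erase v := by
    intro u hu
    rw [Finset.mem_filter, Finset.mem_erase] at hu
    rw [Finset.mem_erase, Finset.mem_filter]
    exact ⟨hu.1.1, hu.1.2, by rw [hradius]; exact hu.2⟩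
  have hvmem : v ∈ (net δ hδ j).filter (fun u => dist v u ≤ 2^(3*sN+5) * (sc δ j / 4)) := by
    rw [Finset.mem_filter]
    exact ⟨hv, by rw [dist_self]; positivity⟩
  calc (((net δ hδ j).erase v).filter (fun u => dist v u ≤ 8^(sN+1) * sc δ j)).card
      ≤ (((net δ hδ j).filter (fun u => dist v u ≤ 2^(3*sN+5) * (sc δ j / 4))).erase v).card :=
        Finset.card_le_card hsub
    _ < ((net δ hδ j).filter (fun u => dist v u ≤ 2^(3*sN+5) * (sc δ j / 4))).card :=
        Finset.card_erase_lt_of_mem hvmem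
    _ ≤ (2^DD)^(3*sN+5) := hpack
    _ = 2^(DD*(3*sN+5)) := by rw [← pow_mul]

end AuxLSO

/-- Every finite metric space with doubling dimension `d ≥ 1` admits, for every
`ε ∈ (0,1/6)`, an `(ε^{-cd}, ε)`-LSO. -/
theorem doubling_admits_LSO :
    ∃ c : ℝ, 0 < c ∧
      ∀ (X : Type) [MetricSpace X] [Fintype X] (d : ℝ),
        1 ≤ d → DoublingDimLE X d →
        ∀ ε : ℝ, 0 < ε → ε < 1 / 6 →
          IsLSO (fun x y : X => dist x y) (ε ^ (-(c * d))) ε := by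

  refine ⟨100, by norm_num, ?_⟩
  intro X _ _ d hd hdb ε hε hε6
  have hτpos : (0:ℝ) ≤ ε ^ (-(100*d)) := Real.rpow_nonneg (le_of_lt hε) _
  by_cases hX : ∀ x y : X, x = y
  · refine ⟨0, by simpa using hτpos, fun i => i.elim0, fun i => i.elim0, ?_⟩
    intro x y hxy
    exact absurd (hX x y) hxy
  · push_neg at hX
    obtain ⟨x₀, y₀, hx0y0⟩ := hX
    -- minimal distance
    set P := (Finset.univ.offDiag : Finset (X × X)).image (fun p => dist p.1 p.2) with hPdef
    have hPne : P.Nonempty :=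
      ⟨dist x₀ y₀, Finset.mem_image.2 ⟨(x₀, y₀),
        Finset.mem_offDiag.2 ⟨Finset.mem_univ _, Finset.mem_univ _, hx0y0⟩, rfl⟩⟩
    set δ := P.min' hPne with hδdef
    have hδpos : 0 < δ := by
      have hmem := P.min'_mem hPne
      obtain ⟨p, hp, hpe⟩ := Finset.mem_image.1 hmem
      rw [Finset.mem_offDiag] at hp
      have : 0 < dist p.1 p.2 := dist_pos.2 hp.2.2
      rw [hδdef]
      calc (0:ℝ) < dist p.1 p.2 := this
        _ = P.min' hPne := hpe
    have hsep : ∀ x y : X, x ≠ y → δ ≤ dist x y := by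
      intro x y h
      exact Finset.min'_le P _ (Finset.mem_image.2 ⟨(x, y),
        Finset.mem_offDiag.2 ⟨Finset.mem_univ _, Finset.mem_univ _, h⟩, rfl⟩)
    -- parameters
    set L : ℝ := - Real.log ε with hLdef
    have hlog2 : (0:ℝ) < Real.log 2 := Real.log_pos (by norm_num)
    have hL2 : 2 * Real.log 2 ≤ L := by
      have h4 : Real.log ε < Real.log (1/4) := Real.log_lt_log hε (by linarith)
      have h5 : Real.log (1/4 : ℝ) = - (2 * Real.log 2) := by
        rw [show (1/4 : ℝ) = (4:ℝ)⁻¹ by norm_num, Real.log_inv,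
          show (4:ℝ) = 2^2 by norm_num, Real.log_pow]
        push_cast
        ring
      rw [h5] at h4
      rw [hLdef]
      linarith
    have hLpos : 0 < L := by linarith
    set zb := Real.logb 8 (64/ε) with hzbdef
    have hzb0 : 0 ≤ zb := Real.logb_nonneg (by norm_num) (by
      rw [le_div_iff₀ hε]; linarith)
    set sN := ⌈zb⌉₊ + 1 with hsNdef
    have hsN1 : 1 ≤ sN := by omega
    have hsN0 : 0 < sN := by omega
    have hzb_eq : zb = 2 + L / (3 * Real.log 2) := by
      rw [hzbdef, Real.logb, Real.log_div (by norm_num) (ne_of_gt hε)]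
      rw [show (64:ℝ) = 2^6 by norm_num, show (8:ℝ) = 2^3 by norm_num,
        Real.log_pow, Real.log_pow]
      push_cast
      rw [hLdef]
      field_simp
      ring
    have hsNle : (sN:ℝ) ≤ 4 + L / (3 * Real.log 2) := by
      have h1 : (⌈zb⌉₊ : ℝ) < zb + 1 := Nat.ceil_lt_add_one hzb0
      have h2 : (sN:ℝ) = (⌈zb⌉₊ : ℝ) + 1 := by rw [hsNdef]; push_cast; ring
      rw [h2, hzb_eq] at *
      linarith
    have hεsN : (64:ℝ) ≤ ε * 8^sN := by
      have h1 : zb ≤ (sN:ℝ) := by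
        have := Nat.le_ceil zb
        have h2 : (⌈zb⌉₊:ℝ) ≤ (sN:ℝ) := by
          rw [hsNdef]; push_cast; linarith
        linarith
      have h2 : (8:ℝ)^zb ≤ (8:ℝ)^((sN:ℕ):ℝ) :=
        Real.rpow_le_rpow_of_exponent_le (by norm_num) h1
      rw [Real.rpow_natCast] at h2
      have h3 : (8:ℝ)^zb = 64/ε := by
        rw [hzbdef]
        exact Real.rpow_logb (by norm_num) (by norm_num) (by positivity)
      rw [h3] at h2
      rw [div_le_iff₀ hε] at h2
      nlinarith

    set DD := ⌈d⌉₊ with hDDdef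
    have hDD : d ≤ (DD:ℝ) := Nat.le_ceil d
    have hDDle : (DD:ℝ) ≤ 2*d := by
      have := Nat.ceil_lt_add_one (le_trans zero_le_one hd)
      rw [hDDdef]
      linarith
    set K := 2^(DD*(3*sN+5)) with hKdef
    choose χ hχ using fun j => exists_coloring hdb DD hDD hδpos hsep sN j
    obtain ⟨J, hJ⟩ := exists_top hδpos hsep x₀
    refine ⟨Fintype.card (Fin sN × Fin K × Fin K × Fin K), ?_, ?_⟩
    · -- cardinality bound
      have hcard : Fintype.card (Fin sN × Fin K × Fin K × Fin K) = sN * (K * (K * K)) := by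
        simp [Fintype.card_prod, Fintype.card_fin]
      have hE : Fintype.card (Fin sN × Fin K × Fin K × Fin K) ≤ 2^(sN + 3*(DD*(3*sN+5))) := by
        rw [hcard]
        have h1 : sN ≤ 2^sN := Nat.le_of_lt (Nat.lt_two_pow_self)
        have h2 : K * (K * K) = 2^(DD*(3*sN+5) + (DD*(3*sN+5) + DD*(3*sN+5))) := by
          rw [hKdef, pow_add, pow_add]
        calc sN * (K * (K * K)) ≤ 2^sN * (K * (K * K)) := Nat.mul_le_mul_right _ h1
          _ = 2^(sN + 3*(DD*(3*sN+5))) := by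
              rw [h2, ← pow_add]
              congr 1
              ring
      have hER : ((Fintype.card (Fin sN × Fin K × Fin K × Fin K)) : ℝ)
          ≤ (2:ℝ)^(sN + 3*(DD*(3*sN+5))) := by
        calc ((Fintype.card (Fin sN × Fin K × Fin K × Fin K)) : ℝ)
            ≤ ((2^(sN + 3*(DD*(3*sN+5))) : ℕ) : ℝ) := by exact_mod_cast hE
          _ = (2:ℝ)^(sN + 3*(DD*(3*sN+5))) := by push_cast; ring
      refine le_trans hER ?_
      have h2E : (2:ℝ)^(sN + 3*(DD*(3*sN+5)))
          = Real.exp (Real.log 2 * (sN + 3*(DD*(3*sN+5)) : ℕ)) := by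
        rw [← Real.rpow_natCast 2 (sN + 3*(DD*(3*sN+5))), Real.rpow_def_of_pos (by norm_num)]
      have hεE : ε ^ (-(100*d)) = Real.exp (Real.log ε * (-(100*d))) :=
        Real.rpow_def_of_pos hε _
      rw [h2E, hεE, Real.exp_le_exp]
      have hrhs : Real.log ε * (-(100*d)) = L * (100*d) := by
        rw [hLdef]; ring
      rw [hrhs]
      have hEreal : ((sN + 3*(DD*(3*sN+5)) : ℕ) : ℝ) = (sN:ℝ) + 3*((DD:ℝ)*(3*(sN:ℝ)+5)) := by
        push_cast; ring
      rw [hEreal]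
      -- pure arithmetic from here
      have hlog2' : (0:ℝ) ≤ Real.log 2 := le_of_lt hlog2
      have hsNpos : (0:ℝ) ≤ (sN:ℝ) := Nat.cast_nonneg _
      have hdpos : (0:ℝ) < d := by linarith
      have hsN' : 3 * Real.log 2 * (sN:ℝ) ≤ 12 * Real.log 2 + L := by
        have h3 : (0:ℝ) < 3 * Real.log 2 := by linarith
        have hmul := mul_le_mul_of_nonneg_left hsNle (le_of_lt h3)
        have heq : (3 * Real.log 2) * (4 + L / (3 * Real.log 2)) = 12 * Real.log 2 + L := by
          field_simp
          ring
        linarith [heq ▸ hmul]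
      have ht' : Real.log 2 * (sN:ℝ) ≤ 4 * Real.log 2 + L/3 := by linarith
      have hlu : (0:ℝ) ≤ Real.log 2 * (sN:ℝ) := mul_nonneg hlog2' hsNpos
      -- term bounds
      have hA : (Real.log 2) * ((DD:ℝ) * (sN:ℝ)) ≤ 2*d*(Real.log 2 * (sN:ℝ)) := by
        calc (Real.log 2) * ((DD:ℝ) * (sN:ℝ)) = (DD:ℝ) * (Real.log 2 * (sN:ℝ)) := by ring
          _ ≤ 2*d*(Real.log 2 * (sN:ℝ)) := mul_le_mul_of_nonneg_right hDDle hlu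
      have hB : (Real.log 2) * (DD:ℝ) ≤ 2*d*Real.log 2 := by
        calc (Real.log 2) * (DD:ℝ) = (DD:ℝ) * Real.log 2 := by ring
          _ ≤ 2*d*Real.log 2 := mul_le_mul_of_nonneg_right hDDle hlog2'
      have hC : Real.log 2 * (sN:ℝ) ≤ d * (Real.log 2 * (sN:ℝ)) := by
        calc Real.log 2 * (sN:ℝ) = 1 * (Real.log 2 * (sN:ℝ)) := by ring
          _ ≤ d * (Real.log 2 * (sN:ℝ)) := mul_le_mul_of_nonneg_right hd hlu
      have hD2 : d * (Real.log 2 * (sN:ℝ)) ≤ d * (4*Real.log 2 + L/3) :=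
        mul_le_mul_of_nonneg_left ht' (le_of_lt hdpos)
      have hfin : d * (106 * Real.log 2 + (19/3)*L) ≤ L * (100*d) := by
        have h1 : 106 * Real.log 2 + (19/3)*L ≤ 100 * L := by linarith
        calc d * (106 * Real.log 2 + (19/3)*L) ≤ d * (100 * L) :=
              mul_le_mul_of_nonneg_left h1 (le_of_lt hdpos)
          _ = L * (100*d) := by ring
      calc Real.log 2 * ((sN:ℝ) + 3*((DD:ℝ)*(3*(sN:ℝ)+5)))
          = Real.log 2 * (sN:ℝ) + 9*((Real.log 2) * ((DD:ℝ) * (sN:ℝ)))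
            + 15*((Real.log 2) * (DD:ℝ)) := by ring
        _ ≤ d * (Real.log 2 * (sN:ℝ)) + 9*(2*d*(Real.log 2 * (sN:ℝ))) + 15*(2*d*Real.log 2) := by
            linarith
        _ = 19 * (d * (Real.log 2 * (sN:ℝ))) + 30*(d*Real.log 2) := by ring
        _ ≤ 19 * (d * (4*Real.log 2 + L/3)) + 30*(d*Real.log 2) := by linarith
        _ = d * (106 * Real.log 2 + (19/3)*L) := by ring
        _ ≤ L * (100*d) := hfin
    · -- the orderings
      let e := Fintype.equivFin (Fin sN × Fin K × Fin K × Fin K)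
      refine ⟨fun i => sig δ hδpos χ ((e.symm i).2.1) sN (((e.symm i).1 : ℕ))
        ((e.symm i).2.2.1) ((e.symm i).2.2.2) J, ?_, ?_⟩
      · intro i
        exact sig_inj hδpos hsN1 hχ _ (le_of_lt (e.symm i).1.isLt) _ _ hJ
      · intro x y hxy
        obtain ⟨c, k, hk1, hkm, hkm', hsck⟩ := merge_lemma hδpos hsep hχ x y hxy
        have hkJ : k ≤ J := by
          by_contra hcon
          exact hkm' J (by omega) (hJ _ (anc_mem hδpos χ c J x) _ (anc_mem hδpos χ c J y))
        refine ⟨e (⟨k % sN, Nat.mod_lt _ hsN0⟩, c,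
          χ (k-sN) (anc δ hδpos χ c (k-sN) x), χ (k-sN) (anc δ hδpos χ c (k-sN) y)), Or.inl ?_⟩
        have hserve := serve_pair hδpos hsN1 hχ hJ hε hεsN x y k hk1 hkJ hkm hkm' hsck
        simpa only [Equiv.symm_apply_apply] using hserve
end

section
/- If a finite metric space (X,d) admits a (τ,ρ)-ultrametric cover, then it admits a (τ,ρ)-triangle-LSO. -/
open scoped BigOperators

/-- `du` is an ultrametric distance function on `X`: a metric satisfying the
strong triangle inequality. -/
def UltrametricOn {X : Type*} (du : X → X → ℝ) : Prop :=
  (∀ x, du x x = 0) ∧ (∀ x y : X, x ≠ y → 0 < du x y) ∧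
    (∀ x y : X, du x y = du y x) ∧
    ∀ x y z : X, du x z ≤ max (du x y) (du y z)

/-- `(τ, ρ)`-ultrametric cover of a metric space `X`. -/
def IsUltrametricCover (X : Type*) [MetricSpace X] (τ ρ : ℝ) : Prop :=
  ∃ s : ℕ, (s : ℝ) ≤ τ ∧ ∃ D : Fin s → X → X → ℝ,
    (∀ i, UltrametricOn (D i)) ∧
    (∀ (i : Fin s) (x y : X), dist x y ≤ D i x y) ∧
    ∀ x y : X, ∃ i, D i x y ≤ ρ * dist x y

/-- The ordering `σ` serves the ordered pair `(x,y)` in the triangle-LSO sense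
with stretch `ρ`: `x ⪯_σ y` and any two points `a ⪯_σ b` lying (inclusively)
between `x` and `y` satisfy `d(a,b) ≤ ρ·d(x,y)`. -/
def TriLSOPair {X : Type*} (d : X → X → ℝ) (σ : X → ℝ) (ρ : ℝ) (x y : X) : Prop :=
  σ x ≤ σ y ∧ ∀ a b : X, σ x ≤ σ a → σ a ≤ σ b → σ b ≤ σ y → d a b ≤ ρ * d x y

/-- `(τ,ρ)`-triangle-LSO for `X` with distance function `d`: at most `τ` linear
orderings of `X` (each given by an injective real-valued function), such that
every pair is served by some ordering, possibly after swapping roles. -/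
def IsTriangleLSO {X : Type*} (d : X → X → ℝ) (τ ρ : ℝ) : Prop :=
  ∃ s : ℕ, (s : ℝ) ≤ τ ∧ ∃ σ : Fin s → X → ℝ,
    (∀ i, Function.Injective (σ i)) ∧
    ∀ x y : X, ∃ i, TriLSOPair d (σ i) ρ x y ∨ TriLSOPair d (σ i) ρ y x

section Aux

variable {X : Type} [Fintype X] (e : X → ℕ) (du : X → X → ℝ)

open Classical in
noncomputable def urep (x : X) (r : ℝ) : WithTop ℕ :=
  (Finset.image e (Finset.univ.filter (fun z => du x z < r))).min

/-- strict order induced by an ultrametric and a base injection `e`. -/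
noncomputable def ult (x y : X) : Prop :=
  urep e du x (du x y) < urep e du y (du x y)

open Classical in
noncomputable def usig (x : X) : ℝ :=
  ((Finset.univ.filter (fun z => ult e du z x)).card : ℝ)

theorem urep_congr (hu : UltrametricOn du) {x y : X} {r : ℝ} (h : du x y < r) :
    urep e du x r = urep e du y r := by
  classical
  have hset : (Finset.univ.filter (fun z => du x z < r)) =
      (Finset.univ.filter (fun z => du y z < r)) := by
    ext z
    simp only [Finset.mem_filter, Finset.mem_univ, true_and]
    constructor
    · intro hz
      calc du y z ≤ max (du y x) (du x z) := hu.2.2.2 y x z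
        _ < r := max_lt (by rw [hu.2.2.1 y x]; exact h) hz
    · intro hz
      calc du x z ≤ max (du x y) (du y z) := hu.2.2.2 x y z
        _ < r := max_lt h hz
  unfold urep
  rw [hset]

theorem urep_spec (hu : UltrametricOn du) (x : X) {r : ℝ} (hr : 0 < r) :
    ∃ z, du x z < r ∧ urep e du x r = (e z : WithTop ℕ) := by
  classical
  have hx : x ∈ Finset.univ.filter (fun z => du x z < r) := by
    simp [hu.1 x, hr]
  obtain ⟨m, hm⟩ := Finset.min_of_mem (Finset.mem_image_of_mem e hx)
  have h1 := Finset.mem_of_min hm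
  obtain ⟨z, hz, hez⟩ := Finset.mem_image.mp h1
  simp only [Finset.mem_filter, Finset.mem_univ, true_and] at hz
  refine ⟨z, hz, ?_⟩
  unfold urep
  rw [hm, hez]
  rfl

theorem ult_total (hu : UltrametricOn du) (he : Function.Injective e) {x y : X}
    (h : x ≠ y) : ult e du x y ∨ ult e du y x := by
  classical
  have hr : 0 < du x y := hu.2.1 x y h
  have hne : urep e du x (du x y) ≠ urep e du y (du x y) := by
    intro heq
    obtain ⟨z1, hz1, e1⟩ := urep_spec e du hu x hr
    obtain ⟨z2, hz2, e2⟩ := urep_spec e du hu y hr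
    have : (e z1 : WithTop ℕ) = (e z2 : WithTop ℕ) := by
      rw [← e1, ← e2, heq]
    have hz12 : z1 = z2 := he (by exact_mod_cast this)
    subst hz12
    have h3 : du x y ≤ max (du x z1) (du z1 y) := hu.2.2.2 x z1 y
    have h4 : du x y < du x y := lt_of_le_of_lt h3
      (max_lt hz1 (by rw [hu.2.2.1 z1 y]; exact hz2))
    exact lt_irrefl _ h4
  rcases lt_or_gt_of_ne hne with h1 | h1
  · left; exact h1
  · right; unfold ult; rw [hu.2.2.1 y x]; exact h1

theorem ult_trans (hu : UltrametricOn du) {x y z : X}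
    (h1 : ult e du x y) (h2 : ult e du y z) : ult e du x z := by
  unfold ult at h1 h2 ⊢
  have hsym := hu.2.2.1
  have htri := hu.2.2.2
  rcases lt_trichotomy (du x y) (du y z) with hrs | hrs | hrs
  · have ht : du x z = du y z := by
      apply le_antisymm
      · exact (htri x y z).trans (max_le hrs.le (le_refl _))
      · have h := htri y x z
        rw [hsym y x] at h
        rcases le_max_iff.mp h with h | h
        · exact absurd h (not_le.mpr hrs)
        · exact h
    rw [ht, urep_congr e du hu (lt_of_eq_of_lt rfl hrs : du x y < du y z)]
    exact h2
  · have ht : du x z = du x y := by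
      apply le_antisymm
      · calc du x z ≤ max (du x y) (du y z) := htri x y z
          _ = du x y := by rw [← hrs, max_self]
      · by_contra hlt
        push_neg at hlt
        have e1 : urep e du x (du x y) = urep e du z (du x y) :=
          urep_congr e du hu hlt
        rw [← hrs] at h2
        rw [e1] at h1
        exact lt_irrefl _ (h1.trans h2)
    rw [ht]
    rw [← hrs] at h2
    exact h1.trans h2
  · have ht : du x z = du x y := by
      apply le_antisymm
      · exact (htri x y z).trans (max_le (le_refl _) hrs.le)
      · have h := htri x z y
        rw [hsym z y] at h
        rcases le_max_iff.mp h with h | h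
        · exact h
        · exact absurd h (not_le.mpr hrs)
    rw [ht]
    have e2 : urep e du y (du x y) = urep e du z (du x y) :=
      urep_congr e du hu hrs
    rw [← e2]
    exact h1

theorem ult_irrefl (x : X) : ¬ ult e du x x := lt_irrefl _

theorem usig_lt (hu : UltrametricOn du) (he : Function.Injective e) {x y : X}
    (h : ult e du x y) : usig e du x < usig e du y := by
  classical
  unfold usig
  rw [Nat.cast_lt]
  apply Finset.card_lt_card
  rw [Finset.ssubset_iff_of_subset]
  · refine ⟨x, ?_, ?_⟩
    · simp only [Finset.mem_filter, Finset.mem_univ, true_and]; exact h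
    · simp only [Finset.mem_filter, Finset.mem_univ, true_and]
      exact ult_irrefl e du x
  · intro z hz
    simp only [Finset.mem_filter, Finset.mem_univ, true_and] at hz ⊢
    exact ult_trans e du hu hz h

theorem usig_inj (hu : UltrametricOn du) (he : Function.Injective e) :
    Function.Injective (usig e du) := by
  intro x y h
  by_contra hne
  rcases ult_total e du hu he hne with h1 | h1
  · exact absurd h (ne_of_lt (usig_lt e du hu he h1))
  · exact absurd h.symm (ne_of_lt (usig_lt e du hu he h1))

theorem usig_le_imp (hu : UltrametricOn du) (he : Function.Injective e) {x a : X}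
    (h : usig e du x ≤ usig e du a) : x = a ∨ ult e du x a := by
  by_contra hc
  push_neg at hc
  rcases ult_total e du hu he hc.1 with h1 | h1
  · exact hc.2 h1
  · exact absurd h (not_le.mpr (usig_lt e du hu he h1))

theorem ult_between (hu : UltrametricOn du) {x c y : X}
    (h1 : ult e du x c) (h2 : ult e du c y) : du x c ≤ du x y := by
  by_contra hlt
  push_neg at hlt
  have hcy : du c y = du x c := by
    apply le_antisymm
    · calc du c y ≤ max (du c x) (du x y) := hu.2.2.2 c x y
        _ ≤ du x c := max_le (le_of_eq (hu.2.2.1 c x)) hlt.le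
    · have h := hu.2.2.2 x y c
      rcases le_max_iff.mp h with h | h
      · exact absurd h (not_le.mpr hlt)
      · rw [hu.2.2.1 y c] at h; exact h
  have hxy : urep e du x (du x c) = urep e du y (du x c) :=
    urep_congr e du hu hlt
  unfold ult at h1 h2
  rw [hcy] at h2
  rw [hxy] at h1
  exact lt_irrefl _ (h1.trans h2)

end Aux

/-- If a finite metric space admits a `(τ,ρ)`-ultrametric cover, then it admits
a `(τ,ρ)`-triangle-LSO. -/
theorem ultrametric_cover_to_triangle_LSO
    (X : Type) [MetricSpace X] [Fintype X] (τ ρ : ℝ)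
    (hcover : IsUltrametricCover X τ ρ) :
    IsTriangleLSO (fun x y : X => dist x y) τ ρ := by
  classical
  obtain ⟨s, hs, D, hD, hdom, hcov⟩ := hcover
  set e : X → ℕ := fun x => ((Fintype.equivFin X) x : ℕ) with he_def
  have he : Function.Injective e := by
    intro a b h
    exact (Fintype.equivFin X).injective (Fin.val_injective h)
  refine ⟨s, hs, fun i => usig e (D i), fun i => usig_inj e (D i) (hD i) he, ?_⟩
  intro x y
  obtain ⟨i, hi⟩ := hcov x y
  refine ⟨i, ?_⟩
  have hui := hD i
  by_cases hxy : x = y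
  · subst hxy
    left
    refine ⟨le_refl _, fun a b ha hab hb => ?_⟩
    have hax : a = x := usig_inj e (D i) hui he (le_antisymm (hab.trans hb) ha)
    have hbx : b = x := usig_inj e (D i) hui he (le_antisymm hb (ha.trans hab))
    subst hax; subst hbx
    simp [dist_self]
  · have serve : ∀ u v : X, D i u v ≤ ρ * dist u v → ult e (D i) u v →
        TriLSOPair (fun x y : X => dist x y) (usig e (D i)) ρ u v := by
      intro u v hle hlt
      refine ⟨(usig_lt e (D i) hui he hlt).le, fun a b ha hab hb => ?_⟩
      have hua := usig_le_imp e (D i) hui he ha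
      have hab' := usig_le_imp e (D i) hui he hab
      have hbv := usig_le_imp e (D i) hui he hb
      have hub : u = b ∨ ult e (D i) u b := by
        rcases hua with rfl | hua
        · exact hab'
        · rcases hab' with rfl | hab'
          · exact Or.inr hua
          · exact Or.inr (ult_trans e (D i) hui hua hab')
      have hav : a = v ∨ ult e (D i) a v := by
        rcases hab' with rfl | hab'
        · exact hbv
        · rcases hbv with rfl | hbv
          · exact Or.inr hab'
          · exact Or.inr (ult_trans e (D i) hui hab' hbv)
      have key : ∀ c : X, (u = c ∨ ult e (D i) u c) → (c = v ∨ ult e (D i) c v) →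
          D i u c ≤ D i u v := by
        intro c h1 h2
        rcases h1 with rfl | h1
        · rw [hui.1]
          exact dist_nonneg.trans (hdom i u v)
        · rcases h2 with rfl | h2
          · exact le_refl _
          · exact ult_between e (D i) hui h1 h2
      have hda : D i u a ≤ D i u v := key a hua hav
      have hdb : D i u b ≤ D i u v := key b hub hbv
      calc dist a b ≤ D i a b := hdom i a b
        _ ≤ max (D i a u) (D i u b) := hui.2.2.2 a u b
        _ ≤ D i u v := max_le (by rw [hui.2.2.1 a u]; exact hda) hdb
        _ ≤ ρ * dist u v := hle
    rcases ult_total e (D i) hui he hxy with h | h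
    · exact Or.inl (serve x y hi h)
    · refine Or.inr (serve y x ?_ h)
      rw [hui.2.2.1 y x, dist_comm y x]
      exact hi
end

section
/- There is a universal constant C > 0 such that for every ν ∈ (0,1) and every integer n ≥ 2, the path graph P_n admits an oblivious ν-reliable 2-hop left spanner with at most C·n·ν^{−1}·log₂ n edges. -/
open scoped BigOperators

open scoped Classical
set_option maxHeartbeats 1000000

open scoped BigOperators
open Finset

namespace TwoHopAux


lemma step_ineq (s : ℕ) (hs : 1 ≤ s) (u y : ℝ) (hu : 1 ≤ u) (hy : u + 1 ≤ y) :
    (u/y)^(s+1) ≤ (u/s) * ((u/(y-1))^s - (u/y)^s) := by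
  have hy1 : (0:ℝ) < y - 1 := by linarith
  have hy0 : (0:ℝ) < y := by linarith
  have hu0 : (0:ℝ) < u := by linarith
  have hss : (0:ℝ) < s := by exact_mod_cast Nat.lt_of_lt_of_le Nat.zero_lt_one hs
  have hb : 1 + (s:ℝ) * (1/(y-1)) ≤ (1 + 1/(y-1))^s := by
    apply one_add_mul_le_pow
    have : (0:ℝ) ≤ 1/(y-1) := by positivity
    linarith
  have h2 : (1 : ℝ) + 1/(y-1) = y/(y-1) := by field_simp; ring
  rw [h2] at hb
  have hApow : (u/(y-1))^s = (u/y)^s * (y/(y-1))^s := by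
    rw [← mul_pow]; congr 1; field_simp
  have h3 : (u/s) * ((u/(y-1))^s - (u/y)^s) = (u/s) * ((u/y)^s * ((y/(y-1))^s - 1)) := by
    rw [hApow]; ring
  rw [h3]
  have h4 : (s:ℝ)/(y-1) ≤ (y/(y-1))^s - 1 := by
    have : (s:ℝ) * (1/(y-1)) = (s:ℝ)/(y-1) := by ring
    linarith [hb]
  have h5 : (u/y)^(s+1) = (u/y)^s * (u/y) := by ring
  have h6 : (u/y)^s * (u/y) ≤ (u/y)^s * (u/(y-1)) := by
    apply mul_le_mul_of_nonneg_left _ (by positivity)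
    apply div_le_div_of_nonneg_left hu0.le hy1 (by linarith)
  have h7 : (u/y)^s * (u/(y-1)) = (u/s) * ((u/y)^s * ((s:ℝ)/(y-1))) := by
    field_simp
  have h8 : (u/s) * ((u/y)^s * ((s:ℝ)/(y-1))) ≤ (u/s) * ((u/y)^s * ((y/(y-1))^s - 1)) := by
    apply mul_le_mul_of_nonneg_left _ (by positivity)
    exact mul_le_mul_of_nonneg_left h4 (by positivity)
  linarith

lemma sum_telescope (m r : ℕ) (hm : 1 ≤ m) (hr : 2 ≤ r) (J : ℕ) :
    ∑ j ∈ Finset.range J, ((m:ℝ)/(m + j + 1))^r ≤ m / ((r:ℝ) - 1) := by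
  have hm0 : (0:ℝ) < m := by exact_mod_cast hm
  have hr1 : (1:ℝ) ≤ (r:ℝ) - 1 := by
    have : (2:ℝ) ≤ r := by exact_mod_cast hr
    linarith
  have key : ∀ J : ℕ, ∑ j ∈ Finset.range J, ((m:ℝ)/(m + j + 1))^r
      ≤ m / ((r:ℝ) - 1) * (1 - ((m:ℝ)/(m + J))^(r-1)) := by
    intro J
    induction J with
    | zero => simp [div_self hm0.ne']
    | succ J ih =>
      push_cast
      rw [Finset.sum_range_succ]
      have hstep := step_ineq (r-1) (by omega) (m:ℝ) ((m:ℝ) + J + 1) (by exact_mod_cast hm)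
        (by push_cast; linarith [Nat.cast_nonneg (α := ℝ) J])
      have hcast : ((r:ℕ) - 1 : ℕ) = r - 1 := rfl
      have hrr : ((r - 1 : ℕ) : ℝ) = (r:ℝ) - 1 := by
        have : 1 ≤ r := by omega
        push_cast [this]; ring
      have hsub : ((m:ℝ) + J + 1) - 1 = (m:ℝ) + J := by ring
      rw [hrr, hsub] at hstep
      have hpow : ((r-1) + 1 : ℕ) = r := by omega
      rw [hpow] at hstep
      calc ∑ j ∈ Finset.range J, ((m:ℝ)/(m + j + 1))^r + ((m:ℝ)/(m + J + 1))^r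
          ≤ m / ((r:ℝ) - 1) * (1 - ((m:ℝ)/(m + J))^(r-1))
            + (m:ℝ) / ((r:ℝ)-1) * (((m:ℝ)/((m:ℝ)+J))^(r-1) - ((m:ℝ)/((m:ℝ)+J+1))^(r-1)) := by
            apply add_le_add ih
            convert hstep using 3 <;> push_cast <;> ring
        _ = m / ((r:ℝ) - 1) * (1 - ((m:ℝ)/(m + ((J:ℝ) + 1)))^(r-1)) := by ring
  calc ∑ j ∈ Finset.range J, ((m:ℝ)/(m + j + 1))^r
      ≤ m / ((r:ℝ) - 1) * (1 - ((m:ℝ)/(m + J))^(r-1)) := key J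
    _ ≤ m / ((r:ℝ) - 1) * 1 := by
        apply mul_le_mul_of_nonneg_left _ (by positivity)
        have : (0:ℝ) ≤ ((m:ℝ)/(m + J))^(r-1) := by positivity
        linarith
    _ = m / ((r:ℝ) - 1) := mul_one _



lemma block_bound (i : ℕ) (F : Finset ℕ) (hF : ∀ x ∈ F, 2^i ≤ x) :
    1 - (F.card:ℝ)/2^i ≤ ∏ x ∈ F, (1 - 1/(x:ℝ)) := by
  have h2i : (0:ℝ) < 2^i := by positivity
  have h2i1 : (1:ℝ)/2^i ≤ 1 := by
    rw [div_le_one h2i]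
    exact one_le_pow₀ (by norm_num)
  have h1 : (1:ℝ) - F.card/2^i ≤ (1 - 1/2^i)^F.card := by
    have := one_add_mul_le_pow (a := -(1/(2:ℝ)^i)) (by linarith) F.card
    have e1 : (1:ℝ) + -(1/2^i) = 1 - 1/2^i := by ring
    have e2 : (1:ℝ) + (F.card:ℝ) * -(1/2^i) = 1 - F.card/2^i := by ring
    rw [e1, e2] at this
    exact this
  refine h1.trans ?_
  rw [← Finset.prod_const]
  apply Finset.prod_le_prod
  · intro x hx; linarith
  · intro x hx
    have hx2 : (2:ℝ)^i ≤ x := by exact_mod_cast hF x hx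
    have hx0 : (0:ℝ) < x := lt_of_lt_of_le h2i hx2
    have : 1/(x:ℝ) ≤ 1/2^i := by
      apply div_le_div_of_nonneg_left (by norm_num) h2i hx2
    linarith

lemma prod_rank (m : ℕ) (hm : 1 ≤ m) (T : Finset ℕ)
    (h1 : ∀ x ∈ T, 1 ≤ x)
    (h2 : ∀ x ∈ T, x + 1 ≤ m + (T.filter (fun y => y ≤ x)).card) :
    ∏ x ∈ T, (1 - 1/(x:ℝ)) ≤ m / (m + T.card) := by
  classical
  induction T using Finset.strongInduction with
  | _ T ih =>
    rcases T.eq_empty_or_nonempty with rfl | hne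
    · simp only [Finset.prod_empty, Finset.card_empty, Nat.cast_zero, add_zero]
      rw [div_self (by positivity : ((m:ℝ)) ≠ 0)]
    · set x0 := T.max' hne with hx0def
      have hx0T : x0 ∈ T := T.max'_mem hne
      set T' := T.erase x0 with hT'def
      have hss : T' ⊂ T := Finset.erase_ssubset hx0T
      have hcard : T.card = T'.card + 1 := by
        rw [hT'def, Finset.card_erase_of_mem hx0T]
        have : 1 ≤ T.card := Finset.card_pos.mpr hne
        omega
      have h1' : ∀ x ∈ T', 1 ≤ x := fun x hx => h1 x (Finset.mem_of_mem_erase hx)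
      have h2' : ∀ x ∈ T', x + 1 ≤ m + (T'.filter (fun y => y ≤ x)).card := by
        intro x hx
        have hxT := Finset.mem_of_mem_erase hx
        have hxlt : x < x0 := lt_of_le_of_ne (Finset.le_max' T x hxT) (Finset.ne_of_mem_erase hx)
        have : T'.filter (fun y => y ≤ x) = T.filter (fun y => y ≤ x) := by
          rw [hT'def, Finset.filter_erase]
          apply Finset.erase_eq_of_notMem
          simp only [Finset.mem_filter]
          rintro ⟨-, h⟩
          omega
        rw [this]
        exact h2 x hxT
      have ihT' := ih T' hss h1' h2'
      have hx0b : x0 + 1 ≤ m + T.card := by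
        have := h2 x0 hx0T
        have hsub : (T.filter (fun y => y ≤ x0)).card ≤ T.card :=
          Finset.card_le_card (Finset.filter_subset _ _)
        omega
      have hprod : ∏ x ∈ T, (1 - 1/(x:ℝ)) = (∏ x ∈ T', (1 - 1/(x:ℝ))) * (1 - 1/(x0:ℝ)) :=
        (Finset.prod_erase_mul T _ hx0T).symm
      have hx01 : 1 ≤ x0 := h1 x0 hx0T
      have hx0r : (0:ℝ) < x0 := by exact_mod_cast hx01
      have hf0 : (0:ℝ) ≤ 1 - 1/(x0:ℝ) := by
        have : 1/(x0:ℝ) ≤ 1 := by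
          rw [div_le_one hx0r]; exact_mod_cast hx01
        linarith
      have hfc : (1:ℝ) - 1/(x0:ℝ) ≤ 1 - 1/((m:ℝ) + T.card) := by
        have hle : (x0:ℝ) ≤ (m:ℝ) + T.card := by
          have : (x0:ℕ) ≤ m + T.card := by omega
          exact_mod_cast this
        have : 1/((m:ℝ) + T.card) ≤ 1/(x0:ℝ) :=
          div_le_div_of_nonneg_left (by norm_num) hx0r hle
        linarith
      have hmc : (0:ℝ) < (m:ℝ) + T'.card := by positivity
      have hmc2 : (0:ℝ) < (m:ℝ) + T.card := by positivity
      rw [hprod]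
      calc (∏ x ∈ T', (1 - 1/(x:ℝ))) * (1 - 1/(x0:ℝ))
          ≤ ((m:ℝ)/((m:ℝ) + T'.card)) * (1 - 1/((m:ℝ) + T.card)) := by
            apply mul_le_mul ihT' hfc hf0 (by positivity)
        _ = (m:ℝ)/((m:ℝ) + T.card) := by
            rw [hcard]
            push_cast
            field_simp
            ring
  


/-- the sampled point in block `[2^i, 2^{i+1})` determined by the draw `u`. -/
def pt (i u : ℕ) : ℕ := 2^i + u % 2^i

abbrev Draw (L r : ℕ) := Fin L × Fin r → Fin (2^L)

/-- the (finite) set of "hub" points determined by the draws, always containing 0. -/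
def Sfin (L r : ℕ) (g : Draw L r) : Finset ℕ :=
  insert 0 (Finset.image (fun k => pt k.1.1 (g k).1) Finset.univ)

lemma zero_mem_Sfin (L r : ℕ) (g : Draw L r) : 0 ∈ Sfin L r g :=
  Finset.mem_insert_self _ _

lemma card_Sfin (L r : ℕ) (g : Draw L r) : (Sfin L r g).card ≤ L * r + 1 := by
  refine (Finset.card_insert_le _ _).trans ?_
  have h := Finset.card_image_le (s := (Finset.univ : Finset (Fin L × Fin r)))
    (f := fun k => pt k.1.1 (g k).1)
  simp only [Finset.card_univ, Fintype.card_prod, Fintype.card_fin] at h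
  omega

/-- the graph: each vertex is joined to every hub to its left. -/
def graph (n L r : ℕ) (g : Draw L r) : SimpleGraph (Fin n) where
  Adj a b := a ≠ b ∧ min a.1 b.1 ∈ Sfin L r g
  symm := by constructor; intro a b h; exact ⟨h.1.symm, by rw [min_comm]; exact h.2⟩
  loopless := by constructor; intro a h; exact h.1 rfl

lemma edge_bound (n L r : ℕ) (g : Draw L r) :
    ((graph n L r g).edgeSet.ncard : ℝ) ≤ ((L * r + 1) * n : ℕ) := by
  classical
  have hmono : (graph n L r g).edgeSet.ncard ≤ (L * r + 1) * n := by
    set φ : Sym2 (Fin n) → Fin n × Fin n :=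
      Sym2.lift ⟨fun a b => (min a b, max a b), by
        intro a b; simp [min_comm, max_comm]⟩ with hφ
    have hrecon : ∀ e : Sym2 (Fin n), Sym2.mk (φ e).1 (φ e).2 = e := by
      intro e
      induction e with
      | _ a b =>
        rcases le_total a b with h | h
        · simp [hφ, min_eq_left h, max_eq_right h]
        · simp only [hφ, Sym2.lift_mk, min_eq_right h, max_eq_left h]
          exact Sym2.eq_swap
    have hinj : Set.InjOn φ (graph n L r g).edgeSet := by
      intro e he e' he' hee
      have := hrecon e
      rw [hee, hrecon e'] at this
      exact this.symm
    have h1 : (graph n L r g).edgeSet.ncard = (φ '' (graph n L r g).edgeSet).ncard :=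
      (Set.ncard_image_of_injOn hinj).symm
    set SG : Finset (Fin n) := Finset.univ.filter (fun v => v.1 ∈ Sfin L r g) with hSG
    have h2 : φ '' (graph n L r g).edgeSet ⊆ ↑(SG ×ˢ (Finset.univ : Finset (Fin n))) := by
      rintro q ⟨e, he, rfl⟩
      induction e with
      | _ a b =>
        have hadj : (graph n L r g).Adj a b := he
        simp only [Finset.coe_product, Set.mem_prod, Finset.mem_coe, Finset.mem_univ, and_true]
        rw [hSG]
        simp only [hφ, Sym2.lift_mk, Finset.mem_filter, Finset.mem_univ, true_and]
        have : (min a b).1 = min a.1 b.1 := by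
          rcases le_total a b with h | h
          · rw [min_eq_left h, min_eq_left (by exact_mod_cast h)]
          · rw [min_eq_right h, min_eq_right (by exact_mod_cast h)]
        rw [this]
        exact hadj.2
    have h3 : (φ '' (graph n L r g).edgeSet).ncard ≤ (SG ×ˢ (Finset.univ : Finset (Fin n))).card := by
      rw [← Set.ncard_coe_finset]
      exact Set.ncard_le_ncard h2 (Set.toFinite _)
    have h4 : (SG ×ˢ (Finset.univ : Finset (Fin n))).card ≤ (L * r + 1) * n := by
      rw [Finset.card_product, Finset.card_univ, Fintype.card_fin]
      apply Nat.mul_le_mul_right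
      have : SG.card ≤ (Sfin L r g).card := by
        apply Finset.card_le_card_of_injOn (fun v => v.1)
        · intro v hv; rw [hSG] at hv; exact (Finset.mem_filter.mp hv).2
        · intro v _ w _ h; exact Fin.ext h
      exact this.trans (card_Sfin L r g)
    omega
  exact_mod_cast hmono



lemma val_lt (i L x w : ℕ) (hiL : i ≤ L) (hx : x - 2^i < 2^i) (hw : w < 2^(L-i)) :
    x - 2^i + w*2^i < 2^L := by
  have hpow : 2^(L-i) * 2^i = 2^L := by rw [← pow_add, Nat.sub_add_cancel hiL]
  have h2 : w * 2^i ≤ (2^(L-i) - 1) * 2^i := Nat.mul_le_mul_right _ (by omega)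
  have hle : 2^i ≤ 2^(L-i) * 2^i := Nat.le_mul_of_pos_left _ (Nat.two_pow_pos _)
  have h3 : 2^i + (2^(L-i) - 1) * 2^i = 2^L := by
    rw [Nat.sub_mul, one_mul]; omega
  omega

def Bv (n : ℕ) (B : Set (Fin n)) : Set ℕ := {x | ∃ v ∈ B, (v : Fin n).1 = x}

def failP (n L r : ℕ) (g : Draw L r) (B : Set (Fin n)) (a : Fin n) : Prop :=
  ∀ x ∈ Sfin L r g, x ≤ a.1 → x ∈ Bv n B

open scoped Classical in
noncomputable def Tset (n : ℕ) (B : Set (Fin n)) (a : Fin n) : Finset ℕ :=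
  (Finset.range n).filter (fun x => 1 ≤ x ∧ x ≤ a.1 ∧ x ∉ Bv n B)



open scoped Classical in
lemma count_bound (n L r : ℕ) (hnL : n ≤ 2^L) (B : Set (Fin n)) (a : Fin n)
    (h0 : (0:ℕ) ∈ Bv n B) :
    (((Finset.univ.filter (fun g : Draw L r => failP n L r g B a)).card : ℝ))
      ≤ ((2^L : ℕ)^(L*r) : ℝ) *
        ((B.ncard : ℝ)/((B.ncard : ℝ) + (Tset n B a).card))^r := by
  set m := B.ncard with hm
  set T := Tset n B a with hT
  -- basic facts about members of T
  have hTmem : ∀ x ∈ T, 1 ≤ x ∧ x ≤ a.1 ∧ x ∉ Bv n B ∧ x < n := by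
    intro x hx
    rw [hT, Tset, Finset.mem_filter, Finset.mem_range] at hx
    tauto
  have hm1 : 1 ≤ m := by
    obtain ⟨v, hv, -⟩ := h0
    exact (Set.ncard_pos (Set.toFinite _)).mpr ⟨v, hv⟩
  -- the Good sets
  set Good : Fin L × Fin r → Finset (Fin (2^L)) :=
    fun k => Finset.univ.filter (fun u => pt k.1.1 u.1 ∉ T) with hGood
  -- Step 1 : counting
  have step1 : (Finset.univ.filter (fun g : Draw L r => failP n L r g B a)).card
      ≤ ∏ k : Fin L × Fin r, (Good k).card := by
    rw [← Fintype.card_piFinset]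
    apply Finset.card_le_card
    intro g hg
    rw [Finset.mem_filter] at hg
    rw [Fintype.mem_piFinset]
    intro k
    rw [hGood, Finset.mem_filter]
    refine ⟨Finset.mem_univ _, ?_⟩
    intro hmem
    obtain ⟨h1x, h2x, h3x, h4x⟩ := hTmem _ hmem
    apply h3x
    apply hg.2 _ _ h2x
    rw [Sfin]
    apply Finset.mem_insert_of_mem
    exact Finset.mem_image_of_mem _ (Finset.mem_univ k)
  -- fibers of T by dyadic level
  set tfib : ℕ → ℕ := fun i => ((T.filter (fun x => Nat.log 2 x = i)).card) with htfib
  -- Step 2 : each Good set is small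
  have step2 : ∀ k : Fin L × Fin r,
      (Good k).card + tfib k.1.1 * 2^(L - k.1.1) ≤ 2^L := by
    intro k
    set i := k.1.1 with hi
    have hiL : i < L := k.1.2
    set Bad : Finset (Fin (2^L)) := Finset.univ.filter (fun u => pt i u.1 ∈ T) with hBad
    have hsplit : Bad.card + (Good k).card = 2^L := by
      rw [hBad, hGood]
      rw [Finset.card_filter_add_card_filter_not]
      simp
    have hinj : tfib i * 2^(L - i) ≤ Bad.card := by
      have hcp : ((T.filter (fun x => Nat.log 2 x = i)) ×ˢ (Finset.range (2^(L-i)))).card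
          = tfib i * 2^(L - i) := by
        rw [Finset.card_product, Finset.card_range, htfib]
      rw [← hcp]
      have hMpos : 0 < 2^L := Nat.two_pow_pos _
      apply Finset.card_le_card_of_injOn
        (fun p => (⟨(p.1 - 2^i + p.2 * 2^i) % 2^L, Nat.mod_lt _ hMpos⟩ : Fin (2^L)))
      · rintro ⟨x, w⟩ hp
        rw [Finset.mem_coe, Finset.mem_product] at hp
        obtain ⟨hx, hw⟩ := hp
        rw [Finset.mem_filter] at hx
        rw [Finset.mem_range] at hw
        obtain ⟨hxT, hxlog⟩ := hx
        obtain ⟨hx1, -, -, -⟩ := hTmem _ hxT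
        have hxlo : 2^i ≤ x := by
          rw [← hxlog]; exact Nat.pow_log_le_self 2 (by omega)
        have hxhi : x < 2^(i+1) := by
          rw [← hxlog]; exact Nat.lt_pow_succ_log_self (by norm_num) x
        have hpow : 2^(L-i) * 2^i = 2^L := by
          rw [← pow_add, Nat.sub_add_cancel hiL.le]
        have hxbound : x - 2^i + w * 2^i < 2^L := by
          apply val_lt i L x w hiL.le _ hw
          have : 2^(i+1) = 2^i + 2^i := by ring
          omega
        have hmodeq : (x - 2^i + w * 2^i) % 2^L = x - 2^i + w * 2^i :=
          Nat.mod_eq_of_lt hxbound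
        rw [Finset.mem_coe, hBad, Finset.mem_filter]
        refine ⟨Finset.mem_univ _, ?_⟩
        simp only [hmodeq]
        have : pt i (x - 2^i + w * 2^i) = x := by
          rw [pt, Nat.add_mul_mod_self_right, Nat.mod_eq_of_lt (by omega : x - 2^i < 2^i)]
          omega
        rw [this]
        exact hxT
      · rintro ⟨x, w⟩ hp ⟨x', w'⟩ hp' heq
        simp only [Finset.coe_product, Set.mem_prod, Finset.mem_coe, Finset.mem_filter,
          Finset.mem_range] at hp hp'
        obtain ⟨⟨hxT, hxlog⟩, hw⟩ := hp
        obtain ⟨⟨hxT', hxlog'⟩, hw'⟩ := hp'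
        obtain ⟨hx1, -, -, -⟩ := hTmem _ hxT
        obtain ⟨hx1', -, -, -⟩ := hTmem _ hxT'
        have hxlo : 2^i ≤ x := by
          rw [← hxlog]; exact Nat.pow_log_le_self 2 (by omega)
        have hxhi : x < 2^(i+1) := by
          rw [← hxlog]; exact Nat.lt_pow_succ_log_self (by norm_num) x
        have hxlo' : 2^i ≤ x' := by
          rw [← hxlog']; exact Nat.pow_log_le_self 2 (by omega)
        have hxhi' : x' < 2^(i+1) := by
          rw [← hxlog']; exact Nat.lt_pow_succ_log_self (by norm_num) x'
        have hpow : 2^(L-i) * 2^i = 2^L := by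
          rw [← pow_add, Nat.sub_add_cancel hiL.le]
        have h2i : (0:ℕ) < 2^i := Nat.two_pow_pos _
        have h2s : 2^(i+1) = 2^i + 2^i := by ring
        have hb : x - 2^i + w * 2^i < 2^L :=
          val_lt i L x w hiL.le (by omega) hw
        have hb' : x' - 2^i + w' * 2^i < 2^L :=
          val_lt i L x' w' hiL.le (by omega) hw'
        have hveq : x - 2^i + w * 2^i = x' - 2^i + w' * 2^i := by
          have := congrArg Fin.val heq
          simpa [Nat.mod_eq_of_lt hb, Nat.mod_eq_of_lt hb'] using this
        have hdiv : w = w' := by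
          have e1 : (x - 2^i + w * 2^i) / 2^i = (x - 2^i)/2^i + w :=
            Nat.add_mul_div_right _ _ h2i
          have e2 : (x' - 2^i + w' * 2^i) / 2^i = (x' - 2^i)/2^i + w' :=
            Nat.add_mul_div_right _ _ h2i
          have e3 : (x - 2^i)/2^i = 0 := Nat.div_eq_of_lt (by omega)
          have e4 : (x' - 2^i)/2^i = 0 := Nat.div_eq_of_lt (by omega)
          rw [hveq] at e1
          omega
        have : x = x' := by
          rw [hdiv] at hveq
          omega
        simp [this, hdiv]
    omega
  -- Step 3 : real number chain
  have hcast1 : (((Finset.univ.filter (fun g : Draw L r => failP n L r g B a)).card : ℝ))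
      ≤ ∏ k : Fin L × Fin r, ((Good k).card : ℝ) := by
    rw [← Nat.cast_prod]
    exact_mod_cast step1
  have htfible : ∀ i : ℕ, tfib i ≤ 2^i := by
    intro i
    rw [htfib]
    calc (T.filter (fun x => Nat.log 2 x = i)).card
        ≤ (Finset.Ico (2^i) (2^(i+1))).card := by
          apply Finset.card_le_card
          intro x hx
          rw [Finset.mem_filter] at hx
          obtain ⟨hxT, hlog⟩ := hx
          obtain ⟨hx1, -, -, -⟩ := hTmem _ hxT
          rw [Finset.mem_Ico]
          refine ⟨?_, ?_⟩
          · rw [← hlog]; exact Nat.pow_log_le_self 2 (by omega)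
          · rw [← hlog]; exact Nat.lt_pow_succ_log_self (by norm_num) x
      _ = 2^i := by
          rw [Nat.card_Ico, pow_succ]
          omega
  have hcnonneg : ∀ i : ℕ, (0:ℝ) ≤ 1 - (tfib i : ℝ)/2^i := by
    intro i
    have h1 : (tfib i : ℝ) ≤ 2^i := by exact_mod_cast htfible i
    have h2 : (0:ℝ) < 2^i := by positivity
    rw [sub_nonneg, div_le_one h2]
    exact h1
  have hfac : ∀ k : Fin L × Fin r,
      ((Good k).card : ℝ) ≤ (2^L : ℝ) * (1 - (tfib k.1.1 : ℝ)/2^(k.1.1)) := by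
    intro k
    have hpowR : (2:ℝ)^(L - k.1.1) * 2^(k.1.1) = 2^L := by
      rw [← pow_add, Nat.sub_add_cancel k.1.2.le]
    have hstep : ((Good k).card : ℝ) ≤ (2^L : ℝ) - (tfib k.1.1 : ℝ) * 2^(L - k.1.1) := by
      have h2 := step2 k
      have h2' : ((Good k).card : ℝ) + (tfib k.1.1 : ℝ) * 2^(L - k.1.1) ≤ (2^L : ℝ) := by
        exact_mod_cast h2
      linarith
    have heq : (2:ℝ)^L * ((tfib k.1.1 : ℝ)/2^(k.1.1)) = (tfib k.1.1 : ℝ) * 2^(L - k.1.1) := by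
      rw [← hpowR]
      have h2ipos : (0:ℝ) < 2^(k.1.1) := by positivity
      field_simp
    rw [mul_sub, mul_one, heq]
    exact hstep
  have hprod1 : ∏ k : Fin L × Fin r, ((Good k).card : ℝ)
      ≤ ∏ k : Fin L × Fin r, ((2^L:ℝ) * (1 - (tfib k.1.1 : ℝ)/2^(k.1.1))) :=
    Finset.prod_le_prod (fun k _ => by positivity) (fun k _ => hfac k)
  have hsplit2 : ∏ k : Fin L × Fin r, ((2^L:ℝ) * (1 - (tfib k.1.1 : ℝ)/2^(k.1.1)))
      = ((2:ℝ)^L)^(L*r) * ∏ i : Fin L, (1 - (tfib i.1 : ℝ)/2^(i.1))^r := by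
    rw [Finset.prod_mul_distrib, Finset.prod_const, Finset.card_univ, Fintype.card_prod,
      Fintype.card_fin, Fintype.card_fin]
    congr 1
    rw [Fintype.prod_prod_type]
    apply Finset.prod_congr rfl
    intro i _
    dsimp only
    rw [Finset.prod_const, Finset.card_univ, Fintype.card_fin]
  have hper : ∀ i : Fin L, (1 - (tfib i.1 : ℝ)/2^(i.1))^r
      ≤ (∏ x ∈ T.filter (fun x => Nat.log 2 x = i.1), (1 - 1/(x:ℝ)))^r := by
    intro i
    apply pow_le_pow_left₀ (hcnonneg i.1)
    have hb := block_bound i.1 (T.filter (fun x => Nat.log 2 x = i.1)) ?_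
    · rw [htfib]
      exact hb
    · intro x hx
      rw [Finset.mem_filter] at hx
      obtain ⟨hxT, hlog⟩ := hx
      obtain ⟨hx1, -, -, -⟩ := hTmem _ hxT
      rw [← hlog]; exact Nat.pow_log_le_self 2 (by omega)
  have hprodT : ∏ i : Fin L, ∏ x ∈ T.filter (fun x => Nat.log 2 x = i.1), (1 - 1/(x:ℝ))
      = ∏ x ∈ T, (1 - 1/(x:ℝ)) := by
    rw [Fin.prod_univ_eq_prod_range
      (fun i => ∏ x ∈ T.filter (fun x => Nat.log 2 x = i), (1 - 1/(x:ℝ))) L]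
    apply Finset.prod_fiberwise_of_maps_to
    intro x hx
    obtain ⟨hx1, -, -, hx4⟩ := hTmem _ hx
    rw [Finset.mem_range]
    exact Nat.log_lt_of_lt_pow (by omega) (lt_of_lt_of_le hx4 hnL)
  have hrank : ∀ x ∈ T, x + 1 ≤ m + (T.filter (fun y => y ≤ x)).card := by
    intro x hx
    obtain ⟨hx1, hx2, hx3, hx4⟩ := hTmem _ hx
    have hsplitc := Finset.card_filter_add_card_filter_not
      (s := Finset.range (x+1)) (p := fun y => y ∈ Bv n B)
    have hBcard : ((Finset.range (x+1)).filter (fun y => y ∈ Bv n B)).card ≤ m := by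
      rw [hm, Set.ncard_eq_toFinset_card']
      apply Finset.card_le_card_of_injOn (fun y => (⟨y % n, Nat.mod_lt _ (by omega)⟩ : Fin n))
      · intro y hy
        rw [Finset.mem_coe, Finset.mem_filter, Finset.mem_range] at hy
        obtain ⟨hyx, v, hvB, hvy⟩ := hy
        have hyn : y < n := by omega
        rw [Finset.mem_coe, Set.mem_toFinset]
        have : (⟨y % n, Nat.mod_lt _ (by omega)⟩ : Fin n) = v := by
          apply Fin.ext
          simp only []
          rw [Nat.mod_eq_of_lt hyn]
          exact hvy.symm
        beta_reduce
        rw [this]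
        exact hvB
      · intro y hy y' hy' heq
        rw [Finset.coe_filter, Set.mem_setOf_eq, Finset.mem_range] at hy hy'
        have hyn : y < n := by omega
        have hyn' : y' < n := by omega
        have := congrArg Fin.val heq
        simpa [Nat.mod_eq_of_lt hyn, Nat.mod_eq_of_lt hyn'] using this
    have hsubset : (Finset.range (x+1)).filter (fun y => ¬ y ∈ Bv n B)
        ⊆ T.filter (fun y => y ≤ x) := by
      intro y hy
      rw [Finset.mem_filter, Finset.mem_range] at hy
      obtain ⟨hyx, hyB⟩ := hy
      have hy1 : 1 ≤ y := by
        rcases Nat.eq_zero_or_pos y with rfl | h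
        · exact absurd h0 hyB
        · exact h
      rw [Finset.mem_filter]
      refine ⟨?_, by omega⟩
      rw [hT, Tset, Finset.mem_filter, Finset.mem_range]
      exact ⟨by omega, hy1, by omega, hyB⟩
    have hle2 : ((Finset.range (x+1)).filter (fun y => ¬ y ∈ Bv n B)).card
        ≤ (T.filter (fun y => y ≤ x)).card := Finset.card_le_card hsubset
    have hcr : (Finset.range (x+1)).card = x + 1 := Finset.card_range _
    omega
  have hTnonneg : (0:ℝ) ≤ ∏ x ∈ T, (1 - 1/(x:ℝ)) := by
    apply Finset.prod_nonneg
    intro x hx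
    obtain ⟨hx1, -, -, -⟩ := hTmem _ hx
    have hx0 : (0:ℝ) < x := by exact_mod_cast hx1
    have : 1/(x:ℝ) ≤ 1 := by
      rw [div_le_one hx0]; exact_mod_cast hx1
    linarith
  have hfinal : (∏ x ∈ T, (1 - 1/(x:ℝ))) ≤ (m:ℝ)/((m:ℝ) + T.card) :=
    prod_rank m hm1 T (fun x hx => (hTmem x hx).1) hrank
  have hlast : ∏ i : Fin L, (1 - (tfib i.1 : ℝ)/2^(i.1))^r
      ≤ ((m:ℝ)/((m:ℝ) + T.card))^r := by
    calc ∏ i : Fin L, (1 - (tfib i.1 : ℝ)/2^(i.1))^r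
        ≤ ∏ i : Fin L, (∏ x ∈ T.filter (fun x => Nat.log 2 x = i.1), (1 - 1/(x:ℝ)))^r := by
          exact Finset.prod_le_prod (fun i _ => pow_nonneg (hcnonneg i.1) r) (fun i _ => hper i)
      _ = (∏ i : Fin L, ∏ x ∈ T.filter (fun x => Nat.log 2 x = i.1), (1 - 1/(x:ℝ)))^r := by
          rw [Finset.prod_pow]
      _ = (∏ x ∈ T, (1 - 1/(x:ℝ)))^r := by rw [hprodT]
      _ ≤ ((m:ℝ)/((m:ℝ) + T.card))^r := pow_le_pow_left₀ hTnonneg hfinal r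
  calc (((Finset.univ.filter (fun g : Draw L r => failP n L r g B a)).card : ℝ))
      ≤ ∏ k : Fin L × Fin r, ((Good k).card : ℝ) := hcast1
    _ ≤ ((2:ℝ)^L)^(L*r) * ∏ i : Fin L, (1 - (tfib i.1 : ℝ)/2^(i.1))^r := by
        rw [← hsplit2]; exact hprod1
    _ ≤ ((2:ℝ)^L)^(L*r) * ((m:ℝ)/((m:ℝ) + T.card))^r := by
        apply mul_le_mul_of_nonneg_left hlast (by positivity)
    _ = ((2^L : ℕ)^(L*r) : ℝ) * ((m:ℝ)/((m:ℝ) + T.card))^r := by push_cast; ring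

end TwoHopAux


/-- The path graph `P_n` (vertices `Fin n`) admits an oblivious `ν`-reliable
2-hop left spanner with at most `C·n·ν⁻¹·log₂ n` edges: a distribution over
graphs `H ω` on `Fin n`, each with at most that many edges, such that for every
attack `B` there are faulty extensions `Bp ω ⊇ B` with `E[|Bp|] ≤ (1+ν)|B|`,
and for every `a < b` outside `Bp ω` there exists `c ∉ B` with `c ≤ a`,
`(c = a or {c,a} ∈ H ω)` and `{c,b} ∈ H ω`. -/
theorem path_graph_two_hop_left_spanner :
    ∃ C : ℝ, 0 < C ∧
      ∀ (ν : ℝ), 0 < ν → ν < 1 → ∀ n : ℕ, 2 ≤ n →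
        ∃ (N : ℕ) (p : Fin N → ℝ) (H : Fin N → SimpleGraph (Fin n)),
          (∀ ω, 0 ≤ p ω) ∧ (∑ ω, p ω = 1) ∧
          (∀ ω : Fin N, ((H ω).edgeSet.ncard : ℝ) ≤ C * (n : ℝ) * ν⁻¹ * Real.logb 2 n) ∧
          ∀ B : Set (Fin n), ∃ Bp : Fin N → Set (Fin n),
            (∀ ω, B ⊆ Bp ω) ∧
            (∀ (ω : Fin N) (a b : Fin n), a < b → a ∉ Bp ω → b ∉ Bp ω →
              ∃ c : Fin n, c ∉ B ∧ c ≤ a ∧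
                (c = a ∨ (H ω).Adj c a) ∧ (H ω).Adj c b) ∧
            (∑ ω, p ω * ((Bp ω).ncard : ℝ)) ≤ (1 + ν) * (B.ncard : ℝ) := by
  refine ⟨9, by norm_num, ?_⟩
  intro ν hν hν1 n hn
  haveI : NeZero n := ⟨by omega⟩
  obtain ⟨L, hL⟩ : ∃ L, L = Nat.log 2 n + 1 := ⟨_, rfl⟩
  obtain ⟨r, hrdef⟩ : ∃ r, r = ⌈3/ν⌉₊ := ⟨_, rfl⟩
  have hνinv : (1:ℝ) ≤ ν⁻¹ := by
    rw [show ν⁻¹ = 1/ν from (one_div ν).symm]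
    exact one_le_one_div hν hν1.le
  have hr3 : (3:ℝ)/ν ≤ (r:ℝ) := by rw [hrdef]; exact_mod_cast Nat.le_ceil _
  have h3ν : (3:ℝ) < 3/ν := by rw [lt_div_iff₀ hν]; nlinarith
  have hr2 : 2 ≤ r := by
    have : (2:ℝ) ≤ (r:ℝ) := by linarith
    exact_mod_cast this
  have hnL : n ≤ 2^L := by
    rw [hL]
    exact le_of_lt (Nat.lt_pow_succ_log_self (by norm_num) n)
  obtain ⟨N, hN⟩ : ∃ N, N = Fintype.card (TwoHopAux.Draw L r) := ⟨_, rfl⟩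
  have hNeq : N = (2^L)^(L*r) := by
    rw [hN]
    show Fintype.card ((Fin L × Fin r) → Fin (2^L)) = (2^L)^(L*r)
    rw [Fintype.card_fun, Fintype.card_prod, Fintype.card_fin, Fintype.card_fin,
      Fintype.card_fin]
  have hNpos : 0 < N := by rw [hNeq]; positivity
  have hN0 : (N:ℝ) ≠ 0 := by
    have : (0:ℝ) < N := by exact_mod_cast hNpos
    linarith
  set e : TwoHopAux.Draw L r ≃ Fin N :=
    (Fintype.equivFin (TwoHopAux.Draw L r)).trans (finCongr hN.symm) with he
  refine ⟨N, fun _ => (N:ℝ)⁻¹, fun ω => TwoHopAux.graph n L r (e.symm ω), ?_, ?_, ?_, ?_⟩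
  · intro ω; positivity
  · rw [Finset.sum_const, Finset.card_univ, Fintype.card_fin, nsmul_eq_mul]
    field_simp
  · -- edge bound
    intro ω
    refine (TwoHopAux.edge_bound n L r (e.symm ω)).trans ?_
    have hlog1 : (1:ℝ) ≤ Real.logb 2 n := by
      rw [show (1:ℝ) = Real.logb 2 2 by simp]
      rw [Real.logb_le_logb (by norm_num) (by norm_num) (by positivity)]
      exact_mod_cast hn
    have hlogN : ((Nat.log 2 n : ℕ) : ℝ) ≤ Real.logb 2 n := by
      have h1' : (2:ℝ) ^ (Nat.log 2 n) ≤ n := by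
        exact_mod_cast Nat.pow_log_le_self 2 (by omega)
      calc ((Nat.log 2 n : ℕ) : ℝ) = Real.logb 2 ((2:ℝ) ^ (Nat.log 2 n)) := by
            rw [Real.logb_pow]; simp
        _ ≤ Real.logb 2 n := by
            rw [Real.logb_le_logb (by norm_num) (by positivity) (by positivity)]
            exact h1'
    have hLb : (L:ℝ) ≤ 2 * Real.logb 2 n := by
      rw [hL]; push_cast; linarith
    have hrb : (r:ℝ) ≤ 4 * ν⁻¹ := by
      have h1' : (r:ℝ) < 3/ν + 1 := by
        rw [hrdef]
        exact Nat.ceil_lt_add_one (by positivity)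
      have h2' : (3:ℝ)/ν = 3 * ν⁻¹ := by rw [div_eq_mul_inv]
      linarith
    have hLr : (L:ℝ) * (r:ℝ) ≤ 8 * (ν⁻¹ * Real.logb 2 n) := by
      have hmul := mul_le_mul hLb hrb (Nat.cast_nonneg r) (by positivity)
      nlinarith
    have h1n : (1:ℝ) ≤ ν⁻¹ * Real.logb 2 n := by nlinarith
    have hn0 : (0:ℝ) ≤ (n:ℝ) := Nat.cast_nonneg n
    push_cast
    calc ((L:ℝ) * (r:ℝ) + 1) * (n:ℝ)
        ≤ (8 * (ν⁻¹ * Real.logb 2 n) + ν⁻¹ * Real.logb 2 n) * (n:ℝ) := by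
          apply mul_le_mul_of_nonneg_right _ hn0
          linarith
      _ = 9 * (n:ℝ) * ν⁻¹ * Real.logb 2 n := by ring
  · -- reliability
    intro B
    refine ⟨fun ω => B ∪ {a | TwoHopAux.failP n L r (e.symm ω) B a},
      fun ω => Set.subset_union_left, ?_, ?_⟩
    · -- spanner property
      intro ω a b hab ha hb
      simp only [Set.mem_union, Set.mem_setOf_eq] at ha
      push_neg at ha
      have ha2 := ha.2
      rw [TwoHopAux.failP] at ha2
      push_neg at ha2
      obtain ⟨x, hxS, hxa, hxB⟩ := ha2
      have hxn : x < n := lt_of_le_of_lt hxa a.2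
      have habv : a.1 < b.1 := hab
      refine ⟨⟨x, hxn⟩, ?_, ?_, ?_, ?_⟩
      · intro hc
        exact hxB ⟨⟨x, hxn⟩, hc, rfl⟩
      · show x ≤ a.1
        exact hxa
      · rcases eq_or_lt_of_le hxa with heq | hlt
        · left; exact Fin.ext heq
        · right
          show (⟨x, hxn⟩ : Fin n) ≠ a ∧ min x a.1 ∈ TwoHopAux.Sfin L r (e.symm ω)
          refine ⟨?_, ?_⟩
          · intro hca
            have := congrArg Fin.val hca
            simp only at this
            omega
          · rw [min_eq_left hxa]; exact hxS
      · show (⟨x, hxn⟩ : Fin n) ≠ b ∧ min x b.1 ∈ TwoHopAux.Sfin L r (e.symm ω)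
        have hxb : x < b.1 := lt_of_le_of_lt hxa habv
        refine ⟨?_, ?_⟩
        · intro hcb
          have := congrArg Fin.val hcb
          simp only at this
          omega
        · rw [min_eq_left hxb.le]; exact hxS
    · -- expectation bound
      simp only
      by_cases h0 : (0:ℕ) ∈ TwoHopAux.Bv n B
      case neg =>
        have hnofail : ∀ (g : TwoHopAux.Draw L r) (a : Fin n),
            ¬ TwoHopAux.failP n L r g B a := by
          intro g a h
          exact h0 (h 0 (TwoHopAux.zero_mem_Sfin L r g) (Nat.zero_le _))
        have hBp : ∀ ω : Fin N,
            B ∪ {a | TwoHopAux.failP n L r (e.symm ω) B a} = B := by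
          intro ω
          apply Set.union_eq_self_of_subset_right
          intro a ha
          exact absurd ha (hnofail _ _)
        have heqsum : ∑ ω : Fin N,
            (N:ℝ)⁻¹ * ((B ∪ {a | TwoHopAux.failP n L r (e.symm ω) B a}).ncard : ℝ)
            = ∑ ω : Fin N, (N:ℝ)⁻¹ * (B.ncard : ℝ) := by
          apply Finset.sum_congr rfl
          intro ω _
          rw [hBp ω]
        rw [heqsum, Finset.sum_const, Finset.card_univ, Fintype.card_fin, nsmul_eq_mul]
        have h1 : (N:ℝ) * ((N:ℝ)⁻¹ * (B.ncard:ℝ)) = (B.ncard : ℝ) := by field_simp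
        rw [h1]
        nlinarith [Nat.cast_nonneg (α := ℝ) B.ncard]
      case pos =>
        set m := B.ncard with hm
        have hm1 : 1 ≤ m := by
          obtain ⟨v, hv, -⟩ := h0
          exact (Set.ncard_pos (Set.toFinite _)).mpr ⟨v, hv⟩
        set Fs : TwoHopAux.Draw L r → Finset (Fin n) :=
          fun g => Finset.univ.filter
            (fun a => a ∉ B ∧ TwoHopAux.failP n L r g B a) with hFs
        have hsetcard : ∀ ω : Fin N,
            ((B ∪ {a | TwoHopAux.failP n L r (e.symm ω) B a}).ncard : ℝ)
              ≤ (m : ℝ) + ((Fs (e.symm ω)).card : ℝ) := by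
          intro ω
          have h1 : B ∪ {a | TwoHopAux.failP n L r (e.symm ω) B a}
              = B ∪ ({a | TwoHopAux.failP n L r (e.symm ω) B a} \ B) := by
            rw [Set.union_diff_self]
          have h2 : ({a | TwoHopAux.failP n L r (e.symm ω) B a} \ B)
              = (↑(Fs (e.symm ω)) : Set (Fin n)) := by
            ext a
            simp only [Set.mem_diff, Set.mem_setOf_eq, hFs, Finset.coe_filter,
              Finset.mem_univ, true_and]
            tauto
          rw [h1, h2]
          have h3 := Set.ncard_union_le B (↑(Fs (e.symm ω)) : Set (Fin n))
          rw [Set.ncard_coe_finset] at h3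
          rw [← hm] at h3
          exact_mod_cast h3
        set nonB := Finset.univ.filter (fun a : Fin n => a ∉ B) with hnonB
        have hswapN : ∑ g : TwoHopAux.Draw L r, (Fs g).card
            = ∑ a ∈ nonB, (Finset.univ.filter
                (fun g : TwoHopAux.Draw L r => TwoHopAux.failP n L r g B a)).card := by
          have e1 : ∀ g : TwoHopAux.Draw L r, (Fs g).card
              = ∑ a ∈ nonB, (if TwoHopAux.failP n L r g B a then 1 else 0) := by
            intro g
            have hff : nonB.filter (fun a => TwoHopAux.failP n L r g B a)
                = Finset.univ.filter
                  (fun a : Fin n => a ∉ B ∧ TwoHopAux.failP n L r g B a) := by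
              rw [hnonB, Finset.filter_filter]
            rw [hFs]
            simp only
            rw [← hff, Finset.card_filter]
          have e2 : ∀ a : Fin n,
              (Finset.univ.filter (fun g : TwoHopAux.Draw L r =>
                TwoHopAux.failP n L r g B a)).card
              = ∑ g : TwoHopAux.Draw L r,
                  (if TwoHopAux.failP n L r g B a then 1 else 0) := by
            intro a; rw [Finset.card_filter]
          simp only [e1, e2]
          rw [Finset.sum_comm]
        have hNR : (N:ℝ) = (((2^L : ℕ) : ℝ))^(L*r) := by
          rw [hNeq]
          push_cast
          ring
        have hcb : ∀ a ∈ nonB, ((Finset.univ.filter (fun g : TwoHopAux.Draw L r =>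
            TwoHopAux.failP n L r g B a)).card : ℝ)
            ≤ (N:ℝ) * ((m:ℝ)/((m:ℝ) + ((TwoHopAux.Tset n B a).card : ℝ)))^r := by
          intro a _
          have hc := TwoHopAux.count_bound n L r hnL B a h0
          rw [hNR]
          rw [← hm] at hc
          exact hc
        have hjmem : ∀ a ∈ nonB, a.1 ∈ TwoHopAux.Tset n B a := by
          intro a ha
          rw [hnonB, Finset.mem_filter] at ha
          have haB := ha.2
          have ha1 : 1 ≤ a.1 := by
            by_contra hcon
            have ha0 : a.1 = 0 := by omega
            obtain ⟨v, hv, hv0⟩ := h0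
            have hva : v = a := Fin.ext (by omega)
            exact haB (hva ▸ hv)
          rw [TwoHopAux.Tset, Finset.mem_filter, Finset.mem_range]
          refine ⟨a.2, ha1, le_refl _, ?_⟩
          rintro ⟨v, hv, hveq⟩
          exact haB ((Fin.ext hveq : v = a) ▸ hv)
        have hj1 : ∀ a ∈ nonB, 1 ≤ (TwoHopAux.Tset n B a).card := by
          intro a ha
          exact Finset.card_pos.mpr ⟨a.1, hjmem a ha⟩
        have hjmono : ∀ a ∈ nonB, ∀ b ∈ nonB, a < b →
            (TwoHopAux.Tset n B a).card < (TwoHopAux.Tset n B b).card := by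
          intro a ha b hb hab
          apply Finset.card_lt_card
          constructor
          · intro x hx
            rw [TwoHopAux.Tset, Finset.mem_filter, Finset.mem_range] at hx ⊢
            obtain ⟨hx0, hx1, hx2, hx3⟩ := hx
            have habv : a.1 < b.1 := hab
            exact ⟨hx0, hx1, by omega, hx3⟩
          · intro hEQ
            have hmem := hEQ (hjmem b hb)
            rw [TwoHopAux.Tset, Finset.mem_filter, Finset.mem_range] at hmem
            have h1' : b.1 ≤ a.1 := hmem.2.2.1
            have h2' : a.1 < b.1 := hab
            omega
        have hinj : ∀ a ∈ nonB, ∀ b ∈ nonB,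
            (TwoHopAux.Tset n B a).card - 1 = (TwoHopAux.Tset n B b).card - 1 → a = b := by
          intro a ha b hb heq
          rcases lt_trichotomy a b with h | h | h
          · have := hjmono a ha b hb h
            have h1 := hj1 a ha
            have h2 := hj1 b hb
            omega
          · exact h
          · have := hjmono b hb a ha h
            have h1 := hj1 a ha
            have h2 := hj1 b hb
            omega
        have hsum1 : ∑ a ∈ nonB, ((m:ℝ)/((m:ℝ) + ((TwoHopAux.Tset n B a).card:ℝ)))^r
            ≤ (m:ℝ)/((r:ℝ) - 1) := by
          have himg : ∑ a ∈ nonB, ((m:ℝ)/((m:ℝ) + ((TwoHopAux.Tset n B a).card:ℝ)))^r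
              = ∑ v ∈ nonB.image (fun a => (TwoHopAux.Tset n B a).card - 1),
                  ((m:ℝ)/((m:ℝ) + (v:ℝ) + 1))^r := by
            rw [Finset.sum_image hinj]
            apply Finset.sum_congr rfl
            intro a ha
            have h1 := hj1 a ha
            have hcst : (((TwoHopAux.Tset n B a).card - 1 : ℕ) : ℝ)
                = ((TwoHopAux.Tset n B a).card : ℝ) - 1 := by
              rw [Nat.cast_sub h1]
              norm_num
            rw [hcst]
            ring_nf
          rw [himg]
          have hsub : nonB.image (fun a => (TwoHopAux.Tset n B a).card - 1)
              ⊆ Finset.range n := by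
            intro v hv
            rw [Finset.mem_image] at hv
            obtain ⟨a, ha, rfl⟩ := hv
            rw [Finset.mem_range]
            have hcle : (TwoHopAux.Tset n B a).card ≤ n := by
              calc (TwoHopAux.Tset n B a).card ≤ (Finset.range n).card :=
                    Finset.card_le_card (by rw [TwoHopAux.Tset]; exact Finset.filter_subset _ _)
                _ = n := Finset.card_range n
            have := hj1 a ha
            omega
          calc ∑ v ∈ nonB.image (fun a => (TwoHopAux.Tset n B a).card - 1),
                ((m:ℝ)/((m:ℝ) + (v:ℝ) + 1))^r
              ≤ ∑ v ∈ Finset.range n, ((m:ℝ)/((m:ℝ) + (v:ℝ) + 1))^r := by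
                apply Finset.sum_le_sum_of_subset_of_nonneg hsub
                intro v _ _
                positivity
            _ ≤ (m:ℝ)/((r:ℝ)-1) := TwoHopAux.sum_telescope m r hm1 hr2 n
        have hνm : (m:ℝ)/((r:ℝ)-1) ≤ ν * (m:ℝ) := by
          have h2ν : (2:ℝ) ≤ 2/ν := by rw [le_div_iff₀ hν]; nlinarith
          have hrν : 1/ν + 1 ≤ (r:ℝ) := by
            have h3' : (3:ℝ)/ν = 1/ν + 2/ν := by ring
            linarith
          have hrpos : (0:ℝ) < (r:ℝ) - 1 := by
            have : (0:ℝ) < 1/ν := by positivity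
            linarith
          rw [div_le_iff₀ hrpos]
          have h1 : 1 ≤ ν * ((r:ℝ) - 1) := by
            have hinv : ν * (1/ν) = 1 := by field_simp
            calc (1:ℝ) = ν * (1/ν) := hinv.symm
              _ ≤ ν * ((r:ℝ)-1) := by
                  apply mul_le_mul_of_nonneg_left _ hν.le
                  linarith
          calc (m:ℝ) = (m:ℝ) * 1 := by ring
            _ ≤ (m:ℝ) * (ν * ((r:ℝ)-1)) := by
                apply mul_le_mul_of_nonneg_left h1 (Nat.cast_nonneg m)
            _ = ν * (m:ℝ) * ((r:ℝ)-1) := by ring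
        have hSig : ∑ ω : Fin N, ((Fs (e.symm ω)).card : ℝ) ≤ (N:ℝ) * (ν * (m:ℝ)) := by
          rw [Equiv.sum_comp e.symm (fun g => ((Fs g).card : ℝ))]
          have hcastswap : ∑ g : TwoHopAux.Draw L r, ((Fs g).card : ℝ)
              = ∑ a ∈ nonB, ((Finset.univ.filter (fun g : TwoHopAux.Draw L r =>
                  TwoHopAux.failP n L r g B a)).card : ℝ) := by
            exact_mod_cast hswapN
          rw [hcastswap]
          calc ∑ a ∈ nonB, ((Finset.univ.filter (fun g : TwoHopAux.Draw L r =>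
                  TwoHopAux.failP n L r g B a)).card : ℝ)
              ≤ ∑ a ∈ nonB, (N:ℝ) * ((m:ℝ)/((m:ℝ) + ((TwoHopAux.Tset n B a).card:ℝ)))^r :=
                Finset.sum_le_sum hcb
            _ = (N:ℝ) * ∑ a ∈ nonB, ((m:ℝ)/((m:ℝ) + ((TwoHopAux.Tset n B a).card:ℝ)))^r := by
                rw [Finset.mul_sum]
            _ ≤ (N:ℝ) * ((m:ℝ)/((r:ℝ)-1)) := by
                apply mul_le_mul_of_nonneg_left hsum1 (by positivity)
            _ ≤ (N:ℝ) * (ν * (m:ℝ)) := by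
                apply mul_le_mul_of_nonneg_left hνm (by positivity)
        calc ∑ ω : Fin N,
              (N:ℝ)⁻¹ * ((B ∪ {a | TwoHopAux.failP n L r (e.symm ω) B a}).ncard : ℝ)
            ≤ ∑ ω : Fin N, (N:ℝ)⁻¹ * ((m:ℝ) + ((Fs (e.symm ω)).card : ℝ)) := by
              apply Finset.sum_le_sum
              intro ω _
              exact mul_le_mul_of_nonneg_left (hsetcard ω) (by positivity)
          _ = (m:ℝ) + (N:ℝ)⁻¹ * ∑ ω : Fin N, ((Fs (e.symm ω)).card : ℝ) := by
              rw [← Finset.mul_sum, Finset.sum_add_distrib, Finset.sum_const,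
                Finset.card_univ, Fintype.card_fin, nsmul_eq_mul]
              rw [mul_add, ← mul_assoc, inv_mul_cancel₀ hN0, one_mul]
          _ ≤ (m:ℝ) + (N:ℝ)⁻¹ * ((N:ℝ) * (ν * (m:ℝ))) := by
              apply add_le_add_right
              apply mul_le_mul_of_nonneg_left hSig (by positivity)
          _ = (1 + ν) * (m:ℝ) := by
              rw [← mul_assoc, inv_mul_cancel₀ hN0, one_mul]
              ring
end

section
/- Let G = (V,E,w) be a connected weighted graph on n ≥ 2 vertices with positive edge weights, and suppose G is hereditarily k-separable: for every subset V' ⊆ V there is a set K ⊆ V' with |K| ≤ k such that every connected component of the induced subgraph G[V' ∖ K] has at most |V'|/2 vertices. Then the shortest-path metric d_G of G admits a (k·(⌊log₂ n⌋ + 1), 1)-left-sided LSO. -/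
open scoped BigOperators

/-- `l` is a walk from `x` to `y` w.r.t. the adjacency relation `Adj`, all of
whose vertices lie in `S`. -/
def IsWalkIn {X : Type*} (Adj : X → X → Prop) (S : Set X) (l : List X) (x y : X) : Prop :=
  l.Chain' Adj ∧ l.head? = some x ∧ l.getLast? = some y ∧ ∀ z ∈ l, z ∈ S

/-- The total weight of the walk `l` w.r.t. the edge-weight function `w`. -/
def walkWeight {X : Type*} (w : X → X → ℝ) (l : List X) : ℝ :=
  ((l.zip l.tail).map fun p => w p.1 p.2).sum

section WalkAux
variable {X : Type*} {Adj : X → X → Prop} {S T : Set X} {w : X → X → ℝ}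

@[simp] lemma walkWeight_nil : walkWeight w ([] : List X) = 0 := rfl

@[simp] lemma walkWeight_single (x : X) : walkWeight w [x] = 0 := rfl

@[simp] lemma walkWeight_cons_cons (x y : X) (t : List X) :
    walkWeight w (x :: y :: t) = w x y + walkWeight w (y :: t) := by
  simp [walkWeight]

lemma walkWeight_split (w : X → X → ℝ) (a : List X) (v : X) (b : List X) :
    walkWeight w (a ++ v :: b) = walkWeight w (a ++ [v]) + walkWeight w (v :: b) := by
  induction a with
  | nil => simp
  | cons x a ih =>
    cases a with
    | nil => simp
    | cons y t =>
      have h1 : ((x :: y :: t) ++ v :: b) = x :: y :: (t ++ v :: b) := rfl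
      have h2 : ((x :: y :: t) ++ [v]) = x :: y :: (t ++ [v]) := rfl
      rw [h1, h2]
      have h3 : (y :: t) ++ v :: b = y :: (t ++ v :: b) := rfl
      have h4 : (y :: t) ++ [v] = y :: (t ++ [v]) := rfl
      rw [walkWeight_cons_cons, walkWeight_cons_cons, ← h3, ← h4, ih]
      ring

lemma walkWeight_nonneg (hpos : ∀ u v, Adj u v → 0 < w u v) :
    ∀ l : List X, l.Chain' Adj → 0 ≤ walkWeight w l := by
  intro l hl
  induction l with
  | nil => simp
  | cons x t ih =>
    cases t with
    | nil => simp
    | cons y t' =>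
      rw [List.Chain', List.isChain_cons_cons] at hl
      have h1 := hpos _ _ hl.1
      have h2 := ih hl.2
      rw [walkWeight_cons_cons]; linarith

lemma walkWeight_reverse (hsym : ∀ u v : X, w u v = w v u) :
    ∀ l : List X, walkWeight w l.reverse = walkWeight w l := by
  intro l
  induction l with
  | nil => simp
  | cons x t ih =>
    cases t with
    | nil => simp
    | cons y t' =>
      have h1 : (x :: y :: t').reverse = t'.reverse ++ y :: [x] := by simp
      rw [h1, walkWeight_split w t'.reverse y [x]]
      have h2 : t'.reverse ++ [y] = (y :: t').reverse := by simp
      rw [h2, ih, walkWeight_cons_cons]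
      simp [hsym y x]
      ring
end WalkAux

section WalkAux2
variable {X : Type*} {Adj : X → X → Prop} {S T : Set X} {w : X → X → ℝ}

lemma isWalkIn_single {x : X} (hx : x ∈ S) : IsWalkIn Adj S [x] x x :=
  ⟨List.isChain_singleton x, rfl, rfl, by simp [hx]⟩

lemma IsWalkIn.mono {l : List X} {x y : X} (hST : S ⊆ T) (h : IsWalkIn Adj S l x y) :
    IsWalkIn Adj T l x y :=
  ⟨h.1, h.2.1, h.2.2.1, fun z hz => hST (h.2.2.2 z hz)⟩

lemma IsWalkIn.reverse {l : List X} {x y : X} (hA : ∀ u v, Adj u v → Adj v u)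
    (h : IsWalkIn Adj S l x y) : IsWalkIn Adj S l.reverse y x := by
  obtain ⟨hc, hh, hl, hs⟩ := h
  refine ⟨?_, ?_, ?_, ?_⟩
  · rw [List.Chain', List.isChain_reverse]
    exact List.IsChain.imp (fun a b hab => hA a b hab) hc
  · rw [List.head?_reverse]; exact hl
  · rw [List.getLast?_reverse]; exact hh
  · intro z hz; exact hs z (by simpa using hz)

lemma IsWalkIn.append (w : X → X → ℝ) {l₁ l₂ : List X} {x y z : X}
    (h₁ : IsWalkIn Adj S l₁ x y) (h₂ : IsWalkIn Adj S l₂ y z) :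
    ∃ l, IsWalkIn Adj S l x z ∧ walkWeight w l = walkWeight w l₁ + walkWeight w l₂ := by
  obtain ⟨hc1, hh1, hl1, hs1⟩ := h₁
  obtain ⟨hc2, hh2, hl2, hs2⟩ := h₂
  have hne : l₁ ≠ [] := by intro h; simp [h] at hl1
  obtain ⟨a, ha⟩ : ∃ a, l₁ = a ++ [y] := by
    refine ⟨l₁.dropLast, ?_⟩
    have h1 := List.dropLast_append_getLast hne
    have h2 : l₁.getLast hne = y := by
      have := List.getLast?_eq_getLast hne
      rw [this] at hl1
      exact Option.some_injective _ hl1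
    rw [← h2]; exact h1.symm
  obtain ⟨t, ht⟩ : ∃ t, l₂ = y :: t := by
    cases l₂ with
    | nil => simp at hh2
    | cons c t =>
      refine ⟨t, ?_⟩
      simp at hh2
      rw [hh2]
  subst ha ht
  refine ⟨a ++ y :: t, ⟨?_, ?_, ?_, ?_⟩, ?_⟩
  · rw [List.Chain', List.isChain_split]
    exact ⟨hc1, hc2⟩
  · rw [List.head?_append] at hh1 ⊢
    simpa using hh1
  · rw [List.getLast?_append] at hl1 ⊢
    rw [show ((y :: t).getLast?) = some z from hl2]
    rfl
  · intro u hu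
    rcases List.mem_append.mp hu with h | h
    · exact hs1 u (List.mem_append.mpr (Or.inl h))
    · exact hs2 u h
  · exact walkWeight_split w a y t

lemma IsWalkIn.split (w : X → X → ℝ) {l : List X} {x y v : X}
    (h : IsWalkIn Adj S l x y) (hv : v ∈ l) :
    ∃ l₁ l₂, IsWalkIn Adj S l₁ x v ∧ IsWalkIn Adj S l₂ v y ∧
      walkWeight w l₁ + walkWeight w l₂ = walkWeight w l := by
  obtain ⟨a, b, rfl⟩ := List.append_of_mem hv
  obtain ⟨hc, hh, hl, hs⟩ := h
  have hc' := List.isChain_split.mp hc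
  have hgl : ((v :: b).getLast?) = some y := by
    rw [List.getLast?_append] at hl
    have : (v :: b).getLast?.isSome := by
      rw [List.getLast?_isSome]; simp
    obtain ⟨c, hcc⟩ := Option.isSome_iff_exists.mp this
    rw [hcc] at hl ⊢
    simpa using hl
  refine ⟨a ++ [v], v :: b, ⟨hc'.1, ?_, ?_, ?_⟩, ⟨hc'.2, rfl, hgl, ?_⟩, ?_⟩
  · rw [List.head?_append] at hh ⊢
    simpa using hh
  · rw [List.getLast?_append]; rfl
  · intro z hz
    rcases List.mem_append.mp hz with hzz | hzz
    · exact hs z (List.mem_append.mpr (Or.inl hzz))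
    · simp at hzz
      subst hzz
      exact hs z hv
  · intro z hz
    exact hs z (List.mem_append.mpr (Or.inr hz))
  · exact (walkWeight_split w a v b).symm

end WalkAux2

open scoped Classical in
/-- The cluster of `x` at depth `j` in the recursive separator decomposition. -/
noncomputable def clusterSeq {X : Type*} (Adj : X → X → Prop) (sep : Set X → Set X) :
    ℕ → X → Set X
  | 0, _ => Set.univ
  | (j+1), x =>
    if x ∈ clusterSeq Adj sep j x \ sep (clusterSeq Adj sep j x) then
      {v | v ∈ clusterSeq Adj sep j x \ sep (clusterSeq Adj sep j x) ∧
        ∃ l, IsWalkIn Adj (clusterSeq Adj sep j x \ sep (clusterSeq Adj sep j x)) l x v}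
    else ∅

section ClusterAux
variable {X : Type*} {Adj : X → X → Prop} {sep : Set X → Set X}

@[simp] lemma clusterSeq_zero (x : X) : clusterSeq Adj sep 0 x = Set.univ := rfl

open scoped Classical in
lemma clusterSeq_succ (j : ℕ) (x : X) :
    clusterSeq Adj sep (j+1) x =
    if x ∈ clusterSeq Adj sep j x \ sep (clusterSeq Adj sep j x) then
      {v | v ∈ clusterSeq Adj sep j x \ sep (clusterSeq Adj sep j x) ∧
        ∃ l, IsWalkIn Adj (clusterSeq Adj sep j x \ sep (clusterSeq Adj sep j x)) l x v}
    else ∅ := by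
  rw [clusterSeq]

lemma clusterSeq_self (j : ℕ) (x : X) :
    clusterSeq Adj sep j x = ∅ ∨ x ∈ clusterSeq Adj sep j x := by
  cases j with
  | zero => right; simp
  | succ j =>
    rw [clusterSeq_succ]
    split_ifs with h
    · right
      exact ⟨h, [x], isWalkIn_single h⟩
    · left; rfl

lemma clusterSeq_coherent (hA : ∀ u v, Adj u v → Adj v u) :
    ∀ (j : ℕ) (x v : X), x ∈ clusterSeq Adj sep j v →
      clusterSeq Adj sep j x = clusterSeq Adj sep j v := by
  intro j
  induction j with
  | zero => intro x v _; rfl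
  | succ j ih =>
    intro x v hx
    rw [clusterSeq_succ] at hx
    by_cases hv : v ∈ clusterSeq Adj sep j v \ sep (clusterSeq Adj sep j v)
    · rw [if_pos hv] at hx
      obtain ⟨hx1, l, hl⟩ := hx
      have hDx : clusterSeq Adj sep j x = clusterSeq Adj sep j v := ih x v hx1.1
      have hx' : x ∈ clusterSeq Adj sep j x \ sep (clusterSeq Adj sep j x) := by
        rw [hDx]; exact hx1
      rw [clusterSeq_succ, clusterSeq_succ, if_pos hx', if_pos hv, hDx]
      ext z
      constructor
      · rintro ⟨hz1, l', hl'⟩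
        refine ⟨hz1, ?_⟩
        obtain ⟨l'', hl'', _⟩ := IsWalkIn.append (fun _ _ => (0:ℝ)) hl hl'
        exact ⟨l'', hl''⟩
      · rintro ⟨hz1, l', hl'⟩
        refine ⟨hz1, ?_⟩
        obtain ⟨l'', hl'', _⟩ := IsWalkIn.append (fun _ _ => (0:ℝ)) (hl.reverse hA) hl'
        exact ⟨l'', hl''⟩
    · rw [if_neg hv] at hx
      exact absurd hx (Set.notMem_empty x)

end ClusterAux

/-- `(τ,ρ)`-left-sided LSO for `X` with distance function `d`: a collection of
partial orderings (each a linear ordering, via an injective real-valued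
function, of a subset `Dom i` of `X`) such that every point belongs to at most
`τ` of the domains, and every pair `x,y` has an ordering containing both with:
for all `x' ⪯ x` and `y' ⪯ y` in the domain, `d(x',y') ≤ ρ·d(x,y)`. -/
def IsLeftLSO {X : Type*} (d : X → X → ℝ) (τ ρ : ℝ) : Prop :=
  ∃ (s : ℕ) (Dom : Fin s → Set X) (σ : Fin s → X → ℝ),
    (∀ i, Set.InjOn (σ i) (Dom i)) ∧
    (∀ x : X, (({i | x ∈ Dom i} : Set (Fin s)).ncard : ℝ) ≤ τ) ∧
    ∀ x y : X, ∃ i, x ∈ Dom i ∧ y ∈ Dom i ∧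
      ∀ x' ∈ Dom i, ∀ y' ∈ Dom i, σ i x' ≤ σ i x → σ i y' ≤ σ i y →
        d x' y' ≤ ρ * d x y

/-- Let `G` be a connected weighted graph on `n ≥ 2` vertices with positive
symmetric edge weights, whose shortest-path metric is `dG` (characterized as
the minimum total weight of a walk). Suppose `G` is hereditarily `k`-separable:
every vertex subset `V'` has a separator `K ⊆ V'` of size at most `k` such that
every connected component of the subgraph induced on `V' \ K` has at most
`|V'|/2` vertices. Then `dG` admits a `(k·(⌊log₂ n⌋ + 1), 1)`-left-sided LSO. -/
theorem separable_graph_left_LSO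
    (V : Type) [Fintype V] (G : SimpleGraph V) (w : V → V → ℝ) (k : ℕ)
    (hn : 2 ≤ Fintype.card V)
    (hconn : G.Connected)
    (hwsym : ∀ u v : V, w u v = w v u)
    (hwpos : ∀ u v : V, G.Adj u v → 0 < w u v)
    (dG : V → V → ℝ)
    (hdG : ∀ u v : V,
      (∃ l : List V, IsWalkIn G.Adj Set.univ l u v ∧ walkWeight w l = dG u v) ∧
      ∀ l : List V, IsWalkIn G.Adj Set.univ l u v → dG u v ≤ walkWeight w l)
    (hsep : ∀ V' : Set V, ∃ K : Set V, K ⊆ V' ∧ (K.ncard : ℝ) ≤ (k : ℝ) ∧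
      ∀ u ∈ V' \ K,
        (({v | v ∈ V' \ K ∧ ∃ l : List V, IsWalkIn G.Adj (V' \ K) l u v} : Set V).ncard : ℝ)
          ≤ (V'.ncard : ℝ) / 2) :
    IsLeftLSO dG ((k : ℝ) * ((Nat.log 2 (Fintype.card V) : ℝ) + 1)) 1 := by
  classical
  set n := Fintype.card V with hn'
  set L := Nat.log 2 n + 1 with hL
  set sep : Set V → Set V := fun V' => (hsep V').choose with hsepdef
  have hK2 : ∀ V' : Set V, ((sep V').ncard : ℝ) ≤ (k : ℝ) := fun V' => (hsep V').choose_spec.2.1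
  have hK3 : ∀ V' : Set V, ∀ u ∈ V' \ sep V',
      (({v | v ∈ V' \ sep V' ∧ ∃ l : List V, IsWalkIn G.Adj (V' \ sep V') l u v} : Set V).ncard : ℝ)
        ≤ (V'.ncard : ℝ) / 2 := fun V' => (hsep V').choose_spec.2.2
  set C : ℕ → V → Set V := clusterSeq G.Adj sep with hCdef
  have hA : ∀ u v : V, G.Adj u v → G.Adj v u := fun u v h => h.symm
  -- metric facts
  have dG_symm : ∀ u v, dG u v = dG v u := by
    have h : ∀ u v, dG u v ≤ dG v u := by
      intro u v
      obtain ⟨l, hl, hwt⟩ := (hdG v u).1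
      have h2 := (hdG u v).2 l.reverse (hl.reverse hA)
      rw [walkWeight_reverse hwsym] at h2
      linarith
    exact fun u v => le_antisymm (h u v) (h v u)
  have dG_tri : ∀ u v z, dG u z ≤ dG u v + dG v z := by
    intro u v z
    obtain ⟨l₁, h1, e1⟩ := (hdG u v).1
    obtain ⟨l₂, h2, e2⟩ := (hdG v z).1
    obtain ⟨l, hl, he⟩ := IsWalkIn.append w h1 h2
    have h3 := (hdG u z).2 l hl
    rw [he] at h3
    linarith
  -- cluster size bounds
  have hsize : ∀ (j : ℕ) (x : V), ((C j x).ncard : ℝ) ≤ (n : ℝ) / 2 ^ j := by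
    intro j
    induction j with
    | zero =>
      intro x
      simp [hCdef, Set.ncard_univ, Nat.card_eq_fintype_card, hn']
    | succ j ih =>
      intro x
      rw [hCdef, clusterSeq_succ]
      split_ifs with h
      · have h3 := hK3 (clusterSeq G.Adj sep j x) x h
        have h4 := ih x
        rw [hCdef] at h4
        have h5 : (0:ℝ) < 2 ^ j := by positivity
        calc (({v | v ∈ clusterSeq G.Adj sep j x \ sep (clusterSeq G.Adj sep j x) ∧
            ∃ l, IsWalkIn G.Adj (clusterSeq G.Adj sep j x \ sep (clusterSeq G.Adj sep j x)) l x v} : Set V).ncard : ℝ)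
            ≤ ((clusterSeq G.Adj sep j x).ncard : ℝ) / 2 := h3
          _ ≤ ((n : ℝ) / 2 ^ j) / 2 := by linarith
          _ = (n : ℝ) / 2 ^ (j+1) := by
              rw [pow_succ]; ring
      · simp; positivity
  have hCL : ∀ x : V, C L x = ∅ := by
    intro x
    rcases clusterSeq_self (Adj := G.Adj) (sep := sep) L x with h | h
    · exact h
    · exfalso
      have h1 : 0 < (C L x).ncard := (Set.ncard_pos (Set.toFinite _)).mpr ⟨x, h⟩
      have h2 : (1:ℝ) ≤ ((C L x).ncard : ℝ) := by exact_mod_cast h1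
      have h3 := hsize L x
      have h4 : (n:ℝ) < 2 ^ L := by
        have := Nat.lt_pow_succ_log_self (by norm_num : 1 < 2) n
        have h5 : (n:ℝ) < ((2 ^ (Nat.log 2 n).succ : ℕ) : ℝ) := by exact_mod_cast this
        rw [hL]
        push_cast at h5 ⊢
        convert h5 using 2
      have h6 : (0:ℝ) < 2 ^ L := by positivity
      have h7 := (le_div_iff₀ h6).mp (h2.trans h3)
      rw [one_mul] at h7
      linarith
  -- perturbation for injectivity
  obtain ⟨δ, hδpos, hδle⟩ : ∃ δ : ℝ, 0 < δ ∧
      ∀ v a b : V, dG v a < dG v b → δ ≤ dG v b - dG v a := by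
    set F : Finset ℝ := (Finset.univ.image (fun t : V × V × V => dG t.1 t.2.2 - dG t.1 t.2.1)).filter
      (fun r => 0 < r) with hF
    by_cases h : F.Nonempty
    · refine ⟨F.min' h, ?_, ?_⟩
      · have := F.min'_mem h
        exact (Finset.mem_filter.mp this).2
      · intro v a b hab
        refine F.min'_le _ ?_
        refine Finset.mem_filter.mpr ⟨?_, by linarith⟩
        exact Finset.mem_image.mpr ⟨(v, a, b), Finset.mem_univ _, rfl⟩
    · refine ⟨1, one_pos, ?_⟩
      intro v a b hab
      exfalso
      refine h ⟨dG v b - dG v a, ?_⟩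
      refine Finset.mem_filter.mpr ⟨?_, by linarith⟩
      exact Finset.mem_image.mpr ⟨(v, a, b), Finset.mem_univ _, rfl⟩
  set e : V → ℝ := fun x => ((Fintype.equivFin V x : ℕ) : ℝ) / n with he
  have he0 : ∀ x, 0 ≤ e x := by
    intro x; rw [he]; positivity
  have he1 : ∀ x, e x < 1 := by
    intro x
    rw [he]
    have hnp : (0:ℝ) < n := by positivity
    rw [div_lt_one hnp]
    exact_mod_cast (Fintype.equivFin V x).2
  have heinj : Function.Injective e := by
    intro a b hab
    rw [he] at hab
    have hnp : (0:ℝ) < n := by positivity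
    field_simp at hab
    have h2 : (Fintype.equivFin V a : ℕ) = (Fintype.equivFin V b : ℕ) := by exact_mod_cast hab
    exact (Fintype.equivFin V).injective (Fin.val_injective h2)
  set σ' : V → V → ℝ := fun v x => dG v x + δ * e x with hσ'
  have hσmono : ∀ v a b : V, σ' v a ≤ σ' v b → dG v a ≤ dG v b := by
    intro v a b hab
    by_contra hc
    push_neg at hc
    have h1 := hδle v b a hc
    have h2 : e a - e b > -1 := by
      have := he0 a; have := he1 b; linarith
    have h3 : δ * (e a - e b) > δ * (-1) := by
      exact (mul_lt_mul_iff_right₀ hδpos).mpr (by linarith)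
    rw [hσ'] at hab
    simp only at hab
    nlinarith
  have hσinj : ∀ v : V, Function.Injective (σ' v) := by
    intro v a b hab
    have h1 : dG v a ≤ dG v b := hσmono v a b (le_of_eq hab)
    have h2 : dG v b ≤ dG v a := hσmono v b a (le_of_eq hab.symm)
    have h3 : dG v a = dG v b := le_antisymm h1 h2
    rw [hσ'] at hab
    simp only at hab
    have h4 : δ * e a = δ * e b := by linarith
    have h5 : e a = e b := by
      exact mul_left_cancel₀ (ne_of_gt hδpos) h4
    exact heinj h5
  -- the family of orderings
  set D : Fin L × V → Set V :=
    fun p => if p.2 ∈ sep (C (p.1:ℕ) p.2) then C (p.1:ℕ) p.2 else ∅ with hD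
  have hcoh : ∀ (j : ℕ) (x v : V), x ∈ C j v → C j x = C j v :=
    fun j x v h => clusterSeq_coherent hA j x v h
  -- key covering claim
  have key : ∀ m : ℕ, ∀ j : ℕ, j + m = L → ∀ x y : V, ∀ l : List V,
      IsWalkIn G.Adj Set.univ l x y → walkWeight w l = dG x y → (∀ z ∈ l, z ∈ C j x) →
      ∃ p : Fin L × V, x ∈ D p ∧ y ∈ D p ∧ ∀ x' ∈ D p, ∀ y' ∈ D p,
        σ' p.2 x' ≤ σ' p.2 x → σ' p.2 y' ≤ σ' p.2 y → dG x' y' ≤ 1 * dG x y := by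
    intro m
    induction m with
    | zero =>
      intro j hj x y l hwalk hwt hmem
      exfalso
      have hx : x ∈ l := List.mem_of_mem_head? (Option.mem_def.mpr hwalk.2.1)
      have hmm := hmem x hx
      have hjL : j = L := by omega
      rw [hjL, hCL x] at hmm
      exact hmm
    | succ m ih =>
      intro j hj x y l hwalk hwt hmem
      have hx : x ∈ l := List.mem_of_mem_head? (Option.mem_def.mpr hwalk.2.1)
      have hy : y ∈ l := List.mem_of_mem_getLast? (Option.mem_def.mpr hwalk.2.2.1)
      by_cases hv : ∃ v ∈ l, v ∈ sep (C j x)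
      · obtain ⟨v, hvl, hvK⟩ := hv
        have hjL : j < L := by omega
        have hCv : C j v = C j x := hcoh j v x (hmem v hvl)
        have hDp : D (⟨j, hjL⟩, v) = C j x := by
          simp only [hD]
          rw [if_pos]
          · exact hCv
          · show v ∈ sep (C j v)
            rw [hCv]; exact hvK
        refine ⟨(⟨j, hjL⟩, v), ?_, ?_, ?_⟩
        · rw [hDp]; exact hmem x hx
        · rw [hDp]; exact hmem y hy
        · intro x' hx' y' hy' h1 h2
          have hdx : dG v x' ≤ dG v x := hσmono v x' x h1
          have hdy : dG v y' ≤ dG v y := hσmono v y' y h2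
          obtain ⟨l₁, l₂, hw1, hw2, hsum⟩ := IsWalkIn.split w hwalk hvl
          have h₁ : dG x v ≤ walkWeight w l₁ := (hdG x v).2 l₁ hw1
          have h₂ : dG v y ≤ walkWeight w l₂ := (hdG v y).2 l₂ hw2
          have tri := dG_tri x' v y'
          have s1 : dG x' v = dG v x' := dG_symm x' v
          have s2 : dG x v = dG v x := dG_symm x v
          rw [one_mul]
          linarith
      · push_neg at hv
        have hxmem : x ∈ C j x \ sep (C j x) := ⟨hmem x hx, hv x hx⟩
        have hwalk' : IsWalkIn G.Adj (C j x \ sep (C j x)) l x y :=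
          ⟨hwalk.1, hwalk.2.1, hwalk.2.2.1, fun z hz => ⟨hmem z hz, hv z hz⟩⟩
        have hsub : ∀ z ∈ l, z ∈ C (j+1) x := by
          intro z hz
          obtain ⟨l₁, l₂, hw1, _, _⟩ := IsWalkIn.split w hwalk' hz
          show z ∈ clusterSeq G.Adj sep (j+1) x
          rw [clusterSeq_succ, if_pos hxmem]
          exact ⟨⟨hmem z hz, hv z hz⟩, l₁, hw1⟩
        exact ih (j+1) (by omega) x y l hwalk hwt hsub
  -- assemble the LSO
  set eqv : Fin (Fintype.card (Fin L × V)) ≃ (Fin L × V) :=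
    (Fintype.equivFin (Fin L × V)).symm with heqv
  refine ⟨Fintype.card (Fin L × V), fun i => D (eqv i), fun i => σ' (eqv i).2, ?_, ?_, ?_⟩
  · intro i
    exact (hσinj (eqv i).2).injOn
  · intro x
    have hpre : {i | x ∈ D (eqv i)} = ⇑eqv ⁻¹' {p | x ∈ D p} := rfl
    rw [hpre, ← Equiv.image_symm_eq_preimage,
      Set.ncard_image_of_injective _ eqv.symm.injective]
    have hsub : {p : Fin L × V | x ∈ D p} ⊆ {p : Fin L × V | p.2 ∈ sep (C (p.1:ℕ) x)} := by
      intro p hp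
      simp only [Set.mem_setOf_eq, hD] at hp ⊢
      split_ifs at hp with h
      · have hcc := hcoh (p.1:ℕ) x p.2 hp
        rw [hcc]; exact h
      · exact absurd hp (Set.notMem_empty x)
    have h1 : ({p : Fin L × V | x ∈ D p}).ncard
        ≤ ({p : Fin L × V | p.2 ∈ sep (C (p.1:ℕ) x)}).ncard :=
      Set.ncard_le_ncard hsub (Set.toFinite _)
    have h2 : ({p : Fin L × V | p.2 ∈ sep (C (p.1:ℕ) x)} : Set (Fin L × V)) =
        ↑(Finset.univ.filter fun p : Fin L × V => p.2 ∈ sep (C (p.1:ℕ) x)) := by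
      ext p; simp
    have h4 : ∀ j : Fin L, (sep (C (j:ℕ) x)).ncard
        = ∑ v : V, if (v ∈ sep (C (j:ℕ) x)) then 1 else 0 := by
      intro j
      have hset : (↑(Finset.univ.filter fun v : V => v ∈ sep (C (j:ℕ) x)) : Set V)
          = sep (C (j:ℕ) x) := by
        ext v; simp
      rw [← hset, Set.ncard_coe_finset, Finset.card_filter]
      simp
    have hkk : ∀ S : Set V, (sep S).ncard ≤ k := by
      intro S; exact_mod_cast hK2 S
    have h5 : (Finset.univ.filter fun p : Fin L × V => p.2 ∈ sep (C (p.1:ℕ) x)).card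
        ≤ L * k := by
      rw [Finset.card_filter, Fintype.sum_prod_type]
      calc (∑ j : Fin L, ∑ v : V, if (v ∈ sep (C (j:ℕ) x)) then 1 else 0)
          = ∑ j : Fin L, (sep (C (j:ℕ) x)).ncard :=
            Finset.sum_congr rfl (fun j _ => (h4 j).symm)
        _ ≤ ∑ _j : Fin L, k := Finset.sum_le_sum (fun j _ => hkk _)
        _ = L * k := by simp [Finset.sum_const, mul_comm]
    have h6 : ({p : Fin L × V | x ∈ D p}).ncard ≤ L * k := by
      rw [h2, Set.ncard_coe_finset] at h1
      exact h1.trans h5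
    calc (({p : Fin L × V | x ∈ D p}).ncard : ℝ) ≤ ((L * k : ℕ) : ℝ) := by exact_mod_cast h6
      _ = (k : ℝ) * ((Nat.log 2 n : ℝ) + 1) := by
          rw [hL]; push_cast; ring
  · intro x y
    obtain ⟨l, hl, hwt⟩ := (hdG x y).1
    have hmem0 : ∀ z ∈ l, z ∈ C 0 x := fun z _ => Set.mem_univ z
    obtain ⟨p, h1, h2, h3⟩ := key L 0 (by omega) x y l hl hwt hmem0
    refine ⟨eqv.symm p, ?_, ?_, ?_⟩
    · simpa using h1
    · simpa using h2
    · intro x' hx' y' hy' hh1 hh2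
      simp only [Equiv.apply_symm_apply] at hx' hy' hh1 hh2
      exact h3 x' hx' y' hy' hh1 hh2
end

section
/- Let n ≥ 3, ν ∈ (0,1), and 1 ≤ t < 2. Let (X,d) be the star metric on the n-point set X = {r, v_1, …, v_{n−1}}, where d(r,v_i) = 1 for all i and d(v_i,v_j) = 2 for all i ≠ j. Then every oblivious ν-reliable t-spanner of (X,d) has at least (n−1)(n−2)/2 edges. -/
open scoped BigOperators

/-- An oblivious `ν`-reliable `t`-spanner of `(X, dist)` with at most `m`
edges: a (finitely supported) probability distribution over weighted graphs on
`X` (weights dominating `dist`), each with at most `m` edges, such that for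
every attack set `B ⊆ X` there are faulty extensions `Bp ω ⊇ B` with
`E[|Bp|] ≤ (1+ν)·|B|`, and for every `x,y ∉ Bp ω` there is a walk from `x` to
`y` in the graph avoiding `B` of total weight at most `t·dist x y`. -/
def IsObliviousReliableSpanner (X : Type*) [MetricSpace X] (ν t m : ℝ) : Prop :=
  ∃ (N : ℕ) (p : Fin N → ℝ) (G : Fin N → SimpleGraph X) (w : Fin N → X → X → ℝ),
    (∀ ω, 0 ≤ p ω) ∧ (∑ ω, p ω = 1) ∧
    (∀ (ω : Fin N) (x y : X), w ω x y = w ω y x) ∧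
    (∀ (ω : Fin N) (x y : X), (G ω).Adj x y → dist x y ≤ w ω x y) ∧
    (∀ ω : Fin N, ((G ω).edgeSet.ncard : ℝ) ≤ m) ∧
    ∀ B : Set X, ∃ Bp : Fin N → Set X,
      (∀ ω, B ⊆ Bp ω) ∧
      (∀ (ω : Fin N) (x y : X), x ∉ Bp ω → y ∉ Bp ω →
        ∃ l : List X, IsWalkIn (G ω).Adj Bᶜ l x y ∧
          walkWeight (w ω) l ≤ t * dist x y) ∧
      (∑ ω, p ω * ((Bp ω).ncard : ℝ)) ≤ (1 + ν) * (B.ncard : ℝ)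

lemma walk_lb {X : Type*} (w : X → X → ℝ) (Adj : X → X → Prop) (S : Set X)
    (hval : ∀ a b, Adj a b → a ∈ S → b ∈ S → 2 ≤ w a b) :
    ∀ l : List X, l.Chain' Adj → (∀ z ∈ l, z ∈ S) →
      2 * ((l.length - 1 : ℕ) : ℝ) ≤ walkWeight w l := by
  intro l
  induction l with
  | nil => simp [walkWeight]
  | cons a t ih =>
    cases t with
    | nil => simp [walkWeight]
    | cons b t' =>
      intro hc hmem
      rw [List.Chain', List.isChain_cons_cons] at hc
      have h1 := hval a b hc.1 (hmem a (by simp)) (hmem b (by simp))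
      have h2 := ih hc.2 (fun z hz => hmem z (List.mem_cons_of_mem _ hz))
      have hw : walkWeight w (a :: b :: t') = w a b + walkWeight w (b :: t') := by
        simp [walkWeight]
      have hl : ((a :: b :: t').length - 1 : ℕ) = ((b :: t').length - 1 : ℕ) + 1 := by
        simp
      rw [hw, hl]
      push_cast
      linarith

/-- Let `(X,d)` be the star metric on `n ≥ 3` points: a center `r` with
`d(r,v) = 1` for every other point `v`, and `d(u,v) = 2` for distinct points
`u,v ≠ r`. Then every oblivious `ν`-reliable `t`-spanner of `(X,d)` with
`1 ≤ t < 2` and `ν ∈ (0,1)` has at least `(n-1)(n-2)/2` edges. -/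
theorem star_metric_spanner_lower_bound
    (n : ℕ) (hn : 3 ≤ n)
    (X : Type) [MetricSpace X] [Fintype X] (hcard : Fintype.card X = n)
    (r : X)
    (hstar1 : ∀ x : X, x ≠ r → dist r x = 1)
    (hstar2 : ∀ x y : X, x ≠ y → x ≠ r → y ≠ r → dist x y = 2)
    (ν t : ℝ) (hν0 : 0 < ν) (hν1 : ν < 1) (ht1 : 1 ≤ t) (ht2 : t < 2)
    (m : ℝ) (hspanner : IsObliviousReliableSpanner X ν t m) :
    ((n : ℝ) - 1) * ((n : ℝ) - 2) / 2 ≤ m := by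
  classical
  obtain ⟨N, p, G, w, hp0, hp1, hsymm, hwd, hm, hB⟩ := hspanner
  obtain ⟨Bp, hBsub, hwalk, hE⟩ := hB {r}
  rw [Set.ncard_singleton] at hE
  -- find ω with positive probability and Bp ω = {r}
  have hex : ∃ ω, 0 < p ω ∧ ((Bp ω).ncard : ℝ) < 2 := by
    by_contra h
    push_neg at h
    have hle : (2:ℝ) * ∑ ω, p ω ≤ ∑ ω, p ω * ((Bp ω).ncard : ℝ) := by
      rw [Finset.mul_sum]
      apply Finset.sum_le_sum
      intro ω _
      rcases eq_or_lt_of_le (hp0 ω) with h0 | h0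
      · simp [← h0]
      · have := h ω h0
        nlinarith
    rw [hp1] at hle
    push_cast at hE
    linarith
  obtain ⟨ω, hpω, hcard2⟩ := hex
  have hBpeq : Bp ω = {r} := by
    have h1 : (Bp ω).ncard ≤ 1 := by
      by_contra h
      push_neg at h
      have : (2:ℕ) ≤ (Bp ω).ncard := h
      exact absurd hcard2 (by push_cast; exact_mod_cast not_lt.mpr (by exact_mod_cast this))
    exact (Set.eq_of_subset_of_ncard_le (hBsub ω)
      (by rwa [Set.ncard_singleton]) (Set.toFinite _)).symm
  -- every pair of distinct non-center points is adjacent in G ω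
  have hadj : ∀ x y : X, x ≠ y → x ≠ r → y ≠ r → (G ω).Adj x y := by
    intro x y hxy hxr hyr
    have hx : x ∉ Bp ω := by rw [hBpeq]; simpa using hxr
    have hy : y ∉ Bp ω := by rw [hBpeq]; simpa using hyr
    obtain ⟨l, ⟨hchain, hhead, hlast, hmem⟩, hwt⟩ := hwalk ω x y hx hy
    rw [hstar2 x y hxy hxr hyr] at hwt
    have hlb := walk_lb (w ω) (G ω).Adj ({r}ᶜ : Set X)
      (fun a b hab ha hb => by
        have hne : a ≠ b := (G ω).ne_of_adj hab
        have := hwd ω a b hab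
        rw [hstar2 a b hne (by simpa using ha) (by simpa using hb)] at this
        linarith) l hchain hmem
    match l, hchain, hhead, hlast, hmem, hwt, hlb with
    | [], _, hh, _, _, _, _ => exact absurd hh (by simp)
    | [a], _, hh, hl, _, _, _ =>
        simp at hh hl
        exact absurd (hh.symm.trans hl) hxy
    | [a, b], hc, hh, hl, _, _, _ =>
        simp at hh hl
        rw [List.Chain', List.isChain_cons_cons] at hc
        rw [← hh, ← hl]
        exact hc.1
    | a :: b :: c :: t, _, _, _, _, hwt, hlb =>
        exfalso
        have : ((a :: b :: c :: t).length - 1 : ℕ) = t.length + 2 := by simp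
        rw [this] at hlb
        push_cast at hlb
        have : (0:ℝ) ≤ (t.length : ℝ) := by positivity
        linarith
  -- the graph H of all non-center pairs
  let H : SimpleGraph X :=
    { Adj := fun x y => x ≠ y ∧ x ≠ r ∧ y ≠ r
      symm := ⟨fun x y h => ⟨h.1.symm, h.2.2, h.2.1⟩⟩
      loopless := ⟨fun x h => h.1 rfl⟩ }
  have hHle : H ≤ G ω := fun {x y} h => hadj x y h.1 h.2.1 h.2.2
  have hsub : H.edgeSet ⊆ (G ω).edgeSet := SimpleGraph.edgeSet_mono hHle
  -- count the edges of H via the handshake lemma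
  have hdeg : ∀ v : X, v ≠ r → H.degree v = n - 2 := by
    intro v hv
    have hnb : H.neighborFinset v = Finset.univ \ {v, r} := by
      ext y
      simp only [SimpleGraph.mem_neighborFinset, Finset.mem_sdiff, Finset.mem_univ,
        Finset.mem_insert, Finset.mem_singleton, true_and]
      constructor
      · rintro ⟨h1, _, h3⟩
        push_neg
        exact ⟨fun h => h1 h.symm, h3⟩
      · intro h
        push_neg at h
        exact ⟨fun h' => h.1 h'.symm, hv, h.2⟩
    rw [SimpleGraph.degree, hnb, Finset.card_sdiff_of_subset (Finset.subset_univ _),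
      Finset.card_univ, hcard, Finset.card_insert_of_notMem (by simpa using hv),
      Finset.card_singleton]
  have hdegr : H.degree r = 0 := by
    rw [SimpleGraph.degree, Finset.card_eq_zero]
    ext y
    simp only [SimpleGraph.mem_neighborFinset, Finset.notMem_empty, iff_false]
    rintro ⟨_, h2, _⟩
    exact h2 rfl
  have hsum : ∑ v, H.degree v = (n - 1) * (n - 2) := by
    rw [← Finset.sum_erase_add _ _ (Finset.mem_univ r), hdegr,
      Finset.sum_congr rfl (fun v hv => hdeg v (Finset.ne_of_mem_erase hv)),
      Finset.sum_const, Finset.card_erase_of_mem (Finset.mem_univ r),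
      Finset.card_univ, hcard, smul_eq_mul, add_zero]
  have hhand : 2 * H.edgeFinset.card = (n - 1) * (n - 2) := by
    rw [← SimpleGraph.sum_degrees_eq_twice_card_edges, hsum]
  -- conclude
  have hHncard : H.edgeSet.ncard = H.edgeFinset.card := by
    rw [Set.ncard_eq_toFinset_card']
    simp [SimpleGraph.edgeFinset]
  have hle1 : (H.edgeSet.ncard : ℝ) ≤ ((G ω).edgeSet.ncard : ℝ) := by
    exact_mod_cast Set.ncard_le_ncard hsub (Set.toFinite _)
  have hle2 := hm ω
  have hcast : ((n:ℝ) - 1) * ((n:ℝ) - 2) = 2 * (H.edgeFinset.card : ℝ) := by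
    have h1 : (1:ℕ) ≤ n := by omega
    have h2 : (2:ℕ) ≤ n := by omega
    have := congrArg (Nat.cast : ℕ → ℝ) hhand
    push_cast [Nat.cast_sub h1, Nat.cast_sub h2] at this
    linarith
  rw [hHncard] at hle1
  linarith
end

section
/- For every integer k ≥ 2 there exist a constant c > 0 and an integer n₀ such that for every n ≥ n₀ there is an n-vertex simple graph G with the property that every oblivious g-reliable connectivity preserver of G, where g(x) = x^k, has at least c·n^{1+1/k} edges. -/
open scoped BigOperators

/-- An oblivious `g`-reliable connectivity preserver of `G` with at most `m`
edges: a (finitely supported) probability distribution over subgraphs `H ω ≤ G`,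
each with at most `m` edges, such that for every attack set `B` there are sets
`Bp ω ⊇ B` with `E[|Bp|] ≤ g(|B|)`, and every `u,v ∉ Bp ω` that are connected
in `G ∖ B` are also connected in `H ω ∖ B`. -/
def IsObliviousConnPreserver {V : Type*} [Fintype V] (G : SimpleGraph V)
    (g : ℕ → ℕ) (m : ℝ) : Prop :=
  ∃ (N : ℕ) (p : Fin N → ℝ) (H : Fin N → SimpleGraph V),
    (∀ ω, 0 ≤ p ω) ∧ (∑ ω, p ω = 1) ∧
    (∀ ω, H ω ≤ G) ∧
    (∀ ω : Fin N, ((H ω).edgeSet.ncard : ℝ) ≤ m) ∧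
    ∀ B : Set V, ∃ Bp : Fin N → Set V,
      (∀ ω, B ⊆ Bp ω) ∧
      (∀ (ω : Fin N) (u v : V), u ∉ Bp ω → v ∉ Bp ω →
        (∃ l : List V, IsWalkIn G.Adj Bᶜ l u v) →
        ∃ l : List V, IsWalkIn (H ω).Adj Bᶜ l u v) ∧
      (∑ ω, p ω * ((Bp ω).ncard : ℝ)) ≤ (g B.ncard : ℝ)

lemma firstStep {X : Type*} {Adj : X → X → Prop} {S : Set X} {l : List X} {x y : X}
    (h : IsWalkIn Adj S l x y) (hxy : x ≠ y) : ∃ z, Adj x z ∧ z ∈ S := by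
  obtain ⟨hc, hh, hl, hmem⟩ := h
  match l, hh with
  | a :: t, hh =>
    have hax : a = x := by simpa using hh
    subst hax
    cases t with
    | nil =>
      exfalso; apply hxy
      simpa [List.getLast?] using hl
    | cons z t' =>
      exact ⟨z, (List.isChain_cons_cons.mp hc).1, hmem z (by simp)⟩

lemma exists_le_of_expectation {N : ℕ} (p f : Fin N → ℝ) (S : ℝ)
    (hp0 : ∀ ω, 0 ≤ p ω) (hp1 : ∑ ω, p ω = 1)
    (hS : ∑ ω, p ω * f ω ≤ S) : ∃ ω, 0 < p ω ∧ f ω ≤ S := by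
  by_contra h
  push_neg at h
  have hpos : ∃ ω, 0 < p ω := by
    by_contra hno; push_neg at hno
    have : ∑ ω, p ω ≤ 0 := Finset.sum_nonpos (fun i _ => hno i)
    rw [hp1] at this; linarith
  obtain ⟨ω₀, hω₀⟩ := hpos
  have hlt : ∑ ω, p ω * S < ∑ ω, p ω * f ω := by
    apply Finset.sum_lt_sum
    · intro i _
      rcases (hp0 i).lt_or_eq with hp | hp
      · exact mul_le_mul_of_nonneg_left (le_of_lt (h i hp)) (le_of_lt hp)
      · simp [← hp]
    · exact ⟨ω₀, Finset.mem_univ _, mul_lt_mul_of_pos_left (h ω₀ hω₀) hω₀⟩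
  rw [← Finset.sum_mul, hp1, one_mul] at hlt
  linarith

/-- complete bipartite graph on `Fin n`, split at `d`. -/
def bipG (n d : ℕ) : SimpleGraph (Fin n) where
  Adj := fun u v => (u.val < d ∧ d ≤ v.val) ∨ (v.val < d ∧ d ≤ u.val)
  symm := by constructor; intro u v h; tauto
  loopless := by constructor; intro u h; rcases h with ⟨h1, h2⟩ | ⟨h1, h2⟩ <;> omega

set_option maxHeartbeats 1000000 in
lemma main_bound (k n d : ℕ) (hk : 2 ≤ k) (hd12 : 12 ≤ d) (hd2n : d + 2 ≤ n)
    (m : ℝ) (hpres : IsObliviousConnPreserver (bipG n d) (fun x => x ^ k) m) :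
    ((n : ℝ) - d - 16 * (d : ℝ) ^ k) * d / 4 ≤ m := by
  classical
  obtain ⟨N, p, H, hp0, hp1, hHG, hHm, hB⟩ := hpres
  set L : Finset (Fin n) := Finset.univ.filter (fun v => v.val < d) with hLdef
  set R : Finset (Fin n) := Finset.univ.filter (fun v => ¬ v.val < d) with hRdef
  have hdn : d < n := by omega
  have hLcard : L.card = d := by
    apply Finset.card_eq_of_bijective (fun i hi => (⟨i, by omega⟩ : Fin n))
    · intro a ha
      have : a.val < d := (Finset.mem_filter.mp ha).2
      exact ⟨a.val, this, by ext; rfl⟩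
    · intro i hi; simp [hLdef, hi]
    · intro i j hi hj hij
      simpa [Fin.ext_iff] using hij
  have hRcard : R.card = n - d := by
    have h := Finset.card_filter_add_card_filter_not
      (s := (Finset.univ : Finset (Fin n))) (p := fun v : Fin n => v.val < d)
    rw [← hLdef, ← hRdef] at h
    simp at h
    omega
  -- choose the excused sets for each attack
  have hattack : ∀ q : Fin n × Fin n, ∃ Bp : Fin N → Set (Fin n),
      (∀ ω, (↑((L.erase q.1).erase q.2) : Set (Fin n)) ⊆ Bp ω) ∧
      (∀ (ω : Fin N) (u v : Fin n), u ∉ Bp ω → v ∉ Bp ω →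
        (∃ l : List (Fin n), IsWalkIn (bipG n d).Adj (↑((L.erase q.1).erase q.2) : Set (Fin n))ᶜ l u v) →
        ∃ l : List (Fin n), IsWalkIn (H ω).Adj (↑((L.erase q.1).erase q.2) : Set (Fin n))ᶜ l u v) ∧
      (∑ ω, p ω * ((Bp ω).ncard : ℝ)) ≤ (((↑((L.erase q.1).erase q.2) : Set (Fin n)).ncard ^ k : ℕ) : ℝ) :=
    fun q => hB _
  choose Bp hBp1 hBp2 hBp3 using hattack
  set P : Finset (Fin n × Fin n) := L.offDiag with hPdef
  set badF : Fin N → Fin n × Fin n → Finset (Fin n) :=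
    fun ω q => R.filter (fun r => ¬ (H ω).Adj r q.1 ∧ ¬ (H ω).Adj r q.2) with hbadF
  -- Step 1: forced-edge dichotomy
  have step1 : ∀ q ∈ P, ∀ ω, (badF ω q).card ≤ 2 * (Bp q ω).ncard := by
    intro q hq ω
    obtain ⟨hq1, hq2, hqne⟩ := Finset.mem_offDiag.mp hq
    have hq1d : q.1.val < d := (Finset.mem_filter.mp hq1).2
    have hq2d : q.2.val < d := (Finset.mem_filter.mp hq2).2
    by_cases hex : ∀ r ∈ badF ω q, r ∈ Bp q ω
    · have hsub : (↑(badF ω q) : Set (Fin n)) ⊆ Bp q ω := fun r hr => hex r (by simpa using hr)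
      have h1 := Set.ncard_le_ncard hsub (Set.toFinite _)
      rw [Set.ncard_coe_finset] at h1
      omega
    · push_neg at hex
      obtain ⟨r, hrbad, hrnot⟩ := hex
      have hrR : r ∈ R := (Finset.mem_filter.mp hrbad).1
      have hrd : d ≤ r.val := by
        have := (Finset.mem_filter.mp hrR).2; omega
      have hforced : ∀ r' : Fin n, r' ∈ R → r' ≠ r → r' ∈ Bp q ω := by
        intro r' hr'R hne
        by_contra hnot'
        have hr'd : d ≤ r'.val := by
          have := (Finset.mem_filter.mp hr'R).2; omega
        have hGwalk : ∃ l, IsWalkIn (bipG n d).Adj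
            (↑((L.erase q.1).erase q.2) : Set (Fin n))ᶜ l r r' := by
          refine ⟨[r, q.1, r'], ?_, rfl, rfl, ?_⟩
          · refine List.isChain_cons_cons.mpr ⟨Or.inr ⟨hq1d, hrd⟩, ?_⟩
            refine List.isChain_cons_cons.mpr ⟨Or.inl ⟨hq1d, hr'd⟩, ?_⟩
            exact List.isChain_singleton _
          · intro z hz
            simp only [List.mem_cons, List.not_mem_nil, or_false] at hz
            have hmemB : ∀ x : Fin n, x ∈ (L.erase q.1).erase q.2 → x.val < d := by
              intro x hx
              have := Finset.mem_of_mem_erase (Finset.mem_of_mem_erase hx)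
              exact (Finset.mem_filter.mp this).2
            simp only [Set.mem_compl_iff, Finset.mem_coe]
            rcases hz with h | h | h
            · subst h; intro hc
              exact absurd (hmemB _ hc) (by omega)
            · subst h; intro hc
              exact absurd (Finset.mem_of_mem_erase hc) (Finset.notMem_erase _ _)
            · subst h; intro hc
              exact absurd (hmemB _ hc) (by omega)
        obtain ⟨l, hlw⟩ := hBp2 q ω r r' hrnot hnot' hGwalk
        obtain ⟨z, hadj, hzS⟩ := firstStep hlw (by
          intro h; exact hne (by rw [h]))
        have hGadj : (bipG n d).Adj r z := hHG ω hadj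
        have hzd : z.val < d := by
          rcases hGadj with ⟨h1, h2⟩ | ⟨h1, h2⟩
          · omega
          · exact h1
        have hzL : z ∈ L := Finset.mem_filter.mpr ⟨Finset.mem_univ _, hzd⟩
        have hzq : z = q.1 ∨ z = q.2 := by
          by_contra hno
          push_neg at hno
          exact (Set.mem_compl_iff _ _).mp hzS
            (Finset.mem_coe.mpr (Finset.mem_erase.mpr ⟨hno.2, Finset.mem_erase.mpr ⟨hno.1, hzL⟩⟩))
        obtain ⟨-, hb1, hb2⟩ := Finset.mem_filter.mp hrbad
        rcases hzq with h | h
        · exact hb1 (h ▸ hadj)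
        · exact hb2 (h ▸ hadj)
      have hsub : (↑(R.erase r) : Set (Fin n)) ⊆ Bp q ω := by
        intro x hx
        obtain ⟨hxne, hxR⟩ := Finset.mem_erase.mp (Finset.mem_coe.mp hx)
        exact hforced x hxR hxne
      have h1 := Set.ncard_le_ncard hsub (Set.toFinite _)
      rw [Set.ncard_coe_finset, Finset.card_erase_of_mem hrR, hRcard] at h1
      have h3 : (badF ω q).card ≤ n - d := by
        rw [← hRcard]; exact Finset.card_filter_le _ _
      omega
  -- budget per attack
  have hbudget : ∀ q ∈ P, (∑ ω, p ω * ((Bp q ω).ncard : ℝ)) ≤ (d : ℝ) ^ k := by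
    intro q hq
    obtain ⟨hq1, hq2, hqne⟩ := Finset.mem_offDiag.mp hq
    refine le_trans (hBp3 q) ?_
    rw [Set.ncard_coe_finset]
    have hc2 : ((L.erase q.1).erase q.2).card = d - 2 := by
      rw [Finset.card_erase_of_mem (Finset.mem_erase.mpr ⟨hqne.symm, hq2⟩),
        Finset.card_erase_of_mem hq1, hLcard]
      omega
    rw [hc2]
    push_cast
    have : ((d - 2 : ℕ) : ℝ) ≤ (d : ℝ) := by
      have : (d - 2 : ℕ) ≤ d := Nat.sub_le _ _
      exact_mod_cast this
    exact pow_le_pow_left₀ (by positivity) this k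
  -- per-pair expected bad count
  have step2 : ∀ q ∈ P, (∑ ω, p ω * ((badF ω q).card : ℝ)) ≤ 2 * (d : ℝ) ^ k := by
    intro q hq
    have h1 : ∀ ω, p ω * ((badF ω q).card : ℝ) ≤ p ω * (2 * ((Bp q ω).ncard : ℝ)) := by
      intro ω
      apply mul_le_mul_of_nonneg_left _ (hp0 ω)
      exact_mod_cast step1 q hq ω
    calc (∑ ω, p ω * ((badF ω q).card : ℝ))
        ≤ ∑ ω, p ω * (2 * ((Bp q ω).ncard : ℝ)) := Finset.sum_le_sum (fun ω _ => h1 ω)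
      _ = 2 * ∑ ω, p ω * ((Bp q ω).ncard : ℝ) := by
          rw [Finset.mul_sum]; congr 1; ext ω; ring
      _ ≤ 2 * (d : ℝ) ^ k := by linarith [hbudget q hq]
  -- total expected bad count
  set Fc : Fin N → ℝ := fun ω => ∑ q ∈ P, ((badF ω q).card : ℝ) with hFc
  have hFsum : ∑ ω, p ω * Fc ω ≤ (d : ℝ) ^ 2 * (2 * (d : ℝ) ^ k) := by
    have hswap : ∑ ω, p ω * Fc ω = ∑ q ∈ P, ∑ ω, p ω * ((badF ω q).card : ℝ) := by
      simp only [hFc, Finset.mul_sum]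
      exact Finset.sum_comm
    rw [hswap]
    calc ∑ q ∈ P, ∑ ω, p ω * ((badF ω q).card : ℝ)
        ≤ ∑ q ∈ P, 2 * (d : ℝ) ^ k := Finset.sum_le_sum step2
      _ = P.card * (2 * (d : ℝ) ^ k) := by rw [Finset.sum_const, nsmul_eq_mul]
      _ ≤ (d : ℝ) ^ 2 * (2 * (d : ℝ) ^ k) := by
          apply mul_le_mul_of_nonneg_right _ (by positivity)
          have hPc : P.card ≤ d * d := by
            rw [hPdef, Finset.offDiag_card, hLcard]; omega
          calc (P.card : ℝ) ≤ ((d * d : ℕ) : ℝ) := by exact_mod_cast hPc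
            _ = (d : ℝ) ^ 2 := by push_cast; ring
  obtain ⟨ω, hpω, hFω⟩ := exists_le_of_expectation p Fc _ hp0 hp1 hFsum
  -- low-degree right vertices
  set T : Finset (Fin n) := R.filter (fun r => 2 * (H ω).degree r < d) with hTdef
  have hNsub : ∀ r : Fin n, d ≤ r.val → (H ω).neighborFinset r ⊆ L := by
    intro r hrd x hx
    have hadj := (SimpleGraph.mem_neighborFinset _ _ _).mp hx
    have hGadj : (bipG n d).Adj r x := hHG ω hadj
    have hxd : x.val < d := by
      rcases hGadj with ⟨h1, h2⟩ | ⟨h1, h2⟩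
      · omega
      · exact h1
    exact Finset.mem_filter.mpr ⟨Finset.mem_univ _, hxd⟩
  -- natural-number total bad count and its swap
  set Fn : ℕ := ∑ q ∈ P, (badF ω q).card with hFn
  have hFcFn : Fc ω = (Fn : ℕ) := by
    simp only [hFc, hFn]; push_cast; rfl
  have hswapn : Fn = ∑ r ∈ R, (P.filter
      (fun q => ¬ (H ω).Adj r q.1 ∧ ¬ (H ω).Adj r q.2)).card := by
    simp only [hFn, hbadF, Finset.card_filter]
    exact Finset.sum_comm
  have hper : ∀ r ∈ T, d * d ≤ 8 * (P.filter
      (fun q => ¬ (H ω).Adj r q.1 ∧ ¬ (H ω).Adj r q.2)).card := by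
    intro r hrT
    obtain ⟨hrR, hrdeg⟩ := Finset.mem_filter.mp hrT
    have hrd : d ≤ r.val := by
      have := (Finset.mem_filter.mp hrR).2; omega
    have hfilt : P.filter (fun q => ¬ (H ω).Adj r q.1 ∧ ¬ (H ω).Adj r q.2)
        = (L \ (H ω).neighborFinset r).offDiag := by
      ext q
      simp only [Finset.mem_filter, hPdef, Finset.mem_offDiag, Finset.mem_sdiff,
        SimpleGraph.mem_neighborFinset]
      tauto
    rw [hfilt, Finset.offDiag_card]
    have hcardN : ((H ω).neighborFinset r).card = (H ω).degree r :=
      SimpleGraph.card_neighborFinset_eq_degree _ _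
    have hδL : (H ω).degree r ≤ d := by
      rw [← hcardN, ← hLcard]
      exact Finset.card_le_card (hNsub r hrd)
    have hsd : (L \ (H ω).neighborFinset r).card = d - (H ω).degree r := by
      rw [Finset.card_sdiff_of_subset (hNsub r hrd), hcardN, hLcard]
    rw [hsd]
    set s : ℕ := d - (H ω).degree r with hs
    have h2s : d + 1 ≤ 2 * s := by omega
    obtain ⟨s', hs'⟩ : ∃ s', s = s' + 1 := ⟨s - 1, by omega⟩
    rw [hs']
    have e1 : (s' + 1) * (s' + 1) - (s' + 1) = (s' + 1) * s' := by
      have : (s' + 1) * (s' + 1) = (s' + 1) * s' + (s' + 1) := by ring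
      omega
    rw [e1]
    have hdle : d ≤ 2 * s' + 1 := by omega
    have hs'6 : 6 ≤ s' := by omega
    calc d * d ≤ (2 * s' + 1) * (2 * s' + 1) := Nat.mul_le_mul hdle hdle
      _ ≤ 8 * ((s' + 1) * s') := by nlinarith
  have hTn : T.card * (d * d) ≤ 8 * Fn := by
    have h1 := Finset.card_nsmul_le_sum T
      (fun r => 8 * (P.filter (fun q => ¬ (H ω).Adj r q.1 ∧ ¬ (H ω).Adj r q.2)).card)
      (d * d) hper
    rw [smul_eq_mul] at h1
    refine h1.trans ?_
    rw [← Finset.mul_sum]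
    apply Nat.mul_le_mul_left
    rw [hswapn]
    exact Finset.sum_le_sum_of_subset (Finset.filter_subset _ _)
  -- bound on |T|
  have hTcard : (T.card : ℝ) ≤ 16 * (d : ℝ) ^ k := by
    have hc0 : (0 : ℝ) < (d : ℝ) * (d : ℝ) := by
      have : (0:ℝ) < (d:ℝ) := by exact_mod_cast (by omega : 0 < d)
      positivity
    have h2 : (T.card : ℝ) * ((d : ℝ) * (d : ℝ)) ≤ (16 * (d : ℝ) ^ k) * ((d : ℝ) * (d : ℝ)) := by
      have h3 : ((T.card * (d * d) : ℕ) : ℝ) ≤ ((8 * Fn : ℕ) : ℝ) := by exact_mod_cast hTn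
      push_cast at h3
      rw [hFcFn] at hFω
      push_cast at hFω
      nlinarith [hFω]
    exact le_of_mul_le_mul_right h2 hc0
  -- edge counting
  set e : ℕ := (H ω).edgeFinset.card with he
  have hem : (e : ℝ) ≤ m := by
    have := hHm ω
    rwa [← SimpleGraph.coe_edgeFinset, Set.ncard_coe_finset] at this
  have hdegsum : ∑ v, (H ω).degree v = 2 * e := SimpleGraph.sum_degrees_eq_twice_card_edges _
  have hRT : (R \ T).card * d ≤ 4 * e := by
    have hdeg : ∀ r ∈ R \ T, d ≤ 2 * (H ω).degree r := by
      intro r hr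
      obtain ⟨hrR, hrnT⟩ := Finset.mem_sdiff.mp hr
      by_contra hcon
      exact hrnT (Finset.mem_filter.mpr ⟨hrR, by omega⟩)
    have h1 := Finset.card_nsmul_le_sum (R \ T) (fun r => 2 * (H ω).degree r) d hdeg
    rw [smul_eq_mul] at h1
    refine h1.trans ?_
    have h2 : ∑ r ∈ R \ T, 2 * (H ω).degree r = 2 * ∑ r ∈ R \ T, (H ω).degree r := by
      rw [Finset.mul_sum]
    rw [h2]
    have h3 : ∑ r ∈ R \ T, (H ω).degree r ≤ ∑ v, (H ω).degree v :=
      Finset.sum_le_sum_of_subset (Finset.subset_univ _)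
    omega
  have hTsubR : T ⊆ R := Finset.filter_subset _ _
  have hRTcard : (R \ T).card = (n - d) - T.card := by
    rw [Finset.card_sdiff_of_subset hTsubR, hRcard]
  have hTleR : T.card ≤ n - d := by
    rw [← hRcard]; exact Finset.card_le_card hTsubR
  -- final real arithmetic
  have hcast1 : ((R \ T).card : ℝ) = ((n : ℝ) - d) - T.card := by
    rw [hRTcard]
    have h1 : ((n - d - T.card : ℕ) : ℝ) = (n : ℝ) - d - T.card := by
      have hdn' : d ≤ n := by omega
      push_cast [Nat.cast_sub hTleR, Nat.cast_sub hdn']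
      ring
    exact h1
  have hmain : ((n : ℝ) - d - 16 * (d : ℝ) ^ k) * d ≤ 4 * e := by
    have h1 : ((n : ℝ) - d - 16 * (d : ℝ) ^ k) ≤ ((R \ T).card : ℝ) := by
      rw [hcast1]; linarith
    have h2 : ((R \ T).card : ℝ) * d ≤ 4 * e := by exact_mod_cast hRT
    have hd0 : (0:ℝ) ≤ (d:ℝ) := by positivity
    nlinarith
  linarith

/-- For every integer `k ≥ 2` there are `c > 0` and `n₀` such that for every
`n ≥ n₀` there is an `n`-vertex graph `G` for which every oblivious
`(x ↦ x^k)`-reliable connectivity preserver has at least `c·n^{1+1/k}` edges. -/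
theorem connectivity_preserver_lower_bound (k : ℕ) (hk : 2 ≤ k) :
    ∃ c : ℝ, 0 < c ∧ ∃ n₀ : ℕ, ∀ n : ℕ, n₀ ≤ n →
      ∃ G : SimpleGraph (Fin n), ∀ m : ℝ,
        IsObliviousConnPreserver G (fun x => x ^ k) m →
        c * (n : ℝ) ^ (1 + (k : ℝ)⁻¹) ≤ m := by
  refine ⟨1 / 128, by norm_num, 100 ^ k, fun n hn => ?_⟩
  have hk0 : k ≠ 0 := by omega
  have hk0' : (0:ℝ) < (k:ℝ) := by exact_mod_cast Nat.pos_of_ne_zero hk0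
  have hn10000 : 10000 ≤ n := by
    calc 10000 = 100 ^ 2 := by norm_num
      _ ≤ 100 ^ k := Nat.pow_le_pow_right (by norm_num) hk
      _ ≤ n := hn
  have hn0 : (0:ℝ) < (n:ℝ) := by exact_mod_cast (by omega : 0 < n)
  have hn1 : (1:ℝ) ≤ (n:ℝ) := by exact_mod_cast (by omega : 1 ≤ n)
  set x : ℝ := (n : ℝ) ^ ((k:ℝ))⁻¹ with hx
  have hx0 : 0 ≤ x := Real.rpow_nonneg hn0.le _
  have hx100 : (100:ℝ) ≤ x := by
    have h1 : ((100:ℝ) ^ k) ^ ((k:ℝ))⁻¹ ≤ x := by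
      apply Real.rpow_le_rpow (by positivity) _ (by positivity)
      calc ((100:ℝ) ^ k) = ((100 ^ k : ℕ) : ℝ) := by push_cast; ring
        _ ≤ (n : ℝ) := by exact_mod_cast hn
    rwa [Real.pow_rpow_inv_natCast (by norm_num) hk0] at h1
  set d : ℕ := ⌊x / 8⌋₊ with hd
  have hd8 : (d:ℝ) ≤ x / 8 := Nat.floor_le (by positivity)
  have hdlt : x / 8 < (d:ℝ) + 1 := Nat.lt_floor_add_one _
  have hd16 : x / 16 ≤ (d:ℝ) := by linarith
  have hd12 : 12 ≤ d := by
    have h1 : (12:ℝ) < (d:ℝ) + 1 := by linarith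
    have h2 : (12:ℕ) < d + 1 := by exact_mod_cast h1
    omega
  have hxn : x ≤ (n:ℝ) := by
    calc x ≤ (n:ℝ) ^ (1:ℝ) := Real.rpow_le_rpow_of_exponent_le hn1 (by
        rw [inv_le_one_iff₀]; right; exact_mod_cast (by omega : 1 ≤ k))
      _ = (n:ℝ) := Real.rpow_one _
  have hdn8 : (d:ℝ) ≤ (n:ℝ) / 8 := by linarith
  have hd2n : d + 2 ≤ n := by
    have h1 : (d:ℝ) + 2 ≤ (n:ℝ) := by
      have : (10000:ℝ) ≤ (n:ℝ) := by exact_mod_cast hn10000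
      linarith
    exact_mod_cast h1
  have hdk : (d:ℝ) ^ k ≤ (n:ℝ) / 64 := by
    have h1 : (d:ℝ) ^ k ≤ (x / 8) ^ k := pow_le_pow_left₀ (by positivity) hd8 k
    have h2 : (x / 8) ^ k = x ^ k / 8 ^ k := div_pow _ _ _
    have h3 : x ^ k = (n:ℝ) := Real.rpow_inv_natCast_pow hn0.le hk0
    have h4 : (64:ℝ) ≤ 8 ^ k := by
      calc (64:ℝ) = 8 ^ 2 := by norm_num
        _ ≤ 8 ^ k := pow_le_pow_right₀ (by norm_num) hk
    have h5 : (n:ℝ) / 8 ^ k ≤ (n:ℝ) / 64 :=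
      div_le_div_of_nonneg_left hn0.le (by norm_num) h4
    calc (d:ℝ) ^ k ≤ x ^ k / 8 ^ k := by rw [← h2]; exact h1
      _ = (n:ℝ) / 8 ^ k := by rw [h3]
      _ ≤ (n:ℝ) / 64 := h5
  refine ⟨bipG n d, fun m hm => ?_⟩
  have key := main_bound k n d hk hd12 hd2n m hm
  have hE : (n:ℝ) / 2 ≤ (n:ℝ) - d - 16 * (d:ℝ) ^ k := by linarith
  have hEd : ((n:ℝ) / 2) * (x / 16) ≤ ((n:ℝ) - d - 16 * (d:ℝ) ^ k) * d := by
    apply mul_le_mul hE hd16 (by positivity) (by linarith)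
  have hrw : (n : ℝ) ^ (1 + (k:ℝ)⁻¹) = (n:ℝ) * x := by
    rw [Real.rpow_add hn0, Real.rpow_one]
  rw [hrw]
  linarith
end
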